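/- arXiv:2502.09161 — 5 statements merged into one kernel-verified Lean document; each statement's English description precedes it below -/
import Mathlib

section
/- Define N_1 = u_1 and, for n ≥ 2, N_n = Σ_{B∈ℬ_n} u_1^{sleaf(B)} u_2^{etleaf(B)} u_3^{entleaf(B)} v_1^{yerleaf(B)} v_2^{syleaf(B)} in ℤ[u_1,u_2,u_3,v_1,v_2]. Let N(t) = Σ_{n≥1} N_n t^n, a formal power series in t with coefficients in ℤ[u_1,u_2,u_3,v_1,v_2], and set a = u_1 − u_3 + v_1 − v_2, b = u_1 + u_3 − v_1 + v_2 and c = v_1 + 1. Then (a t² − c t + 1 − 2t·N(t))² = a² t⁴ + 2(bc − 2u_1 − 2u_2 v_2) t³ + (c² − 2b) t² − 2c t + 1 as formal power series in t. -/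
/-- (Unlabeled) binary trees: each node has a (possibly empty) left subtree and a
(possibly empty) right subtree. -/
inductive BTree : Type where
  | nil : BTree
  | node : BTree → BTree → BTree

namespace BTree

/-- The list of all subtrees rooted at actual nodes. -/
def subtrees : BTree → List BTree
  | nil => []
  | node l r => node l r :: (l.subtrees ++ r.subtrees)

/-- The number of nodes. -/
def numNodes (B : BTree) : ℕ := B.subtrees.length

/-- The left subtree. -/
def left : BTree → BTree
  | nil => nil
  | node l _ => l

/-- The right subtree. -/
def right : BTree → BTree
  | nil => nil
  | node _ r => r

/-- Whether the tree is empty. -/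
def isNil : BTree → Bool
  | nil => true
  | node _ _ => false

/-- Whether the tree is a single node (a leaf). -/
def isLeafB : BTree → Bool
  | node nil nil => true
  | _ => false

/-- The number of right leaves (leaves that are right children). -/
def sleafB (B : BTree) : ℕ := B.subtrees.countP (fun t => isLeafB t.right)

/-- The number of left leaves whose parent has no right child. -/
def etleafB (B : BTree) : ℕ :=
  B.subtrees.countP (fun t => isLeafB t.left && t.right.isNil)

/-- The number of left leaves whose parent has a right child. -/
def entleafB (B : BTree) : ℕ :=
  B.subtrees.countP (fun t => isLeafB t.left && !t.right.isNil)

/-- The number of nodes having only a left child, whose left child has a left child. -/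
def yerleafB (B : BTree) : ℕ :=
  B.subtrees.countP (fun t => !t.left.isNil && t.right.isNil && !t.left.left.isNil)

/-- The number of nodes having only a left child, whose left child has no left child. -/
def syleafB (B : BTree) : ℕ :=
  B.subtrees.countP (fun t => !t.left.isNil && t.right.isNil && t.left.left.isNil)

end BTree

/-- The new refined Narayana polynomial `N_n`: by convention `N_1 = u₁`, and for other
`n` it is the generating polynomial of `(sleaf, etleaf, entleaf, yerleaf, syleaf)` over
binary trees with `n` nodes (`Bn n` is the finite set of such trees).
Here `u₁ = X 0`, `u₂ = X 1`, `u₃ = X 2`, `v₁ = X 3`, `v₂ = X 4`. -/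
noncomputable def Npoly (Bn : ℕ → Finset BTree) (n : ℕ) : MvPolynomial (Fin 5) ℤ :=
  if n = 1 then MvPolynomial.X 0
  else ∑ B ∈ Bn n,
    MvPolynomial.X 0 ^ BTree.sleafB B * MvPolynomial.X 1 ^ BTree.etleafB B *
      MvPolynomial.X 2 ^ BTree.entleafB B * MvPolynomial.X 3 ^ BTree.yerleafB B *
      MvPolynomial.X 4 ^ BTree.syleafB B

/-- The ordinary generating function `N(t) = Σ_{n ≥ 1} N_n tⁿ`. -/
noncomputable def Nser (Bn : ℕ → Finset BTree) : PowerSeries (MvPolynomial (Fin 5) ℤ) :=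
  PowerSeries.mk fun n => if n = 0 then 0 else Npoly Bn n

namespace BTreeAux
open BTree MvPolynomial

abbrev R5 := MvPolynomial (Fin 5) ℤ

noncomputable def phiF : BTree → R5
  | .nil => 1
  | .node .nil .nil => X 1 * X 4
  | .node .nil (.node _ _) => X 4
  | .node (.node _ _) _ => X 3

noncomputable def psiF : BTree → R5
  | .node .nil .nil => X 2
  | _ => 1

noncomputable def rhoF : BTree → R5
  | .nil => 0
  | .node .nil .nil => X 0
  | _ => 1

noncomputable def eNF : BTree → R5
  | .nil => 1
  | _ => 0

noncomputable def wF : BTree → R5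
  | .nil => 1
  | .node l r => (phiF l * eNF r + psiF l * rhoF r) * wF l * wF r

lemma countP_node (p : BTree → Bool) (l r : BTree) :
    ((node l r).subtrees).countP p
      = (if p (node l r) then 1 else 0) + l.subtrees.countP p + r.subtrees.countP p := by
  simp [subtrees, List.countP_cons, List.countP_append]
  split <;> omega

lemma wF_eq (B : BTree) :
    wF B = X 0 ^ sleafB B * X 1 ^ etleafB B * X 2 ^ entleafB B
      * X 3 ^ yerleafB B * X 4 ^ syleafB B := by
  induction B with
  | nil => simp [wF, sleafB, etleafB, entleafB, yerleafB, syleafB, subtrees]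
  | node l r ihl ihr =>
    have key : phiF l * eNF r + psiF l * rhoF r =
        X 0 ^ (if isLeafB (node l r).right then 1 else 0)
        * X 1 ^ (if isLeafB (node l r).left && (node l r).right.isNil then 1 else 0)
        * X 2 ^ (if isLeafB (node l r).left && !(node l r).right.isNil then 1 else 0)
        * X 3 ^ (if !(node l r).left.isNil && (node l r).right.isNil
            && !(node l r).left.left.isNil then 1 else 0)
        * X 4 ^ (if !(node l r).left.isNil && (node l r).right.isNil
            && (node l r).left.left.isNil then 1 else 0) := by
      rcases l with _ | ⟨_ | ⟨a, b⟩, _ | ⟨c, d⟩⟩ <;>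
        rcases r with _ | ⟨_ | ⟨e, f⟩, _ | ⟨g, h⟩⟩ <;>
        simp [phiF, psiF, rhoF, eNF, isLeafB, isNil, left, right] <;> ring
    have s1 : sleafB (node l r) = (if isLeafB (node l r).right then 1 else 0) + sleafB l + sleafB r := by
      simp [sleafB, countP_node]
    have s2 : etleafB (node l r) = (if isLeafB (node l r).left && (node l r).right.isNil then 1 else 0) + etleafB l + etleafB r := by
      simp [etleafB, countP_node]
    have s3 : entleafB (node l r) = (if isLeafB (node l r).left && !(node l r).right.isNil then 1 else 0) + entleafB l + entleafB r := by
      simp [entleafB, countP_node]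
    have s4 : yerleafB (node l r) = (if !(node l r).left.isNil && (node l r).right.isNil && !(node l r).left.left.isNil then 1 else 0) + yerleafB l + yerleafB r := by
      simp [yerleafB, countP_node]
    have s5 : syleafB (node l r) = (if !(node l r).left.isNil && (node l r).right.isNil && (node l r).left.left.isNil then 1 else 0) + syleafB l + syleafB r := by
      simp [syleafB, countP_node]
    rw [wF, key, ihl, ihr, s1, s2, s3, s4, s5]
    simp only [pow_add]
    ring

end BTreeAux

namespace BTreeAux
open BTree MvPolynomial Finset

noncomputable abbrev PS := PowerSeries R5
open PowerSeries

lemma numNodes_nil : numNodes BTree.nil = 0 := rfl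

lemma numNodes_node (l r : BTree) :
    numNodes (node l r) = numNodes l + numNodes r + 1 := by
  simp [numNodes, subtrees]

lemma numNodes_eq_zero {B : BTree} : numNodes B = 0 ↔ B = BTree.nil := by
  cases B <;> simp [numNodes_nil, numNodes_node]

lemma numNodes_eq_one {B : BTree} : numNodes B = 1 ↔ B = BTree.node .nil .nil := by
  cases B with
  | nil => simp [numNodes_nil]
  | node l r =>
    rw [numNodes_node]
    constructor
    · intro h
      have hl : numNodes l = 0 := by omega
      have hr : numNodes r = 0 := by omega
      rw [numNodes_eq_zero.mp hl, numNodes_eq_zero.mp hr]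
    · intro h
      cases h
      simp [numNodes_nil]

variable (Bn : ℕ → Finset BTree)

noncomputable def serF (f : BTree → R5) : PS := PowerSeries.mk fun n => ∑ B ∈ Bn n, f B

variable (hBn : ∀ n B, B ∈ Bn n ↔ BTree.numNodes B = n)

include hBn

lemma Bn_zero : Bn 0 = {BTree.nil} := by
  ext B; simp [hBn, numNodes_eq_zero]

lemma Bn_one : Bn 1 = {BTree.node .nil .nil} := by
  ext B; simp [hBn, numNodes_eq_one]

lemma sum_node (F G : BTree → R5) (n : ℕ) :
    ∑ B ∈ Bn (n + 1), F B.left * G B.right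
      = ∑ p ∈ Finset.HasAntidiagonal.antidiagonal n, (∑ l ∈ Bn p.1, F l) * (∑ r ∈ Bn p.2, G r) := by
  have : ∀ p ∈ Finset.HasAntidiagonal.antidiagonal n,
      (∑ l ∈ Bn p.1, F l) * (∑ r ∈ Bn p.2, G r)
        = ∑ q ∈ Bn p.1 ×ˢ Bn p.2, F q.1 * G q.2 := by
    intro p _
    rw [Finset.sum_mul_sum, Finset.sum_product]
  rw [Finset.sum_congr rfl this,
    ← Finset.sum_sigma (Finset.HasAntidiagonal.antidiagonal n) (fun p => Bn p.1 ×ˢ Bn p.2)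
      (fun z => F z.2.1 * G z.2.2)]
  refine Finset.sum_nbij' (fun B => ⟨(B.left.numNodes, B.right.numNodes), (B.left, B.right)⟩)
    (fun q => node q.2.1 q.2.2) ?_ ?_ ?_ ?_ ?_
  · intro B hB
    rw [hBn] at hB
    cases B with
    | nil => simp [numNodes_nil] at hB
    | node l r =>
      rw [numNodes_node] at hB
      simp only [Finset.mem_sigma, Finset.HasAntidiagonal.mem_antidiagonal, Finset.mem_product, left, right]
      exact ⟨by omega, (hBn _ _).mpr rfl, (hBn _ _).mpr rfl⟩
  · intro q hq
    simp only [Finset.mem_sigma, Finset.HasAntidiagonal.mem_antidiagonal, Finset.mem_product] at hq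
    rw [hBn, numNodes_node]
    rw [(hBn _ _).mp hq.2.1, (hBn _ _).mp hq.2.2]
    omega
  · intro B hB
    rw [hBn] at hB
    cases B with
    | nil => simp [numNodes_nil] at hB
    | node l r => simp [left, right]
  · intro q hq
    simp only [Finset.mem_sigma, Finset.mem_antidiagonal, Finset.mem_product] at hq
    obtain ⟨p, l, r⟩ := q
    simp only [left, right, Sigma.mk.inj_iff]
    constructor
    · rw [(hBn _ _).mp hq.2.1, (hBn _ _).mp hq.2.2]
    · rfl
  · intro B _; rfl

lemma serF_add (f g : BTree → R5) :
    serF Bn (fun B => f B + g B) = serF Bn f + serF Bn g := by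
  ext n
  simp [serF, Finset.sum_add_distrib]

lemma serF_node (F G : BTree → R5) :
    serF Bn (fun B => F B.left * G B.right)
      = PowerSeries.C (R := R5) (F BTree.nil * G BTree.nil) + PowerSeries.X * serF Bn F * serF Bn G := by
  refine PowerSeries.ext fun n => ?_
  cases n with
  | zero =>
    simp [serF, Bn_zero Bn hBn, left, right, PowerSeries.coeff_zero_eq_constantCoeff,
      mul_assoc, map_add, map_mul]
  | succ n =>
    rw [mul_assoc, map_add, PowerSeries.coeff_C, PowerSeries.coeff_succ_X_mul,
      PowerSeries.coeff_mul]
    simp only [serF, PowerSeries.coeff_mk, Nat.succ_ne_zero, if_false, zero_add]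
    exact sum_node Bn hBn F G n

end BTreeAux

namespace BTreeAux
open BTree MvPolynomial Finset

variable (Bn : ℕ → Finset BTree) (hBn : ∀ n B, B ∈ Bn n ↔ BTree.numNodes B = n)

lemma wF_leaf : wF (BTree.node .nil .nil) = 1 := by
  simp [wF, phiF, psiF, rhoF, eNF]

include hBn

lemma big_of_numNodes {B : BTree} {n : ℕ} (hB : B ∈ Bn (n + 2)) :
    (∃ a b c, B = BTree.node (.node a b) c) ∨ (∃ c d, B = BTree.node .nil (.node c d)) := by
  rw [hBn] at hB
  rcases B with _ | ⟨_ | ⟨a, b⟩, _ | ⟨c, d⟩⟩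
  · simp [numNodes_nil] at hB
  · simp [numNodes_node, numNodes_nil] at hB
  · exact Or.inr ⟨c, d, rfl⟩
  · exact Or.inl ⟨a, b, BTree.nil, rfl⟩
  · exact Or.inl ⟨a, b, _, rfl⟩

lemma ser_eN : serF Bn (fun B => eNF B * wF B) = 1 := by
  refine PowerSeries.ext fun n => ?_
  cases n with
  | zero => simp [serF, Bn_zero Bn hBn, eNF, wF]
  | succ n =>
    simp only [serF, PowerSeries.coeff_mk, PowerSeries.coeff_one, Nat.succ_ne_zero, if_false]
    refine Finset.sum_eq_zero fun B hB => ?_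
    rw [hBn] at hB
    cases B with
    | nil => simp [numNodes_nil] at hB
    | node l r => simp [eNF]

lemma ser_eN' : serF Bn eNF = 1 := by
  refine PowerSeries.ext fun n => ?_
  cases n with
  | zero => simp [serF, Bn_zero Bn hBn, eNF]
  | succ n =>
    simp only [serF, PowerSeries.coeff_mk, PowerSeries.coeff_one, Nat.succ_ne_zero, if_false]
    refine Finset.sum_eq_zero fun B hB => ?_
    rw [hBn] at hB
    cases B with
    | nil => simp [numNodes_nil] at hB
    | node l r => simp [eNF]

lemma ser_psi : serF Bn (fun B => psiF B * wF B)
    = serF Bn wF + (PowerSeries.C (R := R5) (X 2) - 1) * PowerSeries.X := by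
  refine PowerSeries.ext fun n => ?_
  have hc : ∀ m : ℕ, (PowerSeries.coeff (R := R5) m) ((PowerSeries.C (R := R5) (X 2) - 1) * PowerSeries.X)
      = if m = 1 then (X 2 - 1 : R5) else 0 := fun m => by
    simp only [sub_mul, one_mul, map_sub, PowerSeries.coeff_C_mul, PowerSeries.coeff_X,
      mul_ite, mul_one, mul_zero]
    split <;> simp
  match n with
  | 0 => simp [serF, hc, Bn_zero Bn hBn, psiF, wF, phiF, rhoF, eNF]
  | 1 => simp [serF, hc, Bn_one Bn hBn, psiF, wF_leaf]
  | (n+2) =>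
    have h2 : (n : ℕ) + 2 ≠ 1 := by omega
    simp only [serF, PowerSeries.coeff_mk, map_add, hc, h2, if_false, add_zero]
    refine Finset.sum_congr rfl fun B hB => ?_
    rcases big_of_numNodes Bn hBn hB with ⟨a, b, c, rfl⟩ | ⟨c, d, rfl⟩ <;>
      simp [psiF]

lemma ser_rho : serF Bn (fun B => rhoF B * wF B)
    = serF Bn wF - 1 + (PowerSeries.C (R := R5) (X 0) - 1) * PowerSeries.X := by
  refine PowerSeries.ext fun n => ?_
  have hc : ∀ m : ℕ, (PowerSeries.coeff (R := R5) m) ((PowerSeries.C (R := R5) (X 0) - 1) * PowerSeries.X)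
      = if m = 1 then (X 0 - 1 : R5) else 0 := fun m => by
    simp only [sub_mul, one_mul, map_sub, PowerSeries.coeff_C_mul, PowerSeries.coeff_X,
      mul_ite, mul_one, mul_zero]
    split <;> simp
  match n with
  | 0 => simp [serF, hc, Bn_zero Bn hBn, rhoF, wF]
  | 1 => simp [serF, hc, Bn_one Bn hBn, rhoF, wF_leaf]
  | (n+2) =>
    have h2 : (n : ℕ) + 2 ≠ 1 := by omega
    have h0 : (n : ℕ) + 2 ≠ 0 := by omega
    simp only [serF, PowerSeries.coeff_mk, map_add, map_sub, hc, h2, if_false, add_zero,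
      PowerSeries.coeff_one, h0, sub_zero]
    refine Finset.sum_congr rfl fun B hB => ?_
    rcases big_of_numNodes Bn hBn hB with ⟨a, b, c, rfl⟩ | ⟨c, d, rfl⟩ <;>
      simp [rhoF]

noncomputable def w0F (B : BTree) : R5 := if B.left.isNil then wF B else 0

lemma ser_w0 : serF Bn w0F
    = 1 + PowerSeries.X * (serF Bn wF + (PowerSeries.C (R := R5) (X 0) - 1) * PowerSeries.X) := by
  have hfun : w0F = fun B => eNF B.left * ((fun r => (eNF r + rhoF r) * wF r) B.right) := by
    funext B
    cases B with
    | nil => simp [w0F, wF, eNF, rhoF, left, right, isNil]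
    | node l r =>
      cases l with
      | nil =>
        simp only [w0F, wF, eNF, rhoF, phiF, psiF, left, right, isNil]
        simp [wF, phiF, psiF]
      | node a b => simp [w0F, eNF, left, isNil]
  rw [hfun, serF_node Bn hBn eNF (fun r => (eNF r + rhoF r) * wF r)]
  have hG : serF Bn (fun r => (eNF r + rhoF r) * wF r)
      = serF Bn wF + (PowerSeries.C (R := R5) (X 0) - 1) * PowerSeries.X := by
    have : (fun r => (eNF r + rhoF r) * wF r)
        = fun r => eNF r * wF r + rhoF r * wF r := funext fun r => add_mul _ _ _
    rw [this, serF_add Bn hBn, ser_eN Bn hBn, ser_rho Bn hBn]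
    ring
  rw [hG, ser_eN' Bn hBn]
  simp [eNF, rhoF, wF]
  try ring

lemma ser_phi : serF Bn (fun B => phiF B * wF B)
    = PowerSeries.C (R := R5) (X 3) * serF Bn wF
      + (PowerSeries.C (R := R5) (X 4) - PowerSeries.C (R := R5) (X 3)) * serF Bn w0F
      + (1 - PowerSeries.C (R := R5) (X 4))
      + (PowerSeries.C (R := R5) (X 1) * PowerSeries.C (R := R5) (X 4) - PowerSeries.C (R := R5) (X 4))
        * PowerSeries.X := by
  refine PowerSeries.ext fun n => ?_
  match n with
  | 0 =>
    simp [serF, Bn_zero Bn hBn, phiF, wF, w0F, left, isNil, sub_mul, mul_assoc,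
      PowerSeries.coeff_C_mul, PowerSeries.coeff_X, PowerSeries.coeff_C]
    try ring
  | 1 =>
    simp [serF, Bn_one Bn hBn, phiF, wF_leaf, w0F, left, isNil, sub_mul, mul_assoc,
      PowerSeries.coeff_C_mul, PowerSeries.coeff_X, PowerSeries.coeff_C,
      PowerSeries.coeff_one]
    try ring
  | (n+2) =>
    have h2 : (n : ℕ) + 2 ≠ 1 := by omega
    have h0 : (n : ℕ) + 2 ≠ 0 := by omega
    have hsum : ∑ B ∈ Bn (n+2), phiF B * wF B
        = X 3 * (∑ B ∈ Bn (n+2), wF B) + (X 4 - X 3) * (∑ B ∈ Bn (n+2), w0F B) := by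
      rw [Finset.mul_sum, Finset.mul_sum, ← Finset.sum_add_distrib]
      refine Finset.sum_congr rfl fun B hB => ?_
      rcases big_of_numNodes Bn hBn hB with ⟨a, b, c, rfl⟩ | ⟨c, d, rfl⟩ <;>
        (simp [phiF, w0F, left, isNil]; try ring)
    simp only [serF, PowerSeries.coeff_mk, map_add, map_sub, map_one, sub_mul, one_mul,
      mul_assoc, PowerSeries.coeff_C_mul, PowerSeries.coeff_X, PowerSeries.coeff_C,
      PowerSeries.coeff_one, h2, h0, if_false, mul_zero, sub_zero, add_zero, hsum]
    try ring

lemma ser_master : serF Bn wF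
    = 1 + PowerSeries.X * serF Bn (fun B => phiF B * wF B)
          * serF Bn (fun B => eNF B * wF B)
      + PowerSeries.X * serF Bn (fun B => psiF B * wF B)
          * serF Bn (fun B => rhoF B * wF B) := by
  have hfun : wF = fun B =>
      (fun l => phiF l * wF l) B.left * (fun r => eNF r * wF r) B.right
      + (fun l => psiF l * wF l) B.left * (fun r => rhoF r * wF r) B.right := by
    funext B
    cases B with
    | nil => simp [wF, phiF, psiF, eNF, rhoF, left, right]
    | node l r =>
      show wF (node l r) = _
      simp only [left, right]
      rw [wF]
      ring
  conv_lhs => rw [hfun]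
  rw [serF_add Bn hBn,
    serF_node Bn hBn (fun l => phiF l * wF l) (fun r => eNF r * wF r),
    serF_node Bn hBn (fun l => psiF l * wF l) (fun r => rhoF r * wF r)]
  simp [phiF, psiF, eNF, rhoF, wF]
  try ring

end BTreeAux



namespace BTreeAux
open BTree MvPolynomial

variable (Bn : ℕ → Finset BTree) (hBn : ∀ n B, B ∈ Bn n ↔ BTree.numNodes B = n)
include hBn

lemma ser_N : Nser Bn = serF Bn wF - 1 + (PowerSeries.C (R := R5) (X 0) - 1) * PowerSeries.X := by
  refine PowerSeries.ext fun n => ?_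
  have hc : ∀ m : ℕ, (PowerSeries.coeff (R := R5) m) ((PowerSeries.C (R := R5) (X 0) - 1) * PowerSeries.X)
      = if m = 1 then (X 0 - 1 : R5) else 0 := fun m => by
    simp only [sub_mul, one_mul, map_sub, PowerSeries.coeff_C_mul, PowerSeries.coeff_X,
      mul_ite, mul_one, mul_zero]
    split <;> simp
  match n with
  | 0 => simp [Nser, serF, hc, Bn_zero Bn hBn, wF]
  | 1 => simp [Nser, Npoly, serF, hc, Bn_one Bn hBn, wF_leaf]
  | (n+2) =>
    have h2 : (n : ℕ) + 2 ≠ 1 := by omega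
    have h0 : (n : ℕ) + 2 ≠ 0 := by omega
    simp only [Nser, Npoly, serF, PowerSeries.coeff_mk, map_add, map_sub, hc, h2, h0,
      if_false, add_zero, PowerSeries.coeff_one, sub_zero]
    exact (Finset.sum_congr rfl fun B _ => (wF_eq B).symm)

end BTreeAux

/-- **Theorem (algebraic equation for `N(t)`).**  With `a = u₁ - u₃ + v₁ - v₂`,
`b = u₁ + u₃ - v₁ + v₂` and `c = v₁ + 1`, the series `N(t)` satisfies
`(a t² - c t + 1 - 2t N(t))² = a² t⁴ + 2(bc - 2u₁ - 2u₂v₂) t³ + (c² - 2b) t² - 2c t + 1`. -/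
theorem Nser_quadratic_equation
    (Bn : ℕ → Finset BTree) (hBn : ∀ n B, B ∈ Bn n ↔ BTree.numNodes B = n) :
    (PowerSeries.C (R := MvPolynomial (Fin 5) ℤ)
          (MvPolynomial.X 0 - MvPolynomial.X 2 + MvPolynomial.X 3 - MvPolynomial.X 4) *
            PowerSeries.X ^ 2
        - PowerSeries.C (R := MvPolynomial (Fin 5) ℤ) (MvPolynomial.X 3 + 1) * PowerSeries.X
        + 1 - 2 * PowerSeries.X * Nser Bn) ^ 2
      = PowerSeries.C (R := MvPolynomial (Fin 5) ℤ)
            ((MvPolynomial.X 0 - MvPolynomial.X 2 + MvPolynomial.X 3 - MvPolynomial.X 4) ^ 2) *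
          PowerSeries.X ^ 4
        + PowerSeries.C (R := MvPolynomial (Fin 5) ℤ)
            (2 * ((MvPolynomial.X 0 + MvPolynomial.X 2 - MvPolynomial.X 3 + MvPolynomial.X 4) *
                (MvPolynomial.X 3 + 1)
              - 2 * MvPolynomial.X 0 - 2 * MvPolynomial.X 1 * MvPolynomial.X 4)) *
          PowerSeries.X ^ 3
        + PowerSeries.C (R := MvPolynomial (Fin 5) ℤ)
            ((MvPolynomial.X 3 + 1) ^ 2
              - 2 * (MvPolynomial.X 0 + MvPolynomial.X 2 - MvPolynomial.X 3 + MvPolynomial.X 4)) *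
          PowerSeries.X ^ 2
        - PowerSeries.C (R := MvPolynomial (Fin 5) ℤ) (2 * (MvPolynomial.X 3 + 1)) * PowerSeries.X
        + 1 := by
  have hW := BTreeAux.ser_master Bn hBn
  rw [BTreeAux.ser_phi Bn hBn, BTreeAux.ser_eN Bn hBn, BTreeAux.ser_psi Bn hBn,
    BTreeAux.ser_rho Bn hBn] at hW
  have hS := BTreeAux.ser_w0 Bn hBn
  rw [BTreeAux.ser_N Bn hBn]
  simp only [map_sub, map_add, map_mul, map_pow, map_one, map_ofNat]
  linear_combination (-4 * PowerSeries.X) * hW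
    + (-4 * PowerSeries.X ^ 2
        * (PowerSeries.C (R := BTreeAux.R5) (MvPolynomial.X 4)
            - PowerSeries.C (R := BTreeAux.R5) (MvPolynomial.X 3))) * hS
end

section
/- Let B be a binary tree. A node of B is a head if it is the root or if it is a right child. Let θ(B) be the binary tree obtained from B by exchanging the left and right subtrees at every head of B (these exchanges at distinct nodes commute, and the node set of θ(B) is naturally identified with that of B). Then for every node v of B: v is a head of B if and only if the path from the root to v in θ(B) contains an even number of right edges (i.e., v is at odd right-level in θ(B), where the right-level of a node is one plus the number of right edges on the path from the root to it). -/
namespace BTree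

/-- The switching map `θ`: the Boolean flag records whether the current node is a head
of the original tree (the root, or a right child).  At every head the left and right
subtrees are exchanged. -/
def theta : Bool → BTree → BTree
  | _, nil => nil
  | true, node l r => node (theta true r) (theta false l)
  | false, node l r => node (theta false l) (theta true r)

/-- A position in a binary tree: a list of directions from the root
(`false` = left, `true` = right).  `IsNodeAt B p` says that `p` is the position of an
actual node of `B`. -/
def IsNodeAt : BTree → List Bool → Prop
  | nil, _ => False
  | node _ _, [] => True
  | node l r, d :: p => if d then IsNodeAt r p else IsNodeAt l p

/-- The natural identification of the nodes of `B` with the nodes of `θ(B)`: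
`posMap h B p` is the position in `θ(B)` of the node of `B` at position `p`
(`h` records whether the root of `B` is a head of the original tree). -/
def posMap : Bool → BTree → List Bool → List Bool
  | _, _, [] => []
  | _, nil, _ :: _ => []
  | true, node l r, d :: p =>
      if d then false :: posMap true r p else true :: posMap false l p
  | false, node l r, d :: p =>
      if d then true :: posMap true r p else false :: posMap false l p

/-- The node of `B` at position `p` is a head: it is the root or a right child. -/
def IsHeadAt (p : List Bool) : Prop := p = [] ∨ p.getLast? = some true

end BTree

theorem BTree.aux (p : List Bool) : ∀ (B : BTree) (h : Bool), BTree.IsNodeAt B p →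
    BTree.IsNodeAt (BTree.theta h B) (BTree.posMap h B p) ∧
      (Even ((BTree.posMap h B p).count true) ↔ (p = [] ∨ p.getLast? = some h)) := by
  induction p with
  | nil =>
    intro B h hp
    cases B with
    | nil => exact absurd hp (by simp [BTree.IsNodeAt])
    | node l r =>
      cases h <;> simp [BTree.theta, BTree.posMap, BTree.IsNodeAt]
  | cons d p' ih =>
    intro B h hp
    cases B with
    | nil => exact absurd hp (by simp [BTree.IsNodeAt])
    | node l r =>
      have hp' : BTree.IsNodeAt (if d then r else l) p' := by
        cases d <;> simpa [BTree.IsNodeAt] using hp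
      cases d <;> cases h <;>
        · simp only [Bool.false_eq_true, if_false, if_true] at hp' ⊢
          obtain ⟨h1, h2⟩ := ih _ _ hp'
          constructor
          · simpa [BTree.theta, BTree.posMap, BTree.IsNodeAt] using h1
          · simp only [BTree.posMap, if_true, Bool.false_eq_true, if_false,
              List.count_cons]
            cases p' with
            | nil => simp [BTree.posMap] at h2 ⊢
            | cons e q =>
              have hne : e :: q ≠ [] := by simp
              have hl : (e :: q).getLast? = some ((e :: q).getLast hne) :=
                List.getLast?_eq_getLast hne
              simp only [List.getLast?_cons_cons, reduceCtorEq, false_or, hl] at h2 ⊢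
              cases hb : (e :: q).getLast hne <;>
                simp_all [Nat.even_add_one]

/-- **Theorem (heads become nodes at odd right-level under `θ`).**  For every node `v`
of a binary tree `B` (given by its position `p`), the corresponding node of `θ(B)` is at
position `posMap true B p`; and `v` is a head of `B` (the root or a right child) if and
only if the path from the root of `θ(B)` to the corresponding node contains an even
number of right edges, i.e. the node is at odd right-level in `θ(B)`. -/
theorem head_iff_odd_rightLevel_theta
    (B : BTree) (p : List Bool) (hp : BTree.IsNodeAt B p) :
    BTree.IsNodeAt (BTree.theta true B) (BTree.posMap true B p) ∧
      (BTree.IsHeadAt p ↔ Even ((BTree.posMap true B p).count true)) := by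
  obtain ⟨h1, h2⟩ := BTree.aux p B true hp
  exact ⟨h1, h2.symm⟩
end

section
/- Fix a finite multiset M of positive integers. There exists a bijection T ↦ T̂ of 𝒯_M onto itself such that for every T ∈ 𝒯_M: (a) for every q ≥ 1, the number of nodes of degree q in T equals the number of nodes of degree q−1 at odd levels in T̂; (b) the number of leaves of T equals the number of nodes at even levels in T̂; (c) for every k ≥ 1, the number of youngest leaves v of T such that the path from v towards the root reaches after exactly k edges the first node that is not a youngest node equals the number of internal nodes of degree k at even levels of T̂ (in particular ystleaf(T) = elint(T̂)); and (d) oleaf(T) = oleaf(T̂). -/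
/-- Labeled plane trees: a node with a label in `ℕ` and a (left-to-right ordered)
list of children. -/
inductive LTree : Type where
  | node : ℕ → List LTree → LTree

namespace LTree

/-- The label of the root. -/
def label : LTree → ℕ
  | node a _ => a

/-- The list of children of the root, from left to right. -/
def children : LTree → List LTree
  | node _ cs => cs

/-- A tree consisting of a single node is a leaf. -/
def isLeaf (t : LTree) : Bool := t.children.isEmpty

/-- The list of all subtrees (i.e. all nodes) of a tree. -/
def subtrees : LTree → List LTree
  | node a cs => node a cs :: (cs.attach.map (fun c => subtrees c.1)).flatten
decreasing_by
  simp only [LTree.node.sizeOf_spec]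
  have := List.sizeOf_lt_of_mem c.2
  omega

/-- The multiset of labels of all nodes of a tree. -/
def labels (T : LTree) : Multiset ℕ := (T.subtrees.map label : List ℕ)

/-- `T` is a weakly increasing tree on the multiset `M`: the root is labeled `0`,
the multiset of labels is `M ∪ {0}`, labels weakly increase along root-to-leaf paths,
and the labels of the children of each node weakly increase from right to left. -/
def IsWIT (M : Multiset ℕ) (T : LTree) : Prop :=
  T.label = 0 ∧ T.labels = 0 ::ₘ M ∧
  ∀ t ∈ T.subtrees, (∀ c ∈ t.children, t.label ≤ c.label) ∧
    List.Chain' (fun a b => b ≤ a) (t.children.map label)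

/-- `T` is (an encoding of) a plane tree with `n` edges: all labels are zero
and there are `n + 1` nodes. -/
def IsPlane (n : ℕ) (T : LTree) : Prop :=
  (∀ t ∈ T.subtrees, t.label = 0) ∧ T.subtrees.length = n + 1

/-- The number of singleton leaves: leaves that are the only child of their parent. -/
def sleaf (T : LTree) : ℕ :=
  T.subtrees.countP (fun t => match t.children with
    | [c] => c.isLeaf
    | _ => false)

/-- The number of elder leaves: leaves that are the leftmost child of their parent
and have siblings. -/
def eleaf (T : LTree) : ℕ :=
  T.subtrees.countP (fun t => match t.children with
    | c :: _ :: _ => c.isLeaf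
    | _ => false)

/-- The number of young leaves: leaves that are not the leftmost child of their parent. -/
def yleaf (T : LTree) : ℕ :=
  (T.subtrees.map (fun t => t.children.tail.countP isLeaf)).sum

/-- The number of young internal nodes: internal nodes whose leftmost child is internal. -/
def yint (T : LTree) : ℕ :=
  T.subtrees.countP (fun t => match t.children with
    | c :: _ => !c.isLeaf
    | _ => false)

/-- The number of singleton internal nodes: parents of a singleton leaf. -/
def sint (T : LTree) : ℕ :=
  T.subtrees.countP (fun t => match t.children with
    | [c] => c.isLeaf
    | _ => false)

/-- The number of elder internal nodes: parents of an elder leaf. -/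
def eint (T : LTree) : ℕ :=
  T.subtrees.countP (fun t => match t.children with
    | c :: _ :: _ => c.isLeaf
    | _ => false)

/-- The number of old leaves: leaves that are the leftmost child of their parent. -/
def oleaf (T : LTree) : ℕ := sleaf T + eleaf T

/-- The number of old internal nodes. -/
def oint (T : LTree) : ℕ := sint T + eint T

/-- All subtrees of a tree together with their levels, the root being at level `d`. -/
def subtreesL (d : ℕ) : LTree → List (ℕ × LTree)
  | node a cs => (d, node a cs) :: (cs.attach.map (fun c => subtreesL (d + 1) c.1)).flatten
decreasing_by
  simp only [LTree.node.sizeOf_spec]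
  have := List.sizeOf_lt_of_mem c.2
  omega

/-- The number of internal nodes at even levels. -/
def elint (T : LTree) : ℕ :=
  (subtreesL 0 T).countP (fun p => p.1 % 2 == 0 && !p.2.isLeaf)

/-- The number of leaves at even levels. -/
def elleaf (T : LTree) : ℕ :=
  (subtreesL 0 T).countP (fun p => p.1 % 2 == 0 && p.2.isLeaf)

/-- The number of nodes of degree `q`. -/
def degCount (q : ℕ) (T : LTree) : ℕ :=
  T.subtrees.countP (fun t => t.children.length == q)

/-- The number of nodes of degree `q` at odd levels. -/
def oddLevelDegCount (q : ℕ) (T : LTree) : ℕ :=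
  (subtreesL 0 T).countP (fun p => p.1 % 2 == 1 && p.2.children.length == q)

/-- The number of nodes at even levels. -/
def evenLevelCount (T : LTree) : ℕ :=
  (subtreesL 0 T).countP (fun p => p.1 % 2 == 0)

/-- The number of nodes of degree `k` at even levels. -/
def evenLevelDegCount (k : ℕ) (T : LTree) : ℕ :=
  (subtreesL 0 T).countP (fun p => p.1 % 2 == 0 && p.2.children.length == k)

/-- The number of leaves. -/
def leafCount (T : LTree) : ℕ := T.subtrees.countP isLeaf

/-- The number of youngest leaves: leaves that are the rightmost child of their parent. -/
def ystleaf (T : LTree) : ℕ :=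
  T.subtrees.countP (fun t => match t.children.getLast? with
    | some c => c.isLeaf
    | none => false)

/-- The length of the maximal chain of rightmost children starting at the root:
`0` for a leaf, and `1 +` the spine length of the rightmost child otherwise. -/
def lastSpine : LTree → ℕ
  | node _ [] => 0
  | node a (c :: cs) => 1 + lastSpine ((c :: cs).getLast (by simp))
decreasing_by
  simp only [LTree.node.sizeOf_spec]
  have := List.sizeOf_lt_of_mem (List.getLast_mem (l := c :: cs) (by simp))
  omega

/-- The number of non-youngest nodes `w` (the root, or nodes that are not the rightmost
child of their parent) such that the maximal chain of rightmost children starting at `w`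
has length exactly `k`.  For `k ≥ 1` this is the number of youngest leaves `v` such that
the path from `v` towards the root reaches after exactly `k` edges the first
non-youngest node. -/
def spineCount (k : ℕ) (T : LTree) : ℕ :=
  (if lastSpine T = k then 1 else 0) +
    (T.subtrees.map (fun t => t.children.dropLast.countP (fun c => lastSpine c == k))).sum

end LTree

namespace LTree

@[simp] theorem children_node (a : ℕ) (cs : List LTree) : (node a cs).children = cs := rfl
@[simp] theorem label_node (a : ℕ) (cs : List LTree) : (node a cs).label = a := rfl
@[simp] theorem isLeaf_node (a : ℕ) (cs : List LTree) : (node a cs).isLeaf = cs.isEmpty := rfl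

theorem eta : ∀ t : LTree, node t.label t.children = t
  | node _ _ => rfl

theorem sizeOf_children_lt (t : LTree) (c : LTree) (hc : c ∈ t.children) :
    sizeOf c < sizeOf t := by
  cases t with
  | node a cs =>
    have := List.sizeOf_lt_of_mem hc
    simp only [LTree.node.sizeOf_spec, sizeOf_nat]
    simp only [children] at this
    omega

theorem list_sizeOf_append (l1 l2 : List LTree) :
    sizeOf (l1 ++ l2) + 1 = sizeOf l1 + sizeOf l2 := by
  induction l1 with
  | nil => simp; omega
  | cons h t ih => simp only [List.cons_append, List.cons.sizeOf_spec]; omega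

def phi : LTree → LTree
  | node a [] => node a []
  | node a (c :: cs) =>
      let pr := phi ((c :: cs).getLast (by simp))
      node a (pr.children ++
        [node pr.label ((c :: cs).dropLast.attach.map (fun d => phi d.1))])
decreasing_by
  · have := List.sizeOf_lt_of_mem (List.getLast_mem (l := c :: cs) (by simp))
    simp only [LTree.node.sizeOf_spec, sizeOf_nat]; omega
  · have hm : d.1 ∈ c :: cs := (List.dropLast_sublist (c :: cs)).subset d.2
    have := List.sizeOf_lt_of_mem hm
    simp only [LTree.node.sizeOf_spec, sizeOf_nat]; omega

def psi : LTree → LTree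
  | node a [] => node a []
  | node a (c :: cs) =>
      let X := (c :: cs).getLast (by simp)
      node a ((X.children.attach.map fun d => psi d.1) ++
        [psi (node X.label (c :: cs).dropLast)])
decreasing_by
  all_goals
    have h : (c :: cs) ≠ [] := by simp
    have h1 := List.sizeOf_lt_of_mem (List.getLast_mem (l := c :: cs) (by simp))
    have h2 : sizeOf ((c :: cs).dropLast ++ [(c :: cs).getLast h]) + 1
        = sizeOf (c :: cs).dropLast + sizeOf [(c :: cs).getLast h] :=
      list_sizeOf_append _ _
    rw [List.dropLast_append_getLast h] at h2
    have h3 : sizeOf [(c :: cs).getLast h] = 1 + sizeOf ((c :: cs).getLast h) + 1 := by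
      simp only [List.cons.sizeOf_spec, List.nil.sizeOf_spec]
    have h4 : sizeOf ((c :: cs).getLast h) =
        1 + ((c :: cs).getLast h).label + sizeOf ((c :: cs).getLast h).children := by
      cases hx : (c :: cs).getLast h with
      | node b ds => simp only [LTree.node.sizeOf_spec, label, children, sizeOf_nat]
    have h5 : (1:ℕ) ≤ sizeOf ((c :: cs).getLast h).children := by
      cases ((c :: cs).getLast h).children with
      | nil => simp
      | cons x xs => simp only [List.cons.sizeOf_spec]; omega
    simp only [LTree.node.sizeOf_spec, sizeOf_nat]
  · have h6 := sizeOf_children_lt ((c :: cs).getLast h) d.1 d.2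
    omega
  · omega

theorem phi_nil (a : ℕ) : phi (node a []) = node a [] := by
  rw [phi.eq_def]

theorem phi_ne (a : ℕ) (cs : List LTree) (h : cs ≠ []) :
    phi (node a cs) = node a ((phi (cs.getLast h)).children ++
      [node (phi (cs.getLast h)).label (cs.dropLast.map phi)]) := by
  cases cs with
  | nil => exact absurd rfl h
  | cons c cs0 => rw [phi.eq_def]; simp [List.attach_map_val]

theorem getLast_concat_eq (ds : List LTree) (r : LTree) (h : ds ++ [r] ≠ []) :
    (ds ++ [r]).getLast h = r := by
  simp [← List.concat_eq_append, List.getLast_concat']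

theorem phi_concat (a : ℕ) (ds : List LTree) (r : LTree) :
    phi (node a (ds ++ [r])) =
      node a ((phi r).children ++ [node (phi r).label (ds.map phi)]) := by
  rw [phi_ne a (ds ++ [r]) (by simp)]
  rw [getLast_concat_eq, List.dropLast_concat]

theorem psi_nil (a : ℕ) : psi (node a []) = node a [] := by
  rw [psi.eq_def]

theorem psi_ne (a : ℕ) (cs : List LTree) (h : cs ≠ []) :
    psi (node a cs) = node a (((cs.getLast h).children.map psi) ++
      [psi (node (cs.getLast h).label cs.dropLast)]) := by
  cases cs with
  | nil => exact absurd rfl h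
  | cons c cs0 => rw [psi.eq_def]; simp [List.attach_map_val]

theorem psi_concat (a b : ℕ) (os ds : List LTree) :
    psi (node a (os ++ [node b ds])) =
      node a (ds.map psi ++ [psi (node b os)]) := by
  rw [psi_ne a (os ++ [node b ds]) (by simp)]
  rw [getLast_concat_eq, List.dropLast_concat]
  rfl

theorem subtrees_node (a : ℕ) (cs : List LTree) :
    subtrees (node a cs) = node a cs :: (cs.map subtrees).flatten := by
  rw [subtrees, List.attach_map_val]

theorem subtreesL_node (d : ℕ) (a : ℕ) (cs : List LTree) :
    subtreesL d (node a cs) = (d, node a cs) :: (cs.map (subtreesL (d+1))).flatten := by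
  rw [subtreesL, List.attach_map_val]

theorem strongOn {motive : LTree → Prop}
    (h : ∀ a cs, (∀ c ∈ cs, motive c) → motive (node a cs)) : ∀ T, motive T := by
  have key : ∀ n (T : LTree), sizeOf T ≤ n → motive T := by
    intro n
    induction n with
    | zero =>
      intro T hT
      cases T with
      | node a cs => simp only [LTree.node.sizeOf_spec, sizeOf_nat] at hT; omega
    | succ n ih =>
      intro T hT
      cases T with
      | node a cs =>
        refine h a cs (fun c hc => ih c ?_)
        have := List.sizeOf_lt_of_mem hc
        simp only [LTree.node.sizeOf_spec, sizeOf_nat] at hT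
        omega
  exact fun T => key (sizeOf T) T le_rfl

theorem sizeRec {motive : LTree → Prop}
    (h : ∀ T, (∀ S : LTree, sizeOf S < sizeOf T → motive S) → motive T) : ∀ T, motive T := by
  have key : ∀ n (T : LTree), sizeOf T ≤ n → motive T := by
    intro n
    induction n with
    | zero => intro T hT; exact h T (fun S hS => by omega)
    | succ n ih => intro T hT; exact h T (fun S hS => ih S (by omega))
  exact fun T => key (sizeOf T) T le_rfl

theorem subtreesL_shift (T : LTree) : ∀ (d : ℕ),
    subtreesL d T = (subtreesL 0 T).map (fun q => (q.1 + d, q.2)) := by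
  induction T using strongOn with
  | h a cs ih =>
    intro d
    rw [subtreesL_node, subtreesL_node]
    simp only [List.map_cons, List.map_flatten, List.map_map, Function.comp_def,
      Nat.zero_add]
    congr 1
    congr 1
    apply List.map_congr_left
    intro c hc
    rw [ih c hc (d+1), ih c hc 1]
    simp only [List.map_map, Function.comp_def]
    apply List.map_congr_left
    intro q _
    simp only [Prod.mk.injEq, and_true]
    omega

def cS (f : LTree → Bool) (T : LTree) : ℕ := T.subtrees.countP f
def sS (g : LTree → ℕ) (T : LTree) : ℕ := (T.subtrees.map g).sum
def cE (f : LTree → Bool) (T : LTree) : ℕ :=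
  (subtreesL 0 T).countP (fun p => p.1 % 2 == 0 && f p.2)
def cO (f : LTree → Bool) (T : LTree) : ℕ :=
  (subtreesL 0 T).countP (fun p => p.1 % 2 == 1 && f p.2)

theorem cS_node (f : LTree → Bool) (a : ℕ) (cs : List LTree) :
    cS f (node a cs) = (if f (node a cs) then 1 else 0) + (cs.map (cS f)).sum := by
  simp only [cS, subtrees_node, List.countP_cons, List.countP_flatten, List.map_map,
    Function.comp_def]
  have h1 : List.map (fun x => List.countP f x.subtrees) cs = List.map (cS f) cs := rfl
  rw [h1]; omega

theorem sS_node (g : LTree → ℕ) (a : ℕ) (cs : List LTree) :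
    sS g (node a cs) = g (node a cs) + (cs.map (sS g)).sum := by
  simp only [sS, subtrees_node, List.map_cons, List.sum_cons, List.map_flatten,
    List.sum_flatten, List.map_map, Function.comp_def]
  rfl

theorem succ_mod2 (n : ℕ) : ((n+1) % 2 == 0) = (n % 2 == 1) := by
  rcases Nat.mod_two_eq_zero_or_one n with h | h <;> simp [Nat.add_mod, h]

theorem cE_node (f : LTree → Bool) (a : ℕ) (cs : List LTree) :
    cE f (node a cs) = (if f (node a cs) then 1 else 0) + (cs.map (cO f)).sum := by
  simp only [cE, subtreesL_node, List.countP_cons, List.countP_flatten, List.map_map,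
    Function.comp_def, Nat.zero_add]
  have h1 : ∀ c ∈ cs, (subtreesL 1 c).countP (fun p => p.1 % 2 == 0 && f p.2) = cO f c := by
    intro c _
    rw [subtreesL_shift c 1, List.countP_map]
    apply List.countP_congr
    intro q _
    simp only [Function.comp_apply, succ_mod2]
  rw [List.map_congr_left h1]
  simp only [Nat.zero_mod, beq_self_eq_true, Bool.true_and]
  omega

theorem cO_node (f : LTree → Bool) (a : ℕ) (cs : List LTree) :
    cO f (node a cs) = (cs.map (cE f)).sum := by
  simp only [cO, subtreesL_node, List.countP_cons, List.countP_flatten, List.map_map,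
    Function.comp_def, Nat.zero_add]
  have h1 : ∀ c ∈ cs, (subtreesL 1 c).countP (fun p => p.1 % 2 == 1 && f p.2) = cE f c := by
    intro c _
    rw [subtreesL_shift c 1, List.countP_map]
    apply List.countP_congr
    intro q _
    simp only [Function.comp_apply]
    have h2 : ((q.1+1) % 2 == 1) = (q.1 % 2 == 0) := by
      rcases Nat.mod_two_eq_zero_or_one q.1 with h | h <;> simp [Nat.add_mod, h]
    rw [h2]
  rw [List.map_congr_left h1]
  simp

theorem concatRec {motive : LTree → Prop}
    (h0 : ∀ a, motive (node a []))
    (h1 : ∀ a ds r, (∀ d ∈ ds, motive d) → motive r → motive (node a (ds ++ [r]))) :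
    ∀ T, motive T := by
  apply strongOn
  intro a cs ih
  rcases cs.eq_nil_or_concat with rfl | ⟨ds, r, rfl⟩
  · exact h0 a
  · rw [List.concat_eq_append]
    refine h1 a ds r (fun d hd => ih d ?_) (ih r ?_)
    · rw [List.concat_eq_append]; exact List.mem_append_left _ hd
    · rw [List.concat_eq_append]; exact List.mem_append_right _ (by simp)

theorem lastSpine_nil (a : ℕ) : lastSpine (node a []) = 0 := by
  rw [lastSpine.eq_def]

theorem lastSpine_ne (a : ℕ) (cs : List LTree) (h : cs ≠ []) :
    lastSpine (node a cs) = 1 + lastSpine (cs.getLast h) := by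
  cases cs with
  | nil => exact absurd rfl h
  | cons c cs0 => rw [lastSpine.eq_def]

theorem lastSpine_concat (a : ℕ) (ds : List LTree) (r : LTree) :
    lastSpine (node a (ds ++ [r])) = 1 + lastSpine r := by
  rw [lastSpine_ne a _ (by simp), getLast_concat_eq]

theorem isEmpty_concat (l : List LTree) (x : LTree) : (l ++ [x]).isEmpty = false := by
  cases l <;> rfl

theorem label_phi (T : LTree) : (phi T).label = T.label := by
  cases T with
  | node a cs =>
    rcases cs.eq_nil_or_concat with rfl | ⟨ds, r, rfl⟩
    · rw [phi_nil]
    · rw [List.concat_eq_append, phi_concat]; rfl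

theorem children_phi_len (T : LTree) : (phi T).children.length = lastSpine T := by
  induction T using concatRec with
  | h0 a => rw [phi_nil, lastSpine_nil]; rfl
  | h1 a ds r ihd ihr =>
    rw [phi_concat, lastSpine_concat]
    simp only [children_node, List.length_append, List.length_cons, List.length_nil]
    omega

theorem isLeaf_phi (T : LTree) : (phi T).isLeaf = T.isLeaf := by
  cases T with
  | node a cs =>
    rcases cs.eq_nil_or_concat with rfl | ⟨ds, r, rfl⟩
    · rw [phi_nil]
    · rw [List.concat_eq_append, phi_concat]
      simp [isEmpty_concat]

theorem psi_phi (T : LTree) : psi (phi T) = T := by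
  induction T using concatRec with
  | h0 a => rw [phi_nil, psi_nil]
  | h1 a ds r ihd ihr =>
    rw [phi_concat, psi_concat, eta (phi r), ihr]
    congr 1
    rw [List.map_map]
    have : ds.map (psi ∘ phi) = ds.map id := by
      apply List.map_congr_left
      intro d hd
      exact ihd d hd
    rw [this, List.map_id]

theorem phi_psi (S : LTree) : phi (psi S) = S := by
  induction S using sizeRec with
  | h S ih =>
    cases S with
    | node a cs =>
      rcases cs.eq_nil_or_concat with rfl | ⟨os, X, rfl⟩
      · rw [psi_nil, phi_nil]
      · simp only [List.concat_eq_append] at ih ⊢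
        cases X with
        | node b ds =>
          rw [psi_concat, phi_concat]
          have h2 := list_sizeOf_append os [node b ds]
          have h3 : sizeOf [node b ds] = 1 + sizeOf (node b ds) + 1 := by
            simp only [List.cons.sizeOf_spec, List.nil.sizeOf_spec]
          have hsz : sizeOf (node b os) < sizeOf (node a (os ++ [node b ds])) := by
            simp only [LTree.node.sizeOf_spec, sizeOf_nat] at *
            omega
          rw [ih (node b os) hsz]
          simp only [children_node, label_node]
          congr 2
          rw [List.map_map]
          have heq : ds.map (phi ∘ psi) = ds.map id := by
            apply List.map_congr_left
            intro d hd
            apply ih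
            have hmem := List.sizeOf_lt_of_mem hd
            simp only [LTree.node.sizeOf_spec, sizeOf_nat] at *
            omega
          rw [heq, List.map_id]

theorem sum_map_add {α : Type} (l : List α) (f g : α → ℕ) :
    (l.map (fun x => f x + g x)).sum = (l.map f).sum + (l.map g).sum := by
  induction l with
  | nil => rfl
  | cons h t ih => simp only [List.map_cons, List.sum_cons, ih]; omega

theorem countP_sum {α : Type} (p : α → Bool) (l : List α) :
    l.countP p = (l.map (fun x => if p x then 1 else 0)).sum := by
  induction l with
  | nil => rfl
  | cons h t ih => simp only [List.countP_cons, List.map_cons, List.sum_cons, ih]; omega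

theorem ite_beq (x y : ℕ) : (if (x == y) then (1:ℕ) else 0) = if x = y then 1 else 0 := by
  by_cases h : x = y <;> simp [h]

theorem beq_shift (n q : ℕ) (hq : 1 ≤ q) : ((n + 1 == q) : Bool) = (n == q - 1) := by
  by_cases h : n + 1 = q <;> by_cases h2 : n = q - 1 <;> simp_all <;> omega

theorem stat_leaf (T : LTree) : cS isLeaf T = cE (fun _ => true) (phi T) := by
  induction T using concatRec with
  | h0 a => rw [phi_nil, cS_node, cE_node]; simp
  | h1 a ds r ihd ihr =>
    rw [cS_node, phi_concat, cE_node]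
    have hr : cE (fun _ => true) (phi r)
        = 1 + ((phi r).children.map (cO (fun _ => true))).sum := by
      conv_lhs => rw [← eta (phi r)]
      rw [cE_node]
      simp
    have hX : cO (fun _ => true) (node (phi r).label (ds.map phi))
        = (ds.map (fun d => cE (fun _ => true) (phi d))).sum := by
      rw [cO_node, List.map_map]
      rfl
    simp only [isLeaf_node, isEmpty_concat, List.map_append, List.sum_append,
      List.map_cons, List.sum_cons, List.map_nil, List.sum_nil, hX, if_true]
    rw [List.map_congr_left (fun d hd => ihd d hd)]
    rw [ihr, hr]
    simp
    omega

theorem stat_deg (T : LTree) : ∀ q, 1 ≤ q →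
    cS (fun t => t.children.length == q) T
      = cO (fun t => t.children.length == q - 1) (phi T) := by
  induction T using concatRec with
  | h0 a =>
    intro q hq
    rw [phi_nil, cS_node, cO_node]
    have h0q : ((node a [] : LTree).children.length == q) = false := by
      simp only [children_node, List.length_nil]
      have hne : (0:ℕ) ≠ q := by omega
      simp [hne]
    rw [h0q]
    simp
  | h1 a ds r ihd ihr =>
    intro q hq
    rw [cS_node, phi_concat, cO_node]
    set f := fun t : LTree => t.children.length == q - 1 with hf
    have hr : cO f (phi r) = ((phi r).children.map (cE f)).sum := by
      conv_lhs => rw [← eta (phi r)]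
      rw [cO_node]
    have hX : cE f (node (phi r).label (ds.map phi))
        = (if ds.length = q - 1 then 1 else 0) + (ds.map (fun d => cO f (phi d))).sum := by
      rw [cE_node, List.map_map]
      congr 1
      rw [hf]
      simp only [children_node, List.length_map]
      rw [ite_beq]
    have hroot : ((node a (ds ++ [r]) : LTree).children.length == q)
        = ((ds.length : ℕ) == q - 1) := by
      simp only [children_node, List.length_append, List.length_cons, List.length_nil]
      rw [← beq_shift _ q hq]
    rw [hroot]
    simp only [List.map_append, List.sum_append, List.map_cons, List.sum_cons,
      List.map_nil, List.sum_nil, hX]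
    rw [List.map_congr_left (fun d hd => ihd d hd q hq)]
    rw [ihr q hq, hr, ite_beq]
    simp only [← hf]
    omega

theorem stat_spine (T : LTree) : ∀ k,
    spineCount k T = cE (fun t => t.children.length == k) (phi T) := by
  induction T using concatRec with
  | h0 a =>
    intro k
    rw [phi_nil]
    show (if lastSpine (node a []) = k then 1 else 0)
        + sS (fun t => t.children.dropLast.countP (fun c => lastSpine c == k)) (node a []) = _
    rw [lastSpine_nil, sS_node, cE_node]
    simp only [children_node, List.dropLast_nil, List.countP_nil, List.map_nil,
      List.sum_nil, List.length_nil, ite_beq]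
    simp only [beq_iff_eq]
    split_ifs <;> omega
  | h1 a ds r ihd ihr =>
    intro k
    set g := fun t : LTree => t.children.dropLast.countP (fun c => lastSpine c == k) with hg
    set f := fun t : LTree => t.children.length == k with hf
    have e1 : spineCount k (node a (ds ++ [r])) + (if lastSpine r = k then 1 else 0)
        = (if 1 + lastSpine r = k then 1 else 0)
          + (ds.map (spineCount k)).sum + spineCount k r := by
      show (if lastSpine (node a (ds ++ [r])) = k then 1 else 0) + sS g (node a (ds ++ [r]))
          + (if lastSpine r = k then 1 else 0) = _ + _ + ((if lastSpine r = k then 1 else 0) + sS g r)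
      rw [lastSpine_concat, sS_node]
      have hroot : g (node a (ds ++ [r])) = (ds.map (fun d => if lastSpine d = k then 1 else 0)).sum := by
        rw [hg]
        simp only [children_node, List.dropLast_concat]
        rw [countP_sum]
        congr 1
        apply List.map_congr_left
        intro d _
        rw [ite_beq]
      rw [hroot]
      have hds : (ds.map (spineCount k)).sum
          = (ds.map (fun d => if lastSpine d = k then 1 else 0)).sum + (ds.map (sS g)).sum := by
        rw [← sum_map_add]
        rfl
      simp only [List.map_append, List.sum_append, List.map_cons, List.sum_cons,
        List.map_nil, List.sum_nil, hds]
      omega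
    have e2 : cE f (phi (node a (ds ++ [r]))) + (if lastSpine r = k then 1 else 0)
        = (if 1 + lastSpine r = k then 1 else 0)
          + (ds.map (fun d => cE f (phi d))).sum + cE f (phi r) := by
      rw [phi_concat, cE_node]
      have hroot : f (node a ((phi r).children ++ [node (phi r).label (ds.map phi)]))
          = ((1 + lastSpine r : ℕ) == k) := by
        rw [hf]
        simp only [children_node, List.length_append, List.length_cons, List.length_nil,
          children_phi_len]
        congr 1
        omega
      have hr : cE f (phi r) = (if lastSpine r = k then 1 else 0)
          + ((phi r).children.map (cO f)).sum := by
        conv_lhs => rw [← eta (phi r)]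
        rw [cE_node]
        have hcond : f (node (phi r).label (phi r).children) = ((lastSpine r : ℕ) == k) := by
          rw [hf]
          simp only [children_node]
          rw [children_phi_len]
        rw [hcond, ite_beq]
      have hX : cO f (node (phi r).label (ds.map phi))
          = (ds.map (fun d => cE f (phi d))).sum := by
        rw [cO_node, List.map_map]
        rfl
      rw [hroot]
      simp only [List.map_append, List.sum_append, List.map_cons, List.sum_cons,
        List.map_nil, List.sum_nil, hX, hr, ite_beq]
      omega
    have hsum : (ds.map (spineCount k)).sum = (ds.map (fun d => cE f (phi d))).sum := by
      apply congrArg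
      apply List.map_congr_left
      intro d hd
      exact ihd d hd k
    rw [hsum, ihr k] at e1
    simp only [← hf] at e1 e2
    omega

theorem stat_yst (T : LTree) :
    cS (fun t => match t.children.getLast? with
      | some c => c.isLeaf
      | none => false) T = cE (fun t => !t.isLeaf) (phi T) := by
  induction T using concatRec with
  | h0 a => rw [phi_nil, cS_node, cE_node]; simp
  | h1 a ds r ihd ihr =>
    rw [cS_node, phi_concat, cE_node]
    have hroot1 : (match (node a (ds ++ [r]) : LTree).children.getLast? with
        | some c => c.isLeaf | none => false) = r.isLeaf := by
      simp only [children_node, List.getLast?_concat]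
    have hroot2 : (!(node a ((phi r).children ++ [node (phi r).label (ds.map phi)]) : LTree).isLeaf) = true := by
      simp [isEmpty_concat]
    have hr : cE (fun t => !t.isLeaf) (phi r)
        = (if r.isLeaf then 0 else 1) + ((phi r).children.map (cO (fun t => !t.isLeaf))).sum := by
      conv_lhs => rw [← eta (phi r)]
      rw [cE_node]
      congr 1
      rw [show (node (phi r).label (phi r).children) = phi r from eta (phi r), isLeaf_phi]
      cases r.isLeaf <;> simp
    have hX : cO (fun t => !t.isLeaf) (node (phi r).label (ds.map phi))
        = (ds.map (fun d => cE (fun t => !t.isLeaf) (phi d))).sum := by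
      rw [cO_node, List.map_map]
      rfl
    rw [hroot1, hroot2]
    simp only [List.map_append, List.sum_append, List.map_cons, List.sum_cons,
      List.map_nil, List.sum_nil, hX]
    rw [List.map_congr_left (fun d hd => ihd d hd)]
    rw [ihr, hr]
    cases r.isLeaf <;> simp <;> omega

def oldP : LTree → Bool := fun t => match t.children with
  | c :: _ => c.isLeaf
  | [] => false

@[simp] theorem oldP_nil (a : ℕ) : oldP (node a []) = false := rfl
@[simp] theorem oldP_cons (a : ℕ) (c : LTree) (l : List LTree) :
    oldP (node a (c :: l)) = c.isLeaf := rfl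

theorem stat_old (T : LTree) : cS oldP T = cS oldP (phi T) := by
  induction T using concatRec with
  | h0 a => rw [phi_nil]
  | h1 a ds r ihd ihr =>
    rw [cS_node, phi_concat, cS_node]
    have hr : cS oldP (phi r) = (if oldP (phi r) then 1 else 0)
        + ((phi r).children.map (cS oldP)).sum := by
      conv_lhs => rw [← eta (phi r)]
      rw [cS_node]
      rw [show (node (phi r).label (phi r).children) = phi r from eta (phi r)]
    have hX : cS oldP (node (phi r).label (ds.map phi))
        = (if oldP (node (phi r).label (ds.map phi)) then 1 else 0)
          + (ds.map (fun d => cS oldP (phi d))).sum := by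
      rw [cS_node, List.map_map]
      rfl
    have key : (if oldP (node a (ds ++ [r])) then 1 else 0) + (if oldP (phi r) then 1 else 0)
        = (if oldP (node a ((phi r).children ++ [node (phi r).label (ds.map phi)])) then 1 else 0)
          + (if oldP (node (phi r).label (ds.map phi)) then 1 else 0) := by
      have hleaf : r.isLeaf = (phi r).isLeaf := (isLeaf_phi r).symm
      cases hpr : phi r with
      | node b os =>
        rw [hpr] at hleaf
        cases ds with
        | nil =>
          cases os with
          | nil =>
            have h9 : r.isLeaf = true := by rw [hleaf]; rfl
            simp [h9, hpr]
          | cons o os0 =>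
            have h9 : r.isLeaf = false := by rw [hleaf]; rfl
            simp [h9, hpr]
            by_cases ho : o.isLeaf = true <;> simp [ho]
        | cons e ds0 =>
          cases os with
          | nil =>
            simp only [hpr, children_node, label_node, List.map_cons, List.cons_append,
              List.nil_append, oldP_cons, oldP_nil, isLeaf_phi, isLeaf_node,
              List.isEmpty_cons]
            by_cases he : e.isLeaf = true <;> simp [he] <;> omega
          | cons o os0 =>
            simp only [hpr, children_node, label_node, List.map_cons, List.cons_append,
              List.nil_append, oldP_cons, oldP_nil, isLeaf_phi, isLeaf_node,
              List.isEmpty_cons]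
            by_cases he : e.isLeaf = true <;> by_cases ho : o.isLeaf = true <;> simp [he, ho] <;> omega
    simp only [List.map_append, List.sum_append, List.map_cons, List.sum_cons,
      List.map_nil, List.sum_nil]
    rw [hX]
    rw [List.map_congr_left (fun d hd => ihd d hd)]
    rw [ihr, hr]
    omega

theorem coe_flatten (L : List (List ℕ)) :
    Multiset.ofList L.flatten = (L.map Multiset.ofList).sum := by
  induction L with
  | nil => rfl
  | cons h t ih => simpa using congrArg (fun s => (h : Multiset ℕ) + s) ih

theorem labels_node (a : ℕ) (cs : List LTree) :
    labels (node a cs) = a ::ₘ (cs.map labels).sum := by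
  show (((node a cs).subtrees.map label : List ℕ) : Multiset ℕ) = _
  rw [subtrees_node]
  simp only [List.map_cons, label_node, List.map_flatten, List.map_map]
  have h1 : ((a :: (cs.map (List.map label ∘ subtrees)).flatten : List ℕ) : Multiset ℕ)
      = a ::ₘ (((cs.map (List.map label ∘ subtrees)).flatten : List ℕ) : Multiset ℕ) := rfl
  rw [h1]
  congr 1
  rw [coe_flatten, List.map_map]
  rfl

theorem label_psi (T : LTree) : (psi T).label = T.label := by
  cases T with
  | node a cs =>
    rcases cs.eq_nil_or_concat with rfl | ⟨os, X, rfl⟩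
    · rw [psi_nil]
    · rw [List.concat_eq_append]
      cases X with
      | node b ds => rw [psi_concat]; rfl

theorem labels_phi (T : LTree) : labels (phi T) = labels T := by
  induction T using concatRec with
  | h0 a => rw [phi_nil]
  | h1 a ds r ihd ihr =>
    rw [phi_concat, labels_node, labels_node]
    have hr : labels (phi r) = (phi r).label ::ₘ ((phi r).children.map labels).sum := by
      conv_lhs => rw [← eta (phi r)]
      rw [labels_node]
    have hX : labels (node (phi r).label (ds.map phi))
        = (phi r).label ::ₘ (ds.map labels).sum := by
      rw [labels_node, List.map_map]
      congr 1
      congr 1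
      exact List.map_congr_left (fun d hd => ihd d hd)
    simp only [List.map_append, List.sum_append, List.map_cons, List.sum_cons,
      List.map_nil, List.sum_nil, hX]
    rw [← ihr, hr]
    simp only [← Multiset.singleton_add]
    abel

theorem labels_psi (S : LTree) : labels (psi S) = labels S := by
  conv_rhs => rw [← phi_psi S]
  rw [labels_phi]

/-- The local order conditions of a weakly increasing tree. -/
def Good (T : LTree) : Prop :=
  ∀ t ∈ T.subtrees, (∀ c ∈ t.children, t.label ≤ c.label) ∧
    List.Chain' (fun a b => b ≤ a) (t.children.map label)

theorem mem_subtrees_node {t : LTree} {a : ℕ} {cs : List LTree} :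
    t ∈ subtrees (node a cs) ↔ t = node a cs ∨ ∃ c ∈ cs, t ∈ subtrees c := by
  rw [subtrees_node]
  simp [List.mem_flatten]

theorem self_mem_subtrees (T : LTree) : T ∈ subtrees T := by
  cases T with
  | node a cs => exact mem_subtrees_node.2 (Or.inl rfl)

theorem mem_subtrees_trans {t c T : LTree} (hc : c ∈ T.children) (ht : t ∈ subtrees c) :
    t ∈ subtrees T := by
  cases T with
  | node a cs => exact mem_subtrees_node.2 (Or.inr ⟨c, hc, ht⟩)

theorem Good.child {a : ℕ} {cs : List LTree} (h : Good (node a cs)) {c : LTree}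
    (hc : c ∈ cs) : Good c :=
  fun t ht => h t (mem_subtrees_node.2 (Or.inr ⟨c, hc, ht⟩))

instance : IsTrans ℕ (fun a b => b ≤ a) := ⟨fun _ _ _ h1 h2 => le_trans h2 h1⟩

theorem good_phi : ∀ T, Good T → Good (phi T) := by
  intro T
  induction T using concatRec with
  | h0 a => intro h; rw [phi_nil]; exact h
  | h1 a ds r ihd ihr =>
    intro hG
    rw [phi_concat]
    have hGr : Good (phi r) := ihr (hG.child (by simp))
    have hGd : ∀ d ∈ ds, Good (phi d) := fun d hd =>
      ihd d hd (hG.child (List.mem_append_left _ hd))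
    obtain ⟨hle, hch⟩ := hG (node a (ds ++ [r])) (self_mem_subtrees _)
    simp only [children_node, label_node] at hle hch
    have hbr : a ≤ r.label := hle r (by simp)
    obtain ⟨hleR, hchR⟩ := hGr (phi r) (self_mem_subtrees _)
    have hpw : List.Pairwise (fun x y : LTree => y.label ≤ x.label) (ds ++ [r]) := by
      have := List.isChain_iff_pairwise.1 hch
      rwa [List.pairwise_map] at this
    have hdr : ∀ d ∈ ds, r.label ≤ d.label := by
      intro d hd
      have := (List.pairwise_append.1 hpw).2.2
      exact this d hd r (by simp)
    intro t ht
    rcases mem_subtrees_node.1 ht with rfl | ⟨c, hc, htc⟩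
    · constructor
      · intro c hc
        simp only [children_node] at hc
        rcases List.mem_append.1 hc with hco | hcX
        · refine le_trans hbr ?_
          have := hleR c hco
          rwa [label_phi] at this
        · simp only [List.mem_singleton] at hcX
          subst hcX
          simp only [label_node]
          rw [label_phi]
          exact hbr
      · simp only [children_node, List.map_append, List.map_cons, List.map_nil, label_node]
        apply List.isChain_append.2
        refine ⟨hchR, List.isChain_singleton _, ?_⟩
        intro x hx y hy
        simp only [List.head?_cons, Option.mem_some_iff] at hy
        subst hy
        have hxmem : x ∈ (phi r).children.map label := List.mem_of_getLast? hx
        obtain ⟨o, ho, rfl⟩ := List.mem_map.1 hxmem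
        exact hleR o ho
    · rcases List.mem_append.1 hc with hco | hcX
      · exact hGr t (mem_subtrees_trans hco htc)
      · simp only [List.mem_singleton] at hcX
        subst hcX
        rcases mem_subtrees_node.1 htc with rfl | ⟨d', hd', htd⟩
        · constructor
          · intro c hc
            simp only [children_node] at hc
            obtain ⟨d, hd, rfl⟩ := List.mem_map.1 hc
            simp only [label_node]
            rw [label_phi, label_phi]
            exact hdr d hd
          · simp only [children_node, List.map_map]
            have heq : ds.map (label ∘ phi) = ds.map label :=
              List.map_congr_left (fun d _ => label_phi d)
            rw [heq]
            rw [List.map_append] at hch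
            exact (List.isChain_append.1 hch).1
        · obtain ⟨d, hd, rfl⟩ := List.mem_map.1 hd'
          exact hGd d hd t htd

theorem good_psi : ∀ S, Good S → Good (psi S) := by
  intro S
  induction S using sizeRec with
  | h S ih =>
    intro hG
    cases S with
    | node a cs =>
      rcases cs.eq_nil_or_concat with rfl | ⟨os, X, rfl⟩
      · rw [psi_nil]; exact hG
      · simp only [List.concat_eq_append] at ih hG ⊢
        cases X with
        | node b ds =>
          rw [psi_concat]
          obtain ⟨hle, hch⟩ := hG (node a (os ++ [node b ds])) (self_mem_subtrees _)
          simp only [children_node, label_node] at hle hch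
          obtain ⟨hleX, hchX⟩ := hG (node b ds)
            (mem_subtrees_node.2 (Or.inr ⟨node b ds, by simp, self_mem_subtrees _⟩))
          simp only [children_node, label_node] at hleX hchX
          have hab : a ≤ b := by
            have := hle (node b ds) (by simp)
            simpa using this
          have hpw : List.Pairwise (fun x y : LTree => y.label ≤ x.label) (os ++ [node b ds]) := by
            have := List.isChain_iff_pairwise.1 hch
            rwa [List.pairwise_map] at this
          have hbo : ∀ o ∈ os, b ≤ o.label := by
            intro o ho
            have := (List.pairwise_append.1 hpw).2.2 o ho (node b ds) (by simp)
            simpa using this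
          have hGbos : Good (node b os) := by
            intro t ht
            rcases mem_subtrees_node.1 ht with rfl | ⟨c, hc, htc⟩
            · constructor
              · simpa using hbo
              · simp only [children_node]
                rw [List.map_append] at hch
                exact (List.isChain_append.1 hch).1
            · refine hG t (mem_subtrees_node.2 (Or.inr ⟨c, ?_, htc⟩))
              exact List.mem_append_left _ hc
          have h2 := list_sizeOf_append os [node b ds]
          have h3 : sizeOf [node b ds] = 1 + sizeOf (node b ds) + 1 := by
            simp only [List.cons.sizeOf_spec, List.nil.sizeOf_spec]
          have hsz : sizeOf (node b os) < sizeOf (node a (os ++ [node b ds])) := by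
            simp only [LTree.node.sizeOf_spec, sizeOf_nat] at *
            omega
          have hY : Good (psi (node b os)) := ih (node b os) hsz hGbos
          have hGd : ∀ d ∈ ds, Good (psi d) := by
            intro d hd
            have hszd : sizeOf d < sizeOf (node a (os ++ [node b ds])) := by
              have hmem := List.sizeOf_lt_of_mem hd
              simp only [LTree.node.sizeOf_spec, sizeOf_nat] at *
              omega
            refine ih d hszd ?_
            have hXG : Good (node b ds) := hG.child (by simp)
            exact hXG.child hd
          intro t ht
          rcases mem_subtrees_node.1 ht with rfl | ⟨c, hc, htc⟩
          · constructor
            · intro c hc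
              simp only [children_node] at hc
              rcases List.mem_append.1 hc with hcd | hcY
              · obtain ⟨d, hd, rfl⟩ := List.mem_map.1 hcd
                rw [label_psi]
                exact le_trans hab (hleX d hd)
              · simp only [List.mem_singleton] at hcY
                subst hcY
                rw [label_psi]
                simpa using hab
            · simp only [children_node, List.map_append, List.map_map, List.map_cons,
                List.map_nil]
              have heq : ds.map (label ∘ psi) = ds.map label :=
                List.map_congr_left (fun d _ => label_psi d)
              rw [heq]
              apply List.isChain_append.2
              refine ⟨hchX, List.isChain_singleton _, ?_⟩
              intro x hx y hy
              simp only [List.head?_cons, Option.mem_some_iff] at hy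
              subst hy
              rw [label_psi]
              have hxmem : x ∈ ds.map label := List.mem_of_getLast? hx
              obtain ⟨d, hd, rfl⟩ := List.mem_map.1 hxmem
              simpa using hleX d hd
          · rcases List.mem_append.1 hc with hcd | hcY
            · obtain ⟨d, hd, rfl⟩ := List.mem_map.1 hcd
              exact hGd d hd t htc
            · simp only [List.mem_singleton] at hcY
              subst hcY
              exact hY t htc

theorem wit_phi {M : Multiset ℕ} {T : LTree} (h : IsWIT M T) : IsWIT M (phi T) := by
  obtain ⟨h1, h2, h3⟩ := h
  refine ⟨?_, ?_, ?_⟩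
  · rw [label_phi]; exact h1
  · rw [labels_phi]; exact h2
  · exact good_phi T h3

theorem wit_psi {M : Multiset ℕ} {S : LTree} (h : IsWIT M S) : IsWIT M (psi S) := by
  obtain ⟨h1, h2, h3⟩ := h
  refine ⟨?_, ?_, ?_⟩
  · rw [label_psi]; exact h1
  · rw [labels_psi]; exact h2
  · exact good_psi S h3

theorem oleaf_eq (T : LTree) : oleaf T = cS oldP T := by
  show sleaf T + eleaf T = _
  unfold sleaf eleaf cS
  rw [countP_sum, countP_sum, countP_sum, ← sum_map_add]
  congr 1
  apply List.map_congr_left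
  intro t _
  cases t with
  | node a l =>
    rcases l with _ | ⟨c, _ | ⟨c2, l2⟩⟩ <;> simp [oldP] <;> by_cases hc : c.isLeaf = true <;> simp [hc]

end LTree

/-- **Theorem (Deutsch's bijection on weakly increasing trees).**  There is a bijection
`T ↦ T̂` of `𝒯_M` onto itself such that: (a) the number of nodes of degree `q ≥ 1` in `T`
equals the number of nodes of degree `q - 1` at odd levels of `T̂`; (b) the number of
leaves of `T` equals the number of nodes at even levels of `T̂`; (c) for every `k ≥ 1`
the number of youngest leaves of `T` whose path towards the root reaches the first
non-youngest node after exactly `k` edges equals the number of internal nodes of degree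
`k` at even levels of `T̂`, and in particular `ystleaf T = elint T̂`; (d) `oleaf T = oleaf T̂`. -/
theorem deutsch_bijection_statistics
    (M : Multiset ℕ) (hM : ∀ x ∈ M, 0 < x) :
    ∃ Φ : {T : LTree // LTree.IsWIT M T} → {T : LTree // LTree.IsWIT M T},
      Function.Bijective Φ ∧
        ∀ T : {T : LTree // LTree.IsWIT M T},
          (∀ q, 1 ≤ q → LTree.degCount q T.1 = LTree.oddLevelDegCount (q - 1) (Φ T).1) ∧
          LTree.leafCount T.1 = LTree.evenLevelCount (Φ T).1 ∧
          (∀ k, 1 ≤ k → LTree.spineCount k T.1 = LTree.evenLevelDegCount k (Φ T).1) ∧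
          LTree.ystleaf T.1 = LTree.elint (Φ T).1 ∧
          LTree.oleaf T.1 = LTree.oleaf (Φ T).1 := by
    classical
  refine ⟨fun T => ⟨LTree.phi T.1, LTree.wit_phi T.2⟩, ?_, ?_⟩
  · apply Function.bijective_iff_has_inverse.2
    refine ⟨fun S => ⟨LTree.psi S.1, LTree.wit_psi S.2⟩, ?_, ?_⟩
    · intro T; exact Subtype.ext (LTree.psi_phi T.1)
    · intro S; exact Subtype.ext (LTree.phi_psi S.1)
  · intro T
    refine ⟨?_, ?_, ?_, ?_, ?_⟩
    · intro q hq; exact LTree.stat_deg T.1 q hq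
    · show LTree.cS LTree.isLeaf T.1 = _
      rw [LTree.stat_leaf T.1]
      unfold LTree.cE LTree.evenLevelCount
      apply List.countP_congr
      intro p _
      simp
    · intro k _; exact LTree.stat_spine T.1 k
    · exact LTree.stat_yst T.1
    · rw [LTree.oleaf_eq, LTree.oleaf_eq]
      exact LTree.stat_old T.1
end

section
/- For every n ≥ 2, there exists a bijection λ from S_n onto the set of increasing binary trees on [n] such that for every π ∈ S_n and every i ∈ [n]: π_i is a peak of type 1 of π if and only if the node labeled π_i is a left leaf of λ(π); π_i is a peak of type 2 of π if and only if the node labeled π_i is a right leaf of λ(π); π_i is a double descent of π if and only if the node labeled π_i has only a left child in λ(π); and π_i is a double ascent of π if and only if the node labeled π_i has only a right child in λ(π). -/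
/-- Labeled binary trees with labels in `ℕ`. -/
inductive LBT : Type where
  | nil : LBT
  | node : ℕ → LBT → LBT → LBT

namespace LBT

/-- The list of all subtrees rooted at actual nodes. -/
def subtrees : LBT → List LBT
  | nil => []
  | node a l r => node a l r :: (l.subtrees ++ r.subtrees)

/-- The label of the root (`0` for the empty tree). -/
def labelOf : LBT → ℕ
  | nil => 0
  | node a _ _ => a

/-- The left subtree. -/
def left : LBT → LBT
  | nil => nil
  | node _ l _ => l

/-- The right subtree. -/
def right : LBT → LBT
  | nil => nil
  | node _ _ r => r

/-- Whether the tree is empty. -/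
def isNil : LBT → Bool
  | nil => true
  | node _ _ _ => false

/-- Whether the tree is a single node (a leaf). -/
def isLeafB : LBT → Bool
  | node _ nil nil => true
  | _ => false

/-- The multiset of labels of all nodes. -/
def labels (B : LBT) : Multiset ℕ := (B.subtrees.map labelOf : List ℕ)

/-- `B` is a weakly increasing binary tree on the multiset `M`: the labels form the
multiset `M` and labels weakly increase along every path from the root. -/
def IsWIBT (M : Multiset ℕ) (B : LBT) : Prop :=
  B.labels = M ∧ ∀ t ∈ B.subtrees,
    (t.left ≠ nil → t.labelOf ≤ t.left.labelOf) ∧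
    (t.right ≠ nil → t.labelOf ≤ t.right.labelOf)

/-- `B` is an increasing binary tree on `[n]`: the labels form the set `{1, …, n}`
and labels strictly increase along every path from the root. -/
def IsIncBT (n : ℕ) (B : LBT) : Prop :=
  B.labels = Multiset.map (· + 1) (Multiset.range n) ∧ ∀ t ∈ B.subtrees,
    (t.left ≠ nil → t.labelOf < t.left.labelOf) ∧
    (t.right ≠ nil → t.labelOf < t.right.labelOf)

/-- The node labeled `x` is a left leaf of `B`. -/
def HasLeftLeaf (B : LBT) (x : ℕ) : Prop := ∃ t ∈ B.subtrees, t.left = node x nil nil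

/-- The node labeled `x` is a right leaf of `B`. -/
def HasRightLeaf (B : LBT) (x : ℕ) : Prop := ∃ t ∈ B.subtrees, t.right = node x nil nil

/-- The node labeled `x` has only a left child in `B`. -/
def HasOnlyLeftChild (B : LBT) (x : ℕ) : Prop :=
  ∃ t ∈ B.subtrees, t.labelOf = x ∧ t.left ≠ nil ∧ t.right = nil ∧ t ≠ nil

/-- The node labeled `x` has only a right child in `B`. -/
def HasOnlyRightChild (B : LBT) (x : ℕ) : Prop :=
  ∃ t ∈ B.subtrees, t.labelOf = x ∧ t.left = nil ∧ t.right ≠ nil ∧ t ≠ nil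

end LBT

namespace PermWord

/-- The word of a permutation `π` of `[n]`, with the boundary convention
`π₀ = π_{n+1} = 0`: `wordOf n π i = π_i` for `1 ≤ i ≤ n` and `0` otherwise. -/
def wordOf (n : ℕ) (π : Equiv.Perm (Fin n)) (i : ℕ) : ℕ :=
  if h : 1 ≤ i ∧ i ≤ n then ((π ⟨i - 1, by omega⟩ : Fin n) : ℕ) + 1 else 0

/-- `i` is a peak of `π`: `π_{i-1} < π_i > π_{i+1}`. -/
def IsPeak (n : ℕ) (π : Equiv.Perm (Fin n)) (i : ℕ) : Prop :=
  wordOf n π (i - 1) < wordOf n π i ∧ wordOf n π (i + 1) < wordOf n π i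

instance (n : ℕ) (π : Equiv.Perm (Fin n)) (i : ℕ) : Decidable (IsPeak n π i) := by
  unfold IsPeak; infer_instance

/-- `i` is a peak of type 1 of `π`: a peak with `π_{i-1} ≤ π_{i+1}`. -/
def IsPeak1 (n : ℕ) (π : Equiv.Perm (Fin n)) (i : ℕ) : Prop :=
  IsPeak n π i ∧ wordOf n π (i - 1) ≤ wordOf n π (i + 1)

instance (n : ℕ) (π : Equiv.Perm (Fin n)) (i : ℕ) : Decidable (IsPeak1 n π i) := by
  unfold IsPeak1; infer_instance

/-- `i` is a peak of type 2 of `π`: a peak with `π_{i-1} > π_{i+1}`. -/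
def IsPeak2 (n : ℕ) (π : Equiv.Perm (Fin n)) (i : ℕ) : Prop :=
  IsPeak n π i ∧ wordOf n π (i + 1) < wordOf n π (i - 1)

instance (n : ℕ) (π : Equiv.Perm (Fin n)) (i : ℕ) : Decidable (IsPeak2 n π i) := by
  unfold IsPeak2; infer_instance

/-- `i` is a double descent of `π`: `π_{i-1} > π_i > π_{i+1}`. -/
def IsDD (n : ℕ) (π : Equiv.Perm (Fin n)) (i : ℕ) : Prop :=
  wordOf n π i < wordOf n π (i - 1) ∧ wordOf n π (i + 1) < wordOf n π i

instance (n : ℕ) (π : Equiv.Perm (Fin n)) (i : ℕ) : Decidable (IsDD n π i) := by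
  unfold IsDD; infer_instance

/-- `i` is a double ascent of `π`: `π_{i-1} < π_i < π_{i+1}`. -/
def IsDA (n : ℕ) (π : Equiv.Perm (Fin n)) (i : ℕ) : Prop :=
  wordOf n π (i - 1) < wordOf n π i ∧ wordOf n π i < wordOf n π (i + 1)

instance (n : ℕ) (π : Equiv.Perm (Fin n)) (i : ℕ) : Decidable (IsDA n π i) := by
  unfold IsDA; infer_instance

/-- The number of peaks of `π`. -/
def pk (n : ℕ) (π : Equiv.Perm (Fin n)) : ℕ :=
  ((Finset.Icc 1 n).filter (IsPeak n π)).card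

/-- The number of type-1 peaks of `π`. -/
def pk1 (n : ℕ) (π : Equiv.Perm (Fin n)) : ℕ :=
  ((Finset.Icc 1 n).filter (IsPeak1 n π)).card

/-- The number of type-2 peaks of `π`. -/
def pk2 (n : ℕ) (π : Equiv.Perm (Fin n)) : ℕ :=
  ((Finset.Icc 1 n).filter (IsPeak2 n π)).card

/-- The number of double descents of `π`. -/
def dd (n : ℕ) (π : Equiv.Perm (Fin n)) : ℕ :=
  ((Finset.Icc 1 n).filter (IsDD n π)).card

/-- The number of double ascents of `π`. -/
def da (n : ℕ) (π : Equiv.Perm (Fin n)) : ℕ :=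
  ((Finset.Icc 1 n).filter (IsDA n π)).card

end PermWord

namespace LBT

def inorder : LBT → List ℕ
  | nil => []
  | node a l r => inorder l ++ a :: inorder r

lemma natMin?_mem {l : List ℕ} {a : ℕ} (h : l.min? = some a) : a ∈ l :=
  List.min?_mem h

lemma natMin?_le {l : List ℕ} {a b : ℕ} (h : l.min? = some a) (hb : b ∈ l) : a ≤ b :=
  (List.le_min?_iff h).1 le_rfl b hb

lemma natMin?_some {l : List ℕ} (h : l ≠ []) : ∃ m, l.min? = some m := by
  cases hm : l.min? with
  | none => exact absurd (List.min?_eq_none_iff.1 hm) h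
  | some m => exact ⟨m, rfl⟩

def build (l : List ℕ) : LBT :=
  match h : l.min? with
  | none => nil
  | some m =>
    have hm : m ∈ l := natMin?_mem h
    have hi : l.idxOf m < l.length := List.idxOf_lt_length_iff.2 hm
    node m (build (l.take (l.idxOf m))) (build (l.drop (l.idxOf m + 1)))
termination_by l.length
decreasing_by
  · simp only [List.length_take]; omega
  · simp only [List.length_drop]; omega

lemma build_nil : build [] = nil := by rw [build]; rfl

lemma build_eq_node {l : List ℕ} {m : ℕ} (h : l.min? = some m) :
    build l = node m (build (l.take (l.idxOf m))) (build (l.drop (l.idxOf m + 1))) := by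
  conv_lhs => rw [build]
  split
  · simp_all
  · rename_i m' h'; rw [h] at h'; cases h'; rfl

end LBT

namespace LBT

lemma nodup_middle {s t : List ℕ} {x : ℕ} (h : (s ++ x :: t).Nodup) :
    x ∉ s ∧ x ∉ t ∧ s.Nodup ∧ t.Nodup := by
  rw [List.nodup_append] at h
  obtain ⟨hs, ht, hd⟩ := h
  rw [List.nodup_cons] at ht
  exact ⟨fun hx => hd x hx x (by simp) rfl, ht.1, hs, ht.2⟩

lemma decomp {l : List ℕ} {m : ℕ} (hn : l.Nodup) (h : l.min? = some m) :
    ∃ u v, l = u ++ m :: v ∧ build l = node m (build u) (build v) ∧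
      (∀ x ∈ u, m < x) ∧ (∀ x ∈ v, m < x) := by
  have hm := natMin?_mem h
  have hi : l.idxOf m < l.length := List.idxOf_lt_length_iff.2 hm
  have heq : l = l.take (l.idxOf m) ++ m :: l.drop (l.idxOf m + 1) := by
    conv_lhs => rw [← List.take_append_drop (l.idxOf m) l]
    rw [List.drop_eq_getElem_cons hi, List.getElem_idxOf hi]
  refine ⟨_, _, heq, build_eq_node h, ?_, ?_⟩
  · intro x hx
    have hxl : x ∈ l := List.take_subset _ _ hx
    have hne : x ≠ m := by
      rintro rfl
      exact (nodup_middle (heq ▸ hn)).1 hx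
    exact lt_of_le_of_ne (natMin?_le h hxl) (Ne.symm hne)
  · intro x hx
    have hxl : x ∈ l := List.drop_subset _ _ hx
    have hne : x ≠ m := by
      rintro rfl
      exact (nodup_middle (heq ▸ hn)).2.1 hx
    exact lt_of_le_of_ne (natMin?_le h hxl) (Ne.symm hne)

lemma inorder_build_aux : ∀ (N : ℕ) (l : List ℕ), l.length ≤ N → inorder (build l) = l := by
  intro N
  induction N with
  | zero =>
    intro l hl
    have : l = [] := List.length_eq_zero_iff.1 (Nat.le_zero.1 hl)
    subst this; rw [build_nil]; rfl
  | succ N ih =>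
    intro l hl
    rcases eq_or_ne l [] with rfl | hne
    · rw [build_nil]; rfl
    obtain ⟨m, h⟩ := natMin?_some hne
    have hm := natMin?_mem h
    have hi : l.idxOf m < l.length := List.idxOf_lt_length_iff.2 hm
    have heq : l = l.take (l.idxOf m) ++ m :: l.drop (l.idxOf m + 1) := by
      conv_lhs => rw [← List.take_append_drop (l.idxOf m) l]
      rw [List.drop_eq_getElem_cons hi, List.getElem_idxOf hi]
    rw [build_eq_node h]
    show inorder (build _) ++ m :: inorder (build _) = l
    rw [ih _ (by simp only [List.length_take]; omega),
        ih _ (by simp only [List.length_drop]; omega)]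
    exact heq.symm

lemma inorder_build (l : List ℕ) : inorder (build l) = l := inorder_build_aux l.length l le_rfl

lemma build_injective : Function.Injective build := fun a b h => by
  rw [← inorder_build a, ← inorder_build b, h]

lemma build_eq_nil_iff {l : List ℕ} : build l = nil ↔ l = [] := by
  constructor
  · intro h
    have := congrArg inorder h
    rwa [inorder_build] at this
  · rintro rfl; exact build_nil

lemma build_eq_single_iff {l : List ℕ} {x : ℕ} : build l = node x nil nil ↔ l = [x] := by
  constructor
  · intro h
    have := congrArg inorder h
    rwa [inorder_build] at this
  · rintro rfl
    have h : [x].min? = some x := rfl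
    rw [build_eq_node h]
    simp [List.idxOf_cons_self, build_nil]

lemma labels_eq_inorder : ∀ B : LBT, labels B = ↑(inorder B) := by
  intro B
  induction B with
  | nil => rfl
  | node a L R ihL ihR =>
    show labels (node a L R) = _
    rw [labels, subtrees]
    show ((node a L R :: (L.subtrees ++ R.subtrees)).map labelOf : Multiset ℕ) = _
    rw [List.map_cons, List.map_append]
    show (labelOf (node a L R) ::ₘ (labels L + labels R) : Multiset ℕ) = _
    rw [ihL, ihR, Multiset.coe_add, Multiset.cons_coe]
    show _ = (↑(inorder L ++ labelOf (node a L R) :: inorder R) : Multiset ℕ)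
    exact Multiset.coe_eq_coe.2 List.perm_middle.symm

end LBT

namespace LBT

lemma mem_labels_iff {B : LBT} {x : ℕ} : x ∈ labels B ↔ x ∈ inorder B := by
  rw [labels_eq_inorder, Multiset.mem_coe]

lemma labelOf_mem_inorder {B t : LBT} (h : t ∈ B.subtrees) : t.labelOf ∈ inorder B := by
  rw [← mem_labels_iff]
  exact Multiset.mem_coe.2 (List.mem_map_of_mem (f := labelOf) h)

lemma self_mem_subtrees {B : LBT} (h : B ≠ nil) : B ∈ B.subtrees := by
  cases B with
  | nil => exact absurd rfl h
  | node a L R => simp [subtrees]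

lemma left_mem_subtrees {B : LBT} : ∀ {t : LBT}, t ∈ B.subtrees → t.left ≠ nil → t.left ∈ B.subtrees := by
  induction B with
  | nil => intro t ht; simp [subtrees] at ht
  | node a L R ihL ihR =>
    intro t ht hne
    rw [subtrees, List.mem_cons, List.mem_append] at ht
    rcases ht with rfl | ht | ht
    · show left (node a L R) ∈ _
      rw [subtrees, List.mem_cons, List.mem_append]
      exact Or.inr (Or.inl (self_mem_subtrees hne))
    · rw [subtrees, List.mem_cons, List.mem_append]
      exact Or.inr (Or.inl (ihL ht hne))
    · rw [subtrees, List.mem_cons, List.mem_append]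
      exact Or.inr (Or.inr (ihR ht hne))

lemma right_mem_subtrees {B : LBT} : ∀ {t : LBT}, t ∈ B.subtrees → t.right ≠ nil → t.right ∈ B.subtrees := by
  induction B with
  | nil => intro t ht; simp [subtrees] at ht
  | node a L R ihL ihR =>
    intro t ht hne
    rw [subtrees, List.mem_cons, List.mem_append] at ht
    rcases ht with rfl | ht | ht
    · show right (node a L R) ∈ _
      rw [subtrees, List.mem_cons, List.mem_append]
      exact Or.inr (Or.inr (self_mem_subtrees hne))
    · rw [subtrees, List.mem_cons, List.mem_append]
      exact Or.inr (Or.inl (ihL ht hne))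
    · rw [subtrees, List.mem_cons, List.mem_append]
      exact Or.inr (Or.inr (ihR ht hne))

/-- The node-level characterizations. -/
lemma hasLeftLeaf_nil {x : ℕ} : ¬ HasLeftLeaf nil x := by simp [HasLeftLeaf, subtrees]

lemma hasRightLeaf_nil {x : ℕ} : ¬ HasRightLeaf nil x := by simp [HasRightLeaf, subtrees]

lemma holc_nil {x : ℕ} : ¬ HasOnlyLeftChild nil x := by simp [HasOnlyLeftChild, subtrees]

lemma horc_nil {x : ℕ} : ¬ HasOnlyRightChild nil x := by simp [HasOnlyRightChild, subtrees]

lemma hasLeftLeaf_node {a : ℕ} {L R : LBT} {x : ℕ} :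
    HasLeftLeaf (node a L R) x ↔ L = node x nil nil ∨ HasLeftLeaf L x ∨ HasLeftLeaf R x := by
  simp only [HasLeftLeaf, subtrees, List.mem_cons, List.mem_append]
  constructor
  · rintro ⟨t, (rfl | ht | ht), hl⟩
    · exact Or.inl hl
    · exact Or.inr (Or.inl ⟨t, ht, hl⟩)
    · exact Or.inr (Or.inr ⟨t, ht, hl⟩)
  · rintro (h | ⟨t, ht, hl⟩ | ⟨t, ht, hl⟩)
    · exact ⟨node a L R, Or.inl rfl, h⟩
    · exact ⟨t, Or.inr (Or.inl ht), hl⟩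
    · exact ⟨t, Or.inr (Or.inr ht), hl⟩

lemma hasRightLeaf_node {a : ℕ} {L R : LBT} {x : ℕ} :
    HasRightLeaf (node a L R) x ↔ R = node x nil nil ∨ HasRightLeaf L x ∨ HasRightLeaf R x := by
  simp only [HasRightLeaf, subtrees, List.mem_cons, List.mem_append]
  constructor
  · rintro ⟨t, (rfl | ht | ht), hl⟩
    · exact Or.inl hl
    · exact Or.inr (Or.inl ⟨t, ht, hl⟩)
    · exact Or.inr (Or.inr ⟨t, ht, hl⟩)
  · rintro (h | ⟨t, ht, hl⟩ | ⟨t, ht, hl⟩)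
    · exact ⟨node a L R, Or.inl rfl, h⟩
    · exact ⟨t, Or.inr (Or.inl ht), hl⟩
    · exact ⟨t, Or.inr (Or.inr ht), hl⟩

lemma holc_node {a : ℕ} {L R : LBT} {x : ℕ} :
    HasOnlyLeftChild (node a L R) x ↔
      (a = x ∧ L ≠ nil ∧ R = nil) ∨ HasOnlyLeftChild L x ∨ HasOnlyLeftChild R x := by
  simp only [HasOnlyLeftChild, subtrees, List.mem_cons, List.mem_append]
  constructor
  · rintro ⟨t, (rfl | ht | ht), hl⟩
    · exact Or.inl ⟨hl.1, hl.2.1, hl.2.2.1⟩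
    · exact Or.inr (Or.inl ⟨t, ht, hl⟩)
    · exact Or.inr (Or.inr ⟨t, ht, hl⟩)
  · rintro (⟨h1, h2, h3⟩ | ⟨t, ht, hl⟩ | ⟨t, ht, hl⟩)
    · exact ⟨node a L R, Or.inl rfl, h1, h2, h3, by simp⟩
    · exact ⟨t, Or.inr (Or.inl ht), hl⟩
    · exact ⟨t, Or.inr (Or.inr ht), hl⟩

lemma horc_node {a : ℕ} {L R : LBT} {x : ℕ} :
    HasOnlyRightChild (node a L R) x ↔
      (a = x ∧ L = nil ∧ R ≠ nil) ∨ HasOnlyRightChild L x ∨ HasOnlyRightChild R x := by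
  simp only [HasOnlyRightChild, subtrees, List.mem_cons, List.mem_append]
  constructor
  · rintro ⟨t, (rfl | ht | ht), hl⟩
    · exact Or.inl ⟨hl.1, hl.2.1, hl.2.2.1⟩
    · exact Or.inr (Or.inl ⟨t, ht, hl⟩)
    · exact Or.inr (Or.inr ⟨t, ht, hl⟩)
  · rintro (⟨h1, h2, h3⟩ | ⟨t, ht, hl⟩ | ⟨t, ht, hl⟩)
    · exact ⟨node a L R, Or.inl rfl, h1, h2, h3, by simp⟩
    · exact ⟨t, Or.inr (Or.inl ht), hl⟩
    · exact ⟨t, Or.inr (Or.inr ht), hl⟩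

lemma hasLeftLeaf_mem {B : LBT} {x : ℕ} (h : HasLeftLeaf B x) : x ∈ inorder B := by
  obtain ⟨t, ht, hl⟩ := h
  have h2 : t.left ∈ B.subtrees := left_mem_subtrees ht (by rw [hl]; exact fun h => by cases h)
  have := labelOf_mem_inorder h2
  rwa [hl] at this

lemma hasRightLeaf_mem {B : LBT} {x : ℕ} (h : HasRightLeaf B x) : x ∈ inorder B := by
  obtain ⟨t, ht, hl⟩ := h
  have h2 : t.right ∈ B.subtrees := right_mem_subtrees ht (by rw [hl]; exact fun h => by cases h)
  have := labelOf_mem_inorder h2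
  rwa [hl] at this

lemma holc_mem {B : LBT} {x : ℕ} (h : HasOnlyLeftChild B x) : x ∈ inorder B := by
  obtain ⟨t, ht, hl, _⟩ := h
  exact hl ▸ labelOf_mem_inorder ht

lemma horc_mem {B : LBT} {x : ℕ} (h : HasOnlyRightChild B x) : x ∈ inorder B := by
  obtain ⟨t, ht, hl, _⟩ := h
  exact hl ▸ labelOf_mem_inorder ht

lemma labelOf_mem_inorder_self {B : LBT} (h : B ≠ nil) : B.labelOf ∈ inorder B :=
  labelOf_mem_inorder (self_mem_subtrees h)

end LBT

namespace LBT

lemma build_ne_nil {l : List ℕ} (h : l ≠ []) : build l ≠ nil :=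
  fun hb => h (build_eq_nil_iff.1 hb)

lemma mem_of_build_eq_single {l : List ℕ} {x : ℕ} (h : build l = node x nil nil) : x ∈ l := by
  rw [build_eq_single_iff] at h; simp [h]

/-- `build` of a nodup list is strictly increasing downwards. -/
lemma build_inc_aux : ∀ (N : ℕ) (l : List ℕ), l.length ≤ N → l.Nodup →
    ∀ t ∈ (build l).subtrees,
      (t.left ≠ nil → t.labelOf < t.left.labelOf) ∧
      (t.right ≠ nil → t.labelOf < t.right.labelOf) := by
  intro N
  induction N with
  | zero =>
    intro l hl _
    have : l = [] := List.length_eq_zero_iff.1 (Nat.le_zero.1 hl)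
    subst this; rw [build_nil]; intro t ht; simp [subtrees] at ht
  | succ N ih =>
    intro l hl hn
    rcases eq_or_ne l [] with rfl | hne
    · rw [build_nil]; intro t ht; simp [subtrees] at ht
    obtain ⟨m, h⟩ := natMin?_some hne
    obtain ⟨u, v, heq, hbuild, hu, hv⟩ := decomp hn h
    have hlen : u.length + v.length + 1 ≤ N + 1 := by
      have := congrArg List.length heq; simp at this; omega
    have hnu : u.Nodup := (nodup_middle (heq ▸ hn)).2.2.1
    have hnv : v.Nodup := (nodup_middle (heq ▸ hn)).2.2.2
    rw [hbuild]
    intro t ht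
    rw [subtrees, List.mem_cons, List.mem_append] at ht
    rcases ht with rfl | ht | ht
    · constructor
      · show build u ≠ nil → labelOf _ < labelOf (build u)
        intro hbu
        have h1 : (build u).labelOf ∈ inorder (build u) := labelOf_mem_inorder_self hbu
        rw [inorder_build] at h1
        exact hu _ h1
      · show build v ≠ nil → labelOf _ < labelOf (build v)
        intro hbv
        have h1 : (build v).labelOf ∈ inorder (build v) := labelOf_mem_inorder_self hbv
        rw [inorder_build] at h1
        exact hv _ h1
    · exact ih u (by omega) hnu t ht
    · exact ih v (by omega) hnv t ht

lemma build_inc {l : List ℕ} (hn : l.Nodup) :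
    ∀ t ∈ (build l).subtrees,
      (t.left ≠ nil → t.labelOf < t.left.labelOf) ∧
      (t.right ≠ nil → t.labelOf < t.right.labelOf) :=
  build_inc_aux l.length l le_rfl hn

end LBT

namespace ListAux

lemma getLastD_mem {u : List ℕ} {d : ℕ} (h : u ≠ []) : u.getLastD d ∈ u := by
  induction u generalizing d with
  | nil => exact absurd rfl h
  | cons c t ih =>
    rw [List.getLastD_cons]
    rcases eq_or_ne t [] with rfl | hne
    · simp
    · exact List.mem_cons_of_mem _ (ih hne)

lemma headD_mem {v : List ℕ} {d : ℕ} (h : v ≠ []) : v.headD d ∈ v := by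
  cases v with
  | nil => exact absurd rfl h
  | cons c t => simp

lemma getLastD_append_cons (w : List ℕ) (m : ℕ) : ∀ (s : List ℕ) (a : ℕ),
    (s ++ m :: w).getLastD a = w.getLastD m := by
  intro s
  induction s with
  | nil => intro a; rw [List.nil_append, List.getLastD_cons]
  | cons c s ih => intro a; rw [List.cons_append, List.getLastD_cons]; exact ih c

lemma headD_append_cons (w : List ℕ) (m : ℕ) (v : List ℕ) (b : ℕ) :
    (w ++ m :: v).headD b = w.headD m := by
  cases w <;> simp

lemma append_cons_inj {α : Type*} {x : α} : ∀ {u u' v v' : List α},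
    u ++ x :: v = u' ++ x :: v' → x ∉ u → x ∉ u' → u = u' ∧ v = v' := by
  intro u
  induction u with
  | nil =>
    intro u' v v' h hx hx'
    cases u' with
    | nil => simpa using h
    | cons c u'' =>
      rw [List.nil_append, List.cons_append, List.cons.injEq] at h
      exact absurd (h.1 ▸ (List.mem_cons_self (a := c) (l := u''))) hx'
  | cons c u ih =>
    intro u' v v' h hx hx'
    cases u' with
    | nil =>
      rw [List.cons_append, List.nil_append, List.cons.injEq] at h
      exact absurd (h.1 ▸ (List.mem_cons_self (a := c) (l := u))) hx
    | cons c' u'' =>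
      rw [List.cons_append, List.cons_append, List.cons.injEq] at h
      obtain ⟨h1, h2⟩ := h
      obtain ⟨h3, h4⟩ := ih h2 (fun hm => hx (List.mem_cons_of_mem _ hm))
        (fun hm => hx' (List.mem_cons_of_mem _ hm))
      exact ⟨by rw [h1, h3], h4⟩

lemma append_cons_cases {α : Type*} {x m : α} : ∀ {u v u' v' : List α},
    u ++ x :: v = u' ++ m :: v' → x ≠ m →
    (∃ w, u' = u ++ x :: w ∧ v = w ++ m :: v') ∨
    (∃ w, u = u' ++ m :: w ∧ v' = w ++ x :: v) := by
  intro u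
  induction u with
  | nil =>
    intro v u' v' h hne
    cases u' with
    | nil =>
      rw [List.nil_append, List.nil_append, List.cons.injEq] at h
      exact absurd h.1 hne
    | cons c u'' =>
      rw [List.nil_append, List.cons_append, List.cons.injEq] at h
      exact Or.inl ⟨u'', by rw [List.nil_append, ← h.1], h.2⟩
  | cons c u ih =>
    intro v u' v' h hne
    cases u' with
    | nil =>
      rw [List.cons_append, List.nil_append, List.cons.injEq] at h
      exact Or.inr ⟨u, by rw [List.nil_append, ← h.1], h.2.symm⟩
    | cons c' u'' =>
      rw [List.cons_append, List.cons_append, List.cons.injEq] at h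
      rcases ih h.2 hne with ⟨w, h1, h2⟩ | ⟨w, h1, h2⟩
      · exact Or.inl ⟨w, by rw [h1, ← h.1, List.cons_append], h2⟩
      · exact Or.inr ⟨w, by rw [h1, ← h.1, List.cons_append], h2⟩

end ListAux

namespace LBT
open ListAux

lemma not_hll {l : List ℕ} {x : ℕ} (h : x ∉ l) : ¬ HasLeftLeaf (build l) x :=
  fun hh => h (inorder_build l ▸ hasLeftLeaf_mem hh)
lemma not_hrl {l : List ℕ} {x : ℕ} (h : x ∉ l) : ¬ HasRightLeaf (build l) x :=
  fun hh => h (inorder_build l ▸ hasRightLeaf_mem hh)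
lemma not_holc {l : List ℕ} {x : ℕ} (h : x ∉ l) : ¬ HasOnlyLeftChild (build l) x :=
  fun hh => h (inorder_build l ▸ holc_mem hh)
lemma not_horc {l : List ℕ} {x : ℕ} (h : x ∉ l) : ¬ HasOnlyRightChild (build l) x :=
  fun hh => h (inorder_build l ▸ horc_mem hh)
lemma not_single {l : List ℕ} {x : ℕ} (h : x ∉ l) : build l ≠ node x nil nil :=
  fun hh => h (mem_of_build_eq_single hh)

lemma stat_main : ∀ (N : ℕ) (l : List ℕ), l.length ≤ N → l.Nodup →
    ∀ a b : ℕ, (∀ y ∈ l, a < y) → (∀ y ∈ l, b < y) →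
    ∀ u x v, l = u ++ x :: v →
      (((u.getLastD a < x ∧ v.headD b < x) ∧ u.getLastD a ≤ v.headD b) ↔
         (HasLeftLeaf (build l) x ∨ (l = [x] ∧ a ≤ b))) ∧
      (((u.getLastD a < x ∧ v.headD b < x) ∧ v.headD b < u.getLastD a) ↔
         (HasRightLeaf (build l) x ∨ (l = [x] ∧ b < a))) ∧
      ((x < u.getLastD a ∧ v.headD b < x) ↔ HasOnlyLeftChild (build l) x) ∧
      ((u.getLastD a < x ∧ x < v.headD b) ↔ HasOnlyRightChild (build l) x) := by
  intro N
  induction N with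
  | zero =>
    intro l hl _ a b _ _ u x v heq
    subst heq; simp at hl
  | succ N ih =>
    intro l hl hn a b ha hb u x v heq
    subst heq
    have hne : u ++ x :: v ≠ [] := by simp
    obtain ⟨m, hmin⟩ := natMin?_some hne
    obtain ⟨u', v', heq', hbuild, hu', hv'⟩ := decomp hn hmin
    have hxl : x ∈ u ++ x :: v := List.mem_append_right u ((List.mem_cons_self (a := x) (l := v)))
    have hml : m ∈ u ++ x :: v := natMin?_mem hmin
    have ham : a < m := ha m hml
    have hbm : b < m := hb m hml
    have hax : a < x := ha x hxl
    have hbx : b < x := hb x hxl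
    by_cases hxm : x = m
    · subst hxm
      obtain ⟨rfl, rfl⟩ : u = u' ∧ v = v' := by
        refine append_cons_inj heq' ?_ ?_
        · exact (nodup_middle hn).1
        · exact fun hm' => lt_irrefl x (hu' x hm')
      have hxu : x ∉ u := fun hm' => lt_irrefl x (hu' x hm')
      have hxv : x ∉ v := fun hm' => lt_irrefl x (hv' x hm')
      have husing : u ≠ [x] := fun hh => hxu (by simp [hh])
      have hvsing : v ≠ [x] := fun hh => hxv (by simp [hh])
      rcases eq_or_ne u [] with rfl | hu0 <;> rcases eq_or_ne v [] with rfl | hv0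
      · -- l = [x]
        rw [List.nil_append] at hbuild
        refine ⟨?_, ?_, ?_, ?_⟩ <;>
          simp only [hbuild, build_nil, List.headD_nil, List.getLastD_nil, List.nil_append,
            hasLeftLeaf_node, hasRightLeaf_node, holc_node, horc_node,
            hasLeftLeaf_nil, hasRightLeaf_nil, holc_nil, horc_nil] <;>
          simp [hax, hbx] <;> omega
      · -- u = [], v ≠ []
        rw [List.nil_append] at hbuild
        have hqv := headD_mem (v := v) (d := b) hv0
        have hxq : x < v.headD b := hv' _ hqv
        have hnq : ¬ v.headD b < x := by omega
        have hnq2 : ¬ x < x := by omega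
        have hsing : x :: v ≠ [x] := by
          intro hh
          have hlen' := congrArg List.length hh
          have hpos := List.length_pos_iff.2 hv0
          simp only [List.length_cons, List.length_nil] at hlen'
          omega
        refine ⟨?_, ?_, ?_, ?_⟩ <;>
          simp only [hbuild, build_nil, List.headD_nil, List.getLastD_nil, List.nil_append,
            hasLeftLeaf_node, hasRightLeaf_node, holc_node, horc_node,
            hasLeftLeaf_nil, hasRightLeaf_nil, holc_nil, horc_nil, build_eq_single_iff] <;>
          simp [hax, hbx, hxq, hnq, hnq2, hvsing, not_hll hxv, not_hrl hxv,
            not_holc hxv, not_horc hxv, build_ne_nil hv0, hsing] <;>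
          simp only [List.headD_eq_head?, List.getLastD_eq_getLast?] at hxq hnq ⊢ <;> omega
      · -- u ≠ [], v = []
        have hpu := getLastD_mem (u := u) (d := a) hu0
        have hxp : x < u.getLastD a := hu' _ hpu
        have hnp : ¬ u.getLastD a < x := by omega
        have hnq2 : ¬ x < x := by omega
        have hsing : u ++ x :: ([] : List ℕ) ≠ [x] := by
          intro hh
          have hlen' := congrArg List.length hh
          have hpos := List.length_pos_iff.2 hu0
          simp only [List.length_append, List.length_cons, List.length_nil] at hlen'
          omega
        refine ⟨?_, ?_, ?_, ?_⟩ <;>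
          simp only [hbuild, build_nil, List.headD_nil, List.getLastD_nil,
            hasLeftLeaf_node, hasRightLeaf_node, holc_node, horc_node,
            hasLeftLeaf_nil, hasRightLeaf_nil, holc_nil, horc_nil, build_eq_single_iff] <;>
          simp [hax, hbx, hxp, hnp, hnq2, husing, hsing, not_hll hxu, not_hrl hxu,
            not_holc hxu, not_horc hxu, build_ne_nil hu0] <;>
          simp only [List.headD_eq_head?, List.getLastD_eq_getLast?] at hxp hnp ⊢ <;> omega
      · -- u ≠ [], v ≠ []
        have hpu := getLastD_mem (u := u) (d := a) hu0
        have hxp : x < u.getLastD a := hu' _ hpu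
        have hnp : ¬ u.getLastD a < x := by omega
        have hqv := headD_mem (v := v) (d := b) hv0
        have hxq : x < v.headD b := hv' _ hqv
        have hnq : ¬ v.headD b < x := by omega
        have hsing : u ++ x :: v ≠ [x] := by
          intro hh
          have hlen' := congrArg List.length hh
          have hpos := List.length_pos_iff.2 hu0
          simp only [List.length_append, List.length_cons, List.length_nil] at hlen'
          omega
        refine ⟨?_, ?_, ?_, ?_⟩ <;>
          simp only [hbuild, hasLeftLeaf_node, hasRightLeaf_node, holc_node, horc_node,
            build_eq_single_iff] <;>
          simp [hnp, hnq, husing, hvsing, hsing, not_hll hxu, not_hrl hxu,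
            not_holc hxu, not_horc hxu, not_hll hxv, not_hrl hxv,
            not_holc hxv, not_horc hxv, build_ne_nil hu0, build_ne_nil hv0] <;>
          simp only [List.headD_eq_head?, List.getLastD_eq_getLast?] at hxp hnp hxq hnq ⊢ <;> omega
    · -- x ≠ m
      have hnd := heq' ▸ hn
      rw [List.nodup_append] at hnd
      rcases append_cons_cases heq' hxm with ⟨w, hw1, hw2⟩ | ⟨w, hw1, hw2⟩
      · -- x in the left part u' = u ++ x :: w
        subst hw2
        have hxmem : x ∈ u ++ x :: w := List.mem_append_right u ((List.mem_cons_self (a := x) (l := w)))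
        have hxv' : x ∉ v' := by
          intro hm'
          exact hnd.2.2 x (hw1 ▸ hxmem) x (List.mem_cons_of_mem _ hm') rfl
        have hv'sing : v' ≠ [x] := fun hh => hxv' (by simp [hh])
        have hlen2 : (u ++ x :: w).length ≤ N := by
          have h1 := congrArg List.length heq'
          rw [hw1] at h1
          simp at h1 ⊢
          simp at hl
          omega
        have hnu2 : (u ++ x :: w).Nodup := hw1 ▸ hnd.1
        have hau2 : ∀ y ∈ u ++ x :: w, a < y := by
          intro y hy
          refine ha y ?_
          rw [heq', hw1]
          exact List.mem_append_left _ hy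
        have hmu2 : ∀ y ∈ u ++ x :: w, m < y := hw1 ▸ hu'
        obtain ⟨IA, IB, IC, ID⟩ := ih (u ++ x :: w) hlen2 hnu2 a m hau2 hmu2 u x w rfl
        have hq : (w ++ m :: v').headD b = w.headD m := headD_append_cons w m v' b
        have hsing : u ++ x :: (w ++ m :: v') ≠ [x] := by
          intro hh
          have hlen' := congrArg List.length hh
          simp only [List.length_append, List.length_cons, List.length_nil] at hlen'
          omega
        have hbuild2 : build (u ++ x :: (w ++ m :: v')) = node m (build (u ++ x :: w)) (build v') := by
          rw [hbuild, hw1]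
        rw [hq]
        refine ⟨?_, ?_, ?_, ?_⟩
        · rw [IA, hbuild2, hasLeftLeaf_node]
          simp only [build_eq_single_iff]
          simp [not_hll hxv', hv'sing, hsing, ham.le]
          exact or_comm
        · rw [IB, hbuild2, hasRightLeaf_node]
          have hma : ¬ m < a := by omega
          simp only [build_eq_single_iff]
          simp [not_hrl hxv', hv'sing, hsing, hma]
        · rw [IC, hbuild2, holc_node]
          simp [not_holc hxv', Ne.symm hxm]
        · rw [ID, hbuild2, horc_node]
          simp [not_horc hxv', Ne.symm hxm]
      · -- x in the right part v' = w ++ x :: v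
        subst hw2
        have hxmem : x ∈ w ++ x :: v := List.mem_append_right w ((List.mem_cons_self (a := x) (l := v)))
        have hxu' : x ∉ u' := by
          intro hm'
          exact hnd.2.2 x hm' x (List.mem_cons_of_mem _ hxmem) rfl
        have hu'sing : u' ≠ [x] := fun hh => hxu' (by simp [hh])
        have hlen2 : (w ++ x :: v).length ≤ N := by
          have h1 := congrArg List.length heq'
          simp at h1 ⊢
          simp [hw1] at hl
          omega
        have hnv2 : (w ++ x :: v).Nodup := by
          have h2 := hnd.2.1
          rw [List.nodup_cons] at h2
          exact h2.2
        have hbv2 : ∀ y ∈ w ++ x :: v, b < y := by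
          intro y hy
          refine hb y ?_
          rw [heq']
          exact List.mem_append_right _ (List.mem_cons_of_mem _ hy)
        have hmv2 : ∀ y ∈ w ++ x :: v, m < y := hv'
        obtain ⟨IA, IB, IC, ID⟩ := ih (w ++ x :: v) hlen2 hnv2 m b hmv2 hbv2 w x v rfl
        have hp : u.getLastD a = w.getLastD m := by
          rw [hw1]; exact getLastD_append_cons w m u' a
        have hsing : u ++ x :: v ≠ [x] := by
          rw [hw1]
          intro hh
          have hlen' := congrArg List.length hh
          simp only [List.length_append, List.length_cons, List.length_nil] at hlen'
          omega
        have hbuild2 : build (u ++ x :: v) = node m (build u') (build (w ++ x :: v)) := hbuild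
        rw [hp]
        refine ⟨?_, ?_, ?_, ?_⟩
        · rw [IA, hbuild2, hasLeftLeaf_node]
          have hmb : ¬ m ≤ b := by omega
          simp only [build_eq_single_iff]
          simp [not_hll hxu', hu'sing, hsing, hmb]
        · rw [IB, hbuild2, hasRightLeaf_node]
          simp only [build_eq_single_iff]
          simp [not_hrl hxu', hu'sing, hsing, hbm]
          exact or_comm
        · rw [IC, hbuild2, holc_node]
          simp [not_holc hxu', Ne.symm hxm]
        · rw [ID, hbuild2, horc_node]
          simp [not_horc hxu', Ne.symm hxm]

end LBT

namespace LBT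

lemma inorder_eq_nil_iff {B : LBT} : inorder B = [] ↔ B = nil := by
  cases B <;> simp [inorder]

abbrev IncProp (B : LBT) : Prop :=
  ∀ t ∈ B.subtrees, (t.left ≠ nil → t.labelOf < t.left.labelOf) ∧
    (t.right ≠ nil → t.labelOf < t.right.labelOf)

lemma incProp_left {a : ℕ} {L R : LBT} (h : IncProp (node a L R)) : IncProp L :=
  fun t ht => h t (by rw [subtrees]; exact List.mem_cons_of_mem _ (List.mem_append_left _ ht))

lemma incProp_right {a : ℕ} {L R : LBT} (h : IncProp (node a L R)) : IncProp R :=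
  fun t ht => h t (by rw [subtrees]; exact List.mem_cons_of_mem _ (List.mem_append_right _ ht))

lemma labelOf_le {B : LBT} (hinc : IncProp B) : ∀ y ∈ inorder B, B.labelOf ≤ y := by
  induction B with
  | nil => simp [inorder]
  | node a L R ihL ihR =>
    intro y hy
    rw [inorder, List.mem_append, List.mem_cons] at hy
    have hroot := hinc (node a L R) (self_mem_subtrees (by simp))
    rcases hy with hy | rfl | hy
    · have hLne : L ≠ nil := fun h => by subst h; simp [inorder] at hy
      have h1 : labelOf (node a L R) < L.labelOf := hroot.1 hLne
      exact le_trans (le_of_lt h1) (ihL (incProp_left hinc) y hy)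
    · exact le_rfl
    · have hRne : R ≠ nil := fun h => by subst h; simp [inorder] at hy
      have h1 : labelOf (node a L R) < R.labelOf := hroot.2 hRne
      exact le_trans (le_of_lt h1) (ihR (incProp_right hinc) y hy)

lemma indexOf_append_self {a : ℕ} : ∀ (s : List ℕ), a ∉ s → ∀ t : List ℕ,
    (s ++ a :: t).idxOf a = s.length := by
  intro s
  induction s with
  | nil => intro _ t; exact List.idxOf_cons_self
  | cons c s ih =>
    intro hns t
    have hne : a ≠ c := fun h => hns (h ▸ (List.mem_cons_self (a := c) (l := s)))
    rw [List.cons_append, List.idxOf_cons_ne _ (Ne.symm hne),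
      ih (fun h => hns (List.mem_cons_of_mem _ h)) t, List.length_cons]

lemma build_inorder {B : LBT} (hinc : IncProp B) (hnd : (inorder B).Nodup) :
    build (inorder B) = B := by
  induction B with
  | nil => exact build_nil
  | node a L R ihL ihR =>
    rw [inorder] at hnd ⊢
    have hmid := nodup_middle hnd
    have hmin : (inorder L ++ a :: inorder R).min? = some a := by
      rw [List.min?_eq_some_iff]
      constructor
      · exact List.mem_append_right _ (List.mem_cons_self)
      · intro y hy
        rw [List.mem_append, List.mem_cons] at hy
        have hroot := hinc (node a L R) (self_mem_subtrees (by simp))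
        rcases hy with hy | rfl | hy
        · have hLne : L ≠ nil := fun h => by subst h; simp [inorder] at hy
          exact le_trans (le_of_lt (hroot.1 hLne)) (labelOf_le (incProp_left hinc) y hy)
        · exact le_rfl
        · have hRne : R ≠ nil := fun h => by subst h; simp [inorder] at hy
          exact le_trans (le_of_lt (hroot.2 hRne)) (labelOf_le (incProp_right hinc) y hy)
    have hdrop : (inorder L ++ a :: inorder R).drop ((inorder L).length + 1) = inorder R := by
      rw [show inorder L ++ a :: inorder R = (inorder L ++ [a]) ++ inorder R by simp,
        List.drop_left' (by simp)]
    rw [build_eq_node hmin, indexOf_append_self _ hmid.1 _, List.take_left, hdrop]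
    rw [ihL (incProp_left hinc) hmid.2.2.1, ihR (incProp_right hinc) hmid.2.2.2]

end LBT

namespace PermAux
open LBT ListAux

def wordList (n : ℕ) (π : Equiv.Perm (Fin n)) : List ℕ :=
  List.ofFn (fun i => (π i : ℕ) + 1)

variable {n : ℕ} {π : Equiv.Perm (Fin n)}

lemma wordList_length : (wordList n π).length = n := by simp [wordList]

lemma wordList_nodup : (wordList n π).Nodup := by
  rw [wordList, List.nodup_ofFn]
  intro i j h
  simp only [add_left_inj] at h
  exact π.injective (Fin.ext h)

lemma wordList_pos : ∀ y ∈ wordList n π, 0 < y := by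
  intro y hy
  rw [wordList, List.mem_ofFn] at hy
  obtain ⟨i, rfl⟩ := hy
  simp

lemma target_nodup : (Multiset.map (· + 1) (Multiset.range n)).Nodup :=
  (Multiset.nodup_range n).map (fun x y h => by omega)

lemma wordList_coe : (↑(wordList n π) : Multiset ℕ) = Multiset.map (· + 1) (Multiset.range n) := by
  rw [Multiset.Nodup.ext (Multiset.coe_nodup.2 wordList_nodup) target_nodup]
  intro y
  rw [Multiset.mem_coe, wordList, List.mem_ofFn]
  constructor
  · rintro ⟨i, rfl⟩
    exact Multiset.mem_map.2 ⟨(π i : ℕ), Multiset.mem_range.2 (π i).isLt, rfl⟩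
  · intro hy
    obtain ⟨k, hk, rfl⟩ := Multiset.mem_map.1 hy
    rw [Multiset.mem_range] at hk
    exact ⟨π.symm ⟨k, hk⟩, by simp⟩

lemma isIncBT_build : LBT.IsIncBT n (build (wordList n π)) := by
  constructor
  · rw [labels_eq_inorder, inorder_build, wordList_coe]
  · exact build_inc wordList_nodup

lemma wordList_getElem (i : ℕ) (h : i < (wordList n π).length) :
    (wordList n π)[i] = (π ⟨i, by simpa [wordList_length] using h⟩ : ℕ) + 1 := by
  simp [wordList]

end PermAux



/-- **Theorem (the bijection `λ` from permutations to increasing binary trees).**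
For `n ≥ 2` there is a bijection `λ` from `S_n` onto the increasing binary trees on
`[n]` such that, for every `π` and `i ∈ [n]`: `π_i` is a type-1 peak iff the node
labeled `π_i` is a left leaf of `λ(π)`; `π_i` is a type-2 peak iff it is a right leaf;
`π_i` is a double descent iff the node labeled `π_i` has only a left child; and `π_i`
is a double ascent iff it has only a right child. -/
theorem perm_to_increasing_binary_tree
    (n : ℕ) (hn : 2 ≤ n) :
    ∃ lam : Equiv.Perm (Fin n) → {B : LBT // LBT.IsIncBT n B},
      Function.Bijective lam ∧
        ∀ π : Equiv.Perm (Fin n), ∀ i ∈ Finset.Icc 1 n,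
          (PermWord.IsPeak1 n π i ↔ LBT.HasLeftLeaf (lam π).1 (PermWord.wordOf n π i)) ∧
          (PermWord.IsPeak2 n π i ↔ LBT.HasRightLeaf (lam π).1 (PermWord.wordOf n π i)) ∧
          (PermWord.IsDD n π i ↔ LBT.HasOnlyLeftChild (lam π).1 (PermWord.wordOf n π i)) ∧
          (PermWord.IsDA n π i ↔ LBT.HasOnlyRightChild (lam π).1 (PermWord.wordOf n π i)) := by
  classical
  refine ⟨fun π => ⟨LBT.build (PermAux.wordList n π), PermAux.isIncBT_build⟩, ⟨?_, ?_⟩, ?_⟩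
  · -- injective
    intro π1 π2 h
    rw [Subtype.mk.injEq] at h
    have h2 := LBT.build_injective h
    have h3 := List.ofFn_injective h2
    refine Equiv.ext fun i => Fin.ext ?_
    have := congrFun h3 i
    simpa using this
  · -- surjective
    rintro ⟨B, hB⟩
    have hco : (↑(LBT.inorder B) : Multiset ℕ) = Multiset.map (· + 1) (Multiset.range n) := by
      rw [← LBT.labels_eq_inorder]; exact hB.1
    have hnd : (LBT.inorder B).Nodup :=
      Multiset.coe_nodup.1 (by rw [hco]; exact PermAux.target_nodup)
    have hlen : (LBT.inorder B).length = n := by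
      have := congrArg Multiset.card hco
      simpa using this
    have hbound : ∀ (i : ℕ) (h : i < (LBT.inorder B).length),
        1 ≤ (LBT.inorder B)[i] ∧ (LBT.inorder B)[i] ≤ n := by
      intro i h
      have hm : (LBT.inorder B)[i] ∈ (↑(LBT.inorder B) : Multiset ℕ) :=
        Multiset.mem_coe.2 (List.getElem_mem h)
      rw [hco] at hm
      obtain ⟨k, hk, he⟩ := Multiset.mem_map.1 hm
      rw [Multiset.mem_range] at hk
      omega
    have hinj : Function.Injective (fun i : Fin n =>
        (⟨(LBT.inorder B)[i.1]'(by omega) - 1, by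
          have := hbound i.1 (by omega); omega⟩ : Fin n)) := by
      intro i j hij
      simp only [Fin.mk.injEq] at hij
      have hbi := hbound i.1 (by omega)
      have hbj := hbound j.1 (by omega)
      have hg : (LBT.inorder B)[i.1]'(by omega) = (LBT.inorder B)[j.1]'(by omega) := by omega
      exact Fin.ext (hnd.getElem_inj_iff.1 hg)
    set f : Fin n → Fin n := fun i : Fin n =>
        (⟨(LBT.inorder B)[i.1]'(by omega) - 1, by
          have := hbound i.1 (by omega); omega⟩ : Fin n) with hf
    refine ⟨Equiv.ofBijective f (Finite.injective_iff_bijective.1 hinj), ?_⟩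
    apply Subtype.ext
    show LBT.build (PermAux.wordList n (Equiv.ofBijective f _)) = B
    have hw : PermAux.wordList n (Equiv.ofBijective f (Finite.injective_iff_bijective.1 hinj))
        = LBT.inorder B := by
      apply List.ext_getElem (by simp [PermAux.wordList, hlen])
      intro i h1 h2
      rw [PermAux.wordList_getElem i h1]
      have hval : ((Equiv.ofBijective f (Finite.injective_iff_bijective.1 hinj))
          ⟨i, by simpa [PermAux.wordList_length] using h1⟩ : ℕ)
          = (LBT.inorder B)[i]'h2 - 1 := rfl
      have hb := hbound i h2
      omega
    rw [hw]
    exact LBT.build_inorder hB.2 hnd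
  · -- statistics
    intro π i hi
    rw [Finset.mem_Icc] at hi
    obtain ⟨h1, h2⟩ := hi
    have hlen : (PermAux.wordList n π).length = n := PermAux.wordList_length
    set l := PermAux.wordList n π with hldef
    have hnd : l.Nodup := PermAux.wordList_nodup
    have hpos : ∀ y ∈ l, 0 < y := PermAux.wordList_pos
    have hi1 : i - 1 < l.length := by omega
    have hii : i - 1 + 1 = i := by omega
    have heq := (List.take_append_drop (i-1) l).symm
    rw [List.drop_eq_getElem_cons hi1, hii] at heq
    have hword : ∀ j : ℕ, 1 ≤ j → j ≤ n → ∀ (hb : j - 1 < l.length),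
        PermWord.wordOf n π j = l[j-1]'hb := by
      intro j hj1 hj2 hb
      rw [PermWord.wordOf, dif_pos ⟨hj1, hj2⟩]
      exact (PermAux.wordList_getElem (j-1) hb).symm
    have hp : (l.take (i-1)).getLastD 0 = PermWord.wordOf n π (i-1) := by
      by_cases hc : i = 1
      · subst hc
        rw [PermWord.wordOf, dif_neg (by omega)]
        simp
      · rw [hword (i-1) (by omega) (by omega) (by omega)]
        have hne : l.take (i-1) ≠ [] :=
          List.ne_nil_of_length_pos (by rw [List.length_take]; omega)
        rw [List.getLastD_eq_getLast?, List.getLast?_eq_getLast hne, Option.getD_some,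
          List.getLast_eq_getElem, List.getElem_take]
        congr 1
        rw [List.length_take]
        omega
    have hq : (l.drop i).headD 0 = PermWord.wordOf n π (i+1) := by
      by_cases hc : i = n
      · have hdr : l.drop i = [] := by
          have hh : i = l.length := by omega
          rw [hh, List.drop_length]
        rw [hdr, PermWord.wordOf, dif_neg (by omega)]
        rfl
      · have hin : i < n := lt_of_le_of_ne h2 hc
        rw [hword (i+1) (by omega) (by omega) (by omega),
          List.drop_eq_getElem_cons (show i < l.length by omega)]
        rfl
    obtain ⟨SA, SB, SC, SD⟩ := LBT.stat_main l.length l le_rfl hnd 0 0 hpos hpos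
      (l.take (i-1)) (l[i-1]'hi1) (l.drop i) heq
    have hsing : l ≠ [l[i-1]'hi1] := by
      intro hh
      have := congrArg List.length hh
      rw [hlen] at this
      simp at this
      omega
    simp only [hsing, false_and, or_false] at SA SB
    refine ⟨?_, ?_, ?_, ?_⟩
    · unfold PermWord.IsPeak1 PermWord.IsPeak
      rw [← hp, ← hq, hword i h1 h2 (by omega)]
      exact SA
    · unfold PermWord.IsPeak2 PermWord.IsPeak
      rw [← hp, ← hq, hword i h1 h2 (by omega)]
      exact SB
    · unfold PermWord.IsDD
      rw [← hp, ← hq, hword i h1 h2 (by omega)]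
      exact SC
    · unfold PermWord.IsDA
      rw [← hp, ← hq, hword i h1 h2 (by omega)]
      exact SD
end

section
/- For n ≥ 1 let A_n = Σ_{π∈S_n} x^{dd(π)} y^{da(π)} z_1^{pk_1(π)} z_2^{pk_2(π)} ∈ ℚ[x,y,z_1,z_2], and let A(t) = Σ_{n≥1} A_n t^n/n!, a formal power series in t with coefficients in ℚ[x,y,z_1,z_2]. Then the formal derivative of A with respect to t satisfies the Riccati equation A′ = A² + ((z_2 − z_1)t + x + y)·A + (z_2 − z_1)·y·t + z_1. -/
/-- The refined Eulerian polynomial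
`A_n = Σ_{π ∈ S_n} x^{dd(π)} y^{da(π)} z₁^{pk₁(π)} z₂^{pk₂(π)}` in `ℚ[x,y,z₁,z₂]`.
Here `x = X 0`, `y = X 1`, `z₁ = X 2`, `z₂ = X 3`. -/
noncomputable def Apoly (n : ℕ) : MvPolynomial (Fin 4) ℚ :=
  ∑ π : Equiv.Perm (Fin n),
    MvPolynomial.X 0 ^ PermWord.dd n π * MvPolynomial.X 1 ^ PermWord.da n π *
      MvPolynomial.X 2 ^ PermWord.pk1 n π * MvPolynomial.X 3 ^ PermWord.pk2 n π

/-- The exponential generating function `A(t) = Σ_{n ≥ 1} A_n tⁿ/n!`. -/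
noncomputable def Aser : PowerSeries (MvPolynomial (Fin 4) ℚ) :=
  PowerSeries.mk fun n => if n = 0 then 0 else ((n.factorial : ℚ)⁻¹) • Apoly n


namespace Riccati
open PermWord MvPolynomial Finset

variable {n : ℕ}

lemma wordOf_zero (ρ : Equiv.Perm (Fin n)) : wordOf n ρ 0 = 0 := by
  simp [wordOf]

lemma wordOf_of_gt (ρ : Equiv.Perm (Fin n)) {i : ℕ} (h : n < i) : wordOf n ρ i = 0 := by
  rw [wordOf, dif_neg]; omega

lemma wordOf_le (ρ : Equiv.Perm (Fin n)) (i : ℕ) : wordOf n ρ i ≤ n := by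
  rw [wordOf]; split
  · exact Nat.succ_le_of_lt (Fin.is_lt _)
  · omega

lemma wordOf_pos (ρ : Equiv.Perm (Fin n)) {i : ℕ} (h1 : 1 ≤ i) (h2 : i ≤ n) :
    1 ≤ wordOf n ρ i := by
  rw [wordOf, dif_pos ⟨h1, h2⟩]; omega

lemma pos_of_wordOf_pos (ρ : Equiv.Perm (Fin n)) {i : ℕ} (h : 1 ≤ wordOf n ρ i) :
    1 ≤ i ∧ i ≤ n := by
  by_contra hc
  rw [wordOf, dif_neg] at h; omega
  tauto

lemma wordOf_inj (ρ : Equiv.Perm (Fin n)) {i j : ℕ} (h : wordOf n ρ i = wordOf n ρ j)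
    (h1 : 1 ≤ i) (h2 : i ≤ n) : i = j := by
  have hi : 1 ≤ wordOf n ρ i := wordOf_pos ρ h1 h2
  have hj := pos_of_wordOf_pos ρ (h ▸ hi)
  rw [wordOf, dif_pos ⟨h1, h2⟩, wordOf, dif_pos hj] at h
  have h' : ρ ⟨i-1, by omega⟩ = ρ ⟨j-1, by omega⟩ := Fin.val_injective (by omega)
  have := ρ.injective h'
  have := Fin.val_eq_val .. |>.mpr this
  simp at this
  omega


def ins (ρ : Equiv.Perm (Fin n)) (j : Fin (n+1)) : Equiv.Perm (Fin (n+1)) :=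
  (finSuccEquiv' j).trans ((ρ.optionCongr).trans finSuccEquivLast.symm)

lemma ins_apply_self (ρ : Equiv.Perm (Fin n)) (j : Fin (n+1)) : ins ρ j j = Fin.last n := by
  simp [ins, finSuccEquiv'_at]

lemma ins_apply_succAbove (ρ : Equiv.Perm (Fin n)) (j : Fin (n+1)) (k : Fin n) :
    ins ρ j (j.succAbove k) = (ρ k).castSucc := by
  simp [ins, finSuccEquiv'_succAbove, finSuccEquivLast_symm_some]

lemma ins_injective : Function.Injective
    (fun p : Equiv.Perm (Fin n) × Fin (n+1) => ins p.1 p.2) := by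
  rintro ⟨ρ, j⟩ ⟨ρ', j'⟩ h
  simp only at h
  have hj : j = j' := by
    by_contra hne
    obtain ⟨k, hk⟩ := Fin.exists_succAbove_eq (Ne.symm hne)
    have h1 : ins ρ' j' j' = Fin.last n := ins_apply_self ρ' j'
    have h2 : ins ρ j j' = (ρ k).castSucc := by
      have := ins_apply_succAbove ρ j k
      rwa [hk] at this
    rw [← h] at h1; rw [h1] at h2
    exact (Fin.castSucc_lt_last (ρ k)).ne h2.symm
  subst hj
  have hρ : ρ = ρ' := by
    ext k
    have h1 := ins_apply_succAbove ρ j k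
    have h2 := ins_apply_succAbove ρ' j k
    rw [h] at h1; rw [h1] at h2
    exact congrArg Fin.val (Fin.castSucc_injective n h2.symm).symm
  simp [hρ]

lemma wordOf_ins (ρ : Equiv.Perm (Fin n)) (j : Fin (n+1)) (i : ℕ) :
    wordOf (n+1) (ins ρ j) i =
      if i = (j:ℕ)+1 then n+1 else if i ≤ (j:ℕ) then wordOf n ρ i else wordOf n ρ (i-1) := by
  have hj : (j:ℕ) ≤ n := Fin.is_le j
  by_cases hr : 1 ≤ i ∧ i ≤ n+1
  · rw [wordOf, dif_pos hr]
    rcases Nat.lt_trichotomy i ((j:ℕ)+1) with hlt | heq | hgt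
    · -- i ≤ j : position i-1 < j
      have hkb : i - 1 < n := by omega
      have : (⟨i-1, by omega⟩ : Fin (n+1)) = (⟨i-1, hkb⟩ : Fin n).castSucc := rfl
      rw [this, ← Fin.succAbove_of_castSucc_lt j ⟨i-1, hkb⟩ (by
        rw [Fin.lt_iff_val_lt_val]; simpa using (by omega : i - 1 < (j:ℕ)))]
      rw [ins_apply_succAbove]
      rw [if_neg (by omega), if_pos (by omega), wordOf, dif_pos ⟨hr.1, by omega⟩]
      simp
    · have : (⟨i-1, by omega⟩ : Fin (n+1)) = j := Fin.val_injective (by simp; omega)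
      rw [this, ins_apply_self, if_pos heq]
      simp [Fin.last]
    · have hkb : i - 2 < n := by omega
      have : (⟨i-1, by omega⟩ : Fin (n+1)) = (⟨i-2, hkb⟩ : Fin n).succ :=
        Fin.val_injective (by simp; omega)
      rw [this, ← Fin.succAbove_of_le_castSucc j ⟨i-2, hkb⟩ (by
        rw [Fin.le_iff_val_le_val]; simpa using (by omega : (j:ℕ) ≤ i - 2))]
      rw [ins_apply_succAbove]
      rw [if_neg (by omega), if_neg (by omega), wordOf, dif_pos ⟨by omega, by omega⟩]
      simp only [show i - 1 - 1 = i - 2 from by omega]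
      simp
  · rw [wordOf, dif_neg hr]
    have h0 : i = 0 ∨ n + 2 ≤ i := by omega
    rcases h0 with h0 | h0
    · subst h0
      rw [if_neg (by omega), if_pos (by omega), wordOf, dif_neg (by omega)]
    · rw [if_neg (by omega), if_neg (by omega), wordOf, dif_neg (by omega)]

def indP (P : ℕ → ℕ → ℕ → Prop) [∀ a b c, Decidable (P a b c)] (w : ℕ → ℕ) (i : ℕ) : ℕ :=
  if P (w (i-1)) (w i) (w (i+1)) then 1 else 0

lemma cnt_insert (P : ℕ → ℕ → ℕ → Prop) [∀ a b c, Decidable (P a b c)]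
    (hP : ∀ a c, ¬ P a 0 c) (w w' : ℕ → ℕ) (N s : ℕ) (hs : s ≤ N)
    (hw0 : w 0 = 0) (hwt : ∀ i, N+1 ≤ i → w i = 0)
    (h1 : ∀ i, i ≤ s → w' i = w i) (h2 : ∀ i, s+2 ≤ i → w' i = w (i-1)) :
    ((Icc 1 (N+1)).filter (fun i => P (w' (i-1)) (w' i) (w' (i+1)))).card
      + indP P w s + indP P w (s+1)
    = ((Icc 1 N).filter (fun i => P (w (i-1)) (w i) (w (i+1)))).card
      + indP P w' s + indP P w' (s+1) + indP P w' (s+2) := by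
  have key : ∀ (v : ℕ → ℕ) (M : ℕ), v 0 = 0 → v (M+1) = 0 →
      ((Icc 1 M).filter (fun i => P (v (i-1)) (v i) (v (i+1)))).card
        = ∑ i ∈ Ico 0 (M+2), indP P v i := by
    intro v M hv0 hvM
    rw [Finset.card_filter]
    have e1 : Icc 1 M = Ico 1 (M+1) := by rw [Finset.Ico_add_one_right_eq_Icc]
    have e2 : ∑ i ∈ Ico 0 (M+2), indP P v i
        = ∑ i ∈ Ico 0 1, indP P v i + ∑ i ∈ Ico 1 (M+1), indP P v i
          + ∑ i ∈ Ico (M+1) (M+2), indP P v i := by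
      rw [sum_Ico_consecutive _ (by omega) (by omega : 1 ≤ M+1),
        sum_Ico_consecutive _ (by omega : 0 ≤ M+1) (by omega)]
    have i0 : indP P v 0 = 0 := by simp [indP, hv0, hP]
    have iM : indP P v (M+1) = 0 := by simp [indP, hvM, hP]
    have e3 : ∑ i ∈ Ico 0 1, indP P v i = 0 := by
      rw [Finset.sum_Ico_eq_sum_range]; simpa using i0
    have e4 : ∑ i ∈ Ico (M+1) (M+2), indP P v i = 0 := by
      rw [Finset.sum_Ico_eq_sum_range]; simpa using iM
    rw [e1, e2, e3, e4]
    simp [indP]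
  have hw'0 : w' 0 = 0 := by rw [h1 0 (by omega), hw0]
  have hw't : w' (N+2) = 0 := by rw [h2 _ (by omega)]; exact hwt _ (by omega)
  rw [key w N hw0 (hwt _ (by omega)), key w' (N+1) hw'0 hw't]
  have single : ∀ (v : ℕ → ℕ) (a : ℕ), ∑ i ∈ Ico a (a+1), indP P v i = indP P v a := by
    intro v a; rw [Finset.sum_Ico_eq_sum_range]; simp
  have split1 : ∑ i ∈ Ico 0 (N+3), indP P w' i
      = ∑ i ∈ Ico 0 s, indP P w' i + (indP P w' s + indP P w' (s+1) + indP P w' (s+2))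
        + ∑ i ∈ Ico (s+3) (N+3), indP P w' i := by
    rw [← sum_Ico_consecutive (fun i => indP P w' i) (by omega : 0 ≤ s) (by omega : s ≤ N+3),
      ← sum_Ico_consecutive (fun i => indP P w' i) (by omega : s ≤ s+3) (by omega : s+3 ≤ N+3),
      ← sum_Ico_consecutive (fun i => indP P w' i) (by omega : s ≤ s+1) (by omega : s+1 ≤ s+3),
      ← sum_Ico_consecutive (fun i => indP P w' i) (by omega : s+1 ≤ s+2) (by omega : s+2 ≤ s+3),
      show s+1+1 = s+2 from rfl, show s+2+1 = s+3 from rfl, single, single, single]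
    ring
  have split2 : ∑ i ∈ Ico 0 (N+2), indP P w i
      = ∑ i ∈ Ico 0 s, indP P w i + (indP P w s + indP P w (s+1))
        + ∑ i ∈ Ico (s+2) (N+2), indP P w i := by
    rw [← sum_Ico_consecutive (fun i => indP P w i) (by omega : 0 ≤ s) (by omega : s ≤ N+2),
      ← sum_Ico_consecutive (fun i => indP P w i) (by omega : s ≤ s+2) (by omega : s+2 ≤ N+2),
      ← sum_Ico_consecutive (fun i => indP P w i) (by omega : s ≤ s+1) (by omega : s+1 ≤ s+2),
      show s+1+1 = s+2 from rfl, single, single]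
    ring
  have chunkA : ∑ i ∈ Ico 0 s, indP P w' i = ∑ i ∈ Ico 0 s, indP P w i := by
    apply Finset.sum_congr rfl
    intro i hi
    rw [Finset.mem_Ico] at hi
    unfold indP
    rw [h1 (i-1) (by omega), h1 i (by omega), h1 (i+1) (by omega)]
  have chunkB : ∑ i ∈ Ico (s+3) (N+3), indP P w' i = ∑ i ∈ Ico (s+2) (N+2), indP P w i := by
    rw [Finset.sum_Ico_eq_sum_range, Finset.sum_Ico_eq_sum_range]
    apply Finset.sum_congr (by congr 1; omega)
    intro i _
    unfold indP
    rw [h2 (s+3+i-1) (by omega), h2 (s+3+i) (by omega), h2 (s+3+i+1) (by omega),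
      show s+3+i-1-1 = s+2+i-1 from by omega, show s+3+i-1 = s+2+i from by omega,
      show s+3+i+1-1 = s+2+i+1 from by omega]
  rw [split1, split2, chunkA, chunkB]
  ring

-- stat bridging and transfer lemmas
section Stats
variable (ρ : Equiv.Perm (Fin n)) (j : Fin (n+1))

lemma dd_card (N : ℕ) (τ : Equiv.Perm (Fin N)) :
    dd N τ = ((Icc 1 N).filter
      (fun i => (fun a b c => b < a ∧ c < b)
        (wordOf N τ (i-1)) (wordOf N τ i) (wordOf N τ (i+1)))).card := by
  unfold PermWord.dd; congr 1

lemma da_card (N : ℕ) (τ : Equiv.Perm (Fin N)) :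
    da N τ = ((Icc 1 N).filter
      (fun i => (fun a b c => a < b ∧ b < c)
        (wordOf N τ (i-1)) (wordOf N τ i) (wordOf N τ (i+1)))).card := by
  unfold PermWord.da; congr 1

lemma pk1_card (N : ℕ) (τ : Equiv.Perm (Fin N)) :
    pk1 N τ = ((Icc 1 N).filter
      (fun i => (fun a b c => (a < b ∧ c < b) ∧ a ≤ c)
        (wordOf N τ (i-1)) (wordOf N τ i) (wordOf N τ (i+1)))).card := by
  unfold PermWord.pk1; congr 1

lemma pk2_card (N : ℕ) (τ : Equiv.Perm (Fin N)) :
    pk2 N τ = ((Icc 1 N).filter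
      (fun i => (fun a b c => (a < b ∧ c < b) ∧ c < a)
        (wordOf N τ (i-1)) (wordOf N τ i) (wordOf N τ (i+1)))).card := by
  unfold PermWord.pk2; congr 1

lemma ins_h1 : ∀ i, i ≤ (j:ℕ) → wordOf (n+1) (ins ρ j) i = wordOf n ρ i := by
  intro i hi
  rw [wordOf_ins, if_neg (by omega), if_pos hi]

lemma ins_h2 : ∀ i, (j:ℕ)+2 ≤ i → wordOf (n+1) (ins ρ j) i = wordOf n ρ (i-1) := by
  intro i hi
  rw [wordOf_ins, if_neg (by omega), if_neg (by omega)]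

lemma ins_hmid : wordOf (n+1) (ins ρ j) ((j:ℕ)+1) = n+1 := by
  rw [wordOf_ins, if_pos rfl]

end Stats

section Transfer
variable (ρ : Equiv.Perm (Fin n)) (j : Fin (n+1))

lemma indP_ins_s (P : ℕ → ℕ → ℕ → Prop) [∀ a b c, Decidable (P a b c)] :
    indP P (wordOf (n+1) (ins ρ j)) (j:ℕ)
      = if P (wordOf n ρ ((j:ℕ)-1)) (wordOf n ρ (j:ℕ)) (n+1) then 1 else 0 := by
  unfold indP
  rw [ins_h1 ρ j ((j:ℕ)-1) (by omega), ins_h1 ρ j (j:ℕ) le_rfl, ins_hmid]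

lemma indP_ins_s1 (P : ℕ → ℕ → ℕ → Prop) [∀ a b c, Decidable (P a b c)] :
    indP P (wordOf (n+1) (ins ρ j)) ((j:ℕ)+1)
      = if P (wordOf n ρ (j:ℕ)) (n+1) (wordOf n ρ ((j:ℕ)+1)) then 1 else 0 := by
  unfold indP
  rw [show (j:ℕ)+1-1 = (j:ℕ) from rfl, ins_h1 ρ j (j:ℕ) le_rfl, ins_hmid,
    ins_h2 ρ j ((j:ℕ)+1+1) (by omega), show (j:ℕ)+1+1-1 = (j:ℕ)+1 from rfl]

lemma indP_ins_s2 (P : ℕ → ℕ → ℕ → Prop) [∀ a b c, Decidable (P a b c)] :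
    indP P (wordOf (n+1) (ins ρ j)) ((j:ℕ)+2)
      = if P (n+1) (wordOf n ρ ((j:ℕ)+1)) (wordOf n ρ ((j:ℕ)+2)) then 1 else 0 := by
  unfold indP
  rw [show (j:ℕ)+2-1 = (j:ℕ)+1 from rfl, ins_hmid,
    ins_h2 ρ j ((j:ℕ)+2) (by omega), show (j:ℕ)+2-1 = (j:ℕ)+1 from rfl,
    ins_h2 ρ j ((j:ℕ)+2+1) (by omega), show (j:ℕ)+2+1-1 = (j:ℕ)+2 from rfl]

lemma dd_ins :
    dd (n+1) (ins ρ j)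
      + indP (fun a b c => b < a ∧ c < b) (wordOf n ρ) (j:ℕ)
      + indP (fun a b c => b < a ∧ c < b) (wordOf n ρ) ((j:ℕ)+1)
    = dd n ρ + (if wordOf n ρ ((j:ℕ)+2) < wordOf n ρ ((j:ℕ)+1) then 1 else 0) := by
  have base := cnt_insert (fun a b c => b < a ∧ c < b) (fun a c h => by omega)
    (wordOf n ρ) (wordOf (n+1) (ins ρ j)) n (j:ℕ) (Fin.is_le j) (wordOf_zero ρ)
    (fun i hi => wordOf_of_gt ρ (by omega)) (ins_h1 ρ j) (ins_h2 ρ j)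
  rw [← dd_card, ← dd_card, indP_ins_s, indP_ins_s1, indP_ins_s2] at base
  have b1 := wordOf_le ρ (j:ℕ)
  have b2 := wordOf_le ρ ((j:ℕ)+1)
  beta_reduce at base
  have b0 := wordOf_le ρ ((j:ℕ)-1)
  have b3 := wordOf_le ρ ((j:ℕ)+2)
  rw [base]
  split_ifs <;> omega

lemma da_ins :
    da (n+1) (ins ρ j)
      + indP (fun a b c => a < b ∧ b < c) (wordOf n ρ) (j:ℕ)
      + indP (fun a b c => a < b ∧ b < c) (wordOf n ρ) ((j:ℕ)+1)
    = da n ρ + (if wordOf n ρ ((j:ℕ)-1) < wordOf n ρ (j:ℕ) then 1 else 0) := by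
  have base := cnt_insert (fun a b c => a < b ∧ b < c) (fun a c h => by omega)
    (wordOf n ρ) (wordOf (n+1) (ins ρ j)) n (j:ℕ) (Fin.is_le j) (wordOf_zero ρ)
    (fun i hi => wordOf_of_gt ρ (by omega)) (ins_h1 ρ j) (ins_h2 ρ j)
  rw [← da_card, ← da_card, indP_ins_s, indP_ins_s1, indP_ins_s2] at base
  have b1 := wordOf_le ρ (j:ℕ)
  have b2 := wordOf_le ρ ((j:ℕ)+1)
  beta_reduce at base
  have b0 := wordOf_le ρ ((j:ℕ)-1)
  have b3 := wordOf_le ρ ((j:ℕ)+2)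
  rw [base]
  split_ifs <;> omega

lemma pk1_ins :
    pk1 (n+1) (ins ρ j)
      + indP (fun a b c => (a < b ∧ c < b) ∧ a ≤ c) (wordOf n ρ) (j:ℕ)
      + indP (fun a b c => (a < b ∧ c < b) ∧ a ≤ c) (wordOf n ρ) ((j:ℕ)+1)
    = pk1 n ρ + (if wordOf n ρ (j:ℕ) ≤ wordOf n ρ ((j:ℕ)+1) then 1 else 0) := by
  have base := cnt_insert (fun a b c => (a < b ∧ c < b) ∧ a ≤ c) (fun a c h => by omega)
    (wordOf n ρ) (wordOf (n+1) (ins ρ j)) n (j:ℕ) (Fin.is_le j) (wordOf_zero ρ)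
    (fun i hi => wordOf_of_gt ρ (by omega)) (ins_h1 ρ j) (ins_h2 ρ j)
  rw [← pk1_card, ← pk1_card, indP_ins_s, indP_ins_s1, indP_ins_s2] at base
  have b1 := wordOf_le ρ (j:ℕ)
  have b2 := wordOf_le ρ ((j:ℕ)+1)
  beta_reduce at base
  have b0 := wordOf_le ρ ((j:ℕ)-1)
  have b3 := wordOf_le ρ ((j:ℕ)+2)
  rw [base]
  split_ifs <;> omega

lemma pk2_ins :
    pk2 (n+1) (ins ρ j)
      + indP (fun a b c => (a < b ∧ c < b) ∧ c < a) (wordOf n ρ) (j:ℕ)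
      + indP (fun a b c => (a < b ∧ c < b) ∧ c < a) (wordOf n ρ) ((j:ℕ)+1)
    = pk2 n ρ + (if wordOf n ρ ((j:ℕ)+1) < wordOf n ρ (j:ℕ) then 1 else 0) := by
  have base := cnt_insert (fun a b c => (a < b ∧ c < b) ∧ c < a) (fun a c h => by omega)
    (wordOf n ρ) (wordOf (n+1) (ins ρ j)) n (j:ℕ) (Fin.is_le j) (wordOf_zero ρ)
    (fun i hi => wordOf_of_gt ρ (by omega)) (ins_h1 ρ j) (ins_h2 ρ j)
  rw [← pk2_card, ← pk2_card, indP_ins_s, indP_ins_s1, indP_ins_s2] at base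
  have b1 := wordOf_le ρ (j:ℕ)
  have b2 := wordOf_le ρ ((j:ℕ)+1)
  beta_reduce at base
  have b0 := wordOf_le ρ ((j:ℕ)-1)
  have b3 := wordOf_le ρ ((j:ℕ)+2)
  rw [base]
  split_ifs <;> omega

end Transfer

section Gop

noncomputable def G (p : MvPolynomial (Fin 4) ℚ) : MvPolynomial (Fin 4) ℚ :=
  (X 0 * X 2 + X 1 * X 3) * (pderiv 2 p + pderiv 3 p) + X 2 * pderiv 1 p + X 3 * pderiv 0 p

lemma G_add (p q : MvPolynomial (Fin 4) ℚ) : G (p + q) = G p + G q := by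
  simp only [G, map_add]; ring

lemma G_zero : G (0 : MvPolynomial (Fin 4) ℚ) = 0 := by simp [G]

lemma G_nsmul (m : ℕ) (p : MvPolynomial (Fin 4) ℚ) : G (m • p) = m • G p := by
  simp only [G, map_nsmul, smul_add, mul_smul_comm, ← smul_add]

lemma G_sum {α : Type*} (s : Finset α) (f : α → MvPolynomial (Fin 4) ℚ) :
    G (∑ a ∈ s, f a) = ∑ a ∈ s, G (f a) := by
  simp only [G, map_sum, Finset.mul_sum, ← Finset.sum_add_distrib]

lemma G_mul (p q : MvPolynomial (Fin 4) ℚ) : G (p * q) = G p * q + p * G q := by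
  simp only [G, pderiv_mul]; ring

lemma G_X0 : G (X 0 : MvPolynomial (Fin 4) ℚ) = X 3 := by
  simp [G, pderiv_X]
lemma G_X1 : G (X 1 : MvPolynomial (Fin 4) ℚ) = X 2 := by
  simp [G, pderiv_X]
lemma G_X2 : G (X 2 : MvPolynomial (Fin 4) ℚ) = X 0 * X 2 + X 1 * X 3 := by
  simp [G, pderiv_X]
lemma G_X3 : G (X 3 : MvPolynomial (Fin 4) ℚ) = X 0 * X 2 + X 1 * X 3 := by
  simp [G, pderiv_X]

lemma G_pow (i : Fin 4) (m : ℕ) :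
    G ((X i : MvPolynomial (Fin 4) ℚ) ^ m) = m • (X i ^ (m-1) * G (X i)) := by
  simp only [G, pderiv_pow, nsmul_eq_mul]
  ring

lemma G_monomial (d a p q : ℕ) :
    G ((X 0:MvPolynomial (Fin 4) ℚ)^d * X 1^a * X 2^p * X 3^q) =
      d • (X 0^(d-1) * X 1^a * X 2^p * X 3^(q+1))
    + a • (X 0^d * X 1^(a-1) * X 2^(p+1) * X 3^q)
    + p • (X 0^(d+1) * X 1^a * X 2^p * X 3^q + X 0^d * X 1^(a+1) * X 2^(p-1) * X 3^(q+1))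
    + q • (X 0^(d+1) * X 1^a * X 2^(p+1) * X 3^(q-1) + X 0^d * X 1^(a+1) * X 2^p * X 3^q) := by
  rw [G_mul, G_mul, G_mul, G_pow, G_pow, G_pow, G_pow, G_X0, G_X1, G_X2, G_X3]
  rcases Nat.eq_zero_or_pos p with hp | hp
  · subst hp
    rcases Nat.eq_zero_or_pos q with hq | hq
    · subst hq
      simp only [Nat.zero_sub, smul_add, nsmul_eq_mul]
      push_cast
      ring
    · obtain ⟨q', rfl⟩ : ∃ q', q = q'+1 := ⟨q-1, by omega⟩
      simp only [Nat.zero_sub, Nat.add_sub_cancel, smul_add, nsmul_eq_mul]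
      push_cast
      ring
  · obtain ⟨p', rfl⟩ : ∃ p', p = p'+1 := ⟨p-1, by omega⟩
    rcases Nat.eq_zero_or_pos q with hq | hq
    · subst hq
      simp only [Nat.zero_sub, Nat.add_sub_cancel, smul_add, nsmul_eq_mul]
      push_cast
      ring
    · obtain ⟨q', rfl⟩ : ∃ q', q = q'+1 := ⟨q-1, by omega⟩
      simp only [Nat.add_sub_cancel, smul_add, nsmul_eq_mul]
      push_cast
      ring

end Gop

noncomputable def wmon (N : ℕ) (τ : Equiv.Perm (Fin N)) : MvPolynomial (Fin 4) ℚ :=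
  X 0 ^ dd N τ * X 1 ^ da N τ * X 2 ^ pk1 N τ * X 3 ^ pk2 N τ

section Branch
variable (ρ : Equiv.Perm (Fin n)) (j : Fin (n+1))

lemma branchA1 (hasc : wordOf n ρ (j:ℕ) < wordOf n ρ ((j:ℕ)+1))
    (hpk : wordOf n ρ ((j:ℕ)+2) < wordOf n ρ ((j:ℕ)+1))
    (ht : wordOf n ρ (j:ℕ) ≤ wordOf n ρ ((j:ℕ)+2)) :
    wmon (n+1) (ins ρ j)
      = X 0^(dd n ρ+1) * X 1^(da n ρ) * X 2^(pk1 n ρ) * X 3^(pk2 n ρ) := by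
  have Hdd := dd_ins ρ j; have Hda := da_ins ρ j
  have Hpk1 := pk1_ins ρ j; have Hpk2 := pk2_ins ρ j
  simp only [indP, Nat.add_sub_cancel, show ∀ m:ℕ, m+1+1 = m+2 from fun m => rfl] at Hdd Hda Hpk1 Hpk2
  have hdd : dd (n+1) (ins ρ j) = dd n ρ + 1 := by split_ifs at Hdd <;> omega
  have hda : da (n+1) (ins ρ j) = da n ρ := by split_ifs at Hda <;> omega
  have hpk1 : pk1 (n+1) (ins ρ j) = pk1 n ρ := by split_ifs at Hpk1 <;> omega
  have hpk2 : pk2 (n+1) (ins ρ j) = pk2 n ρ := by split_ifs at Hpk2 <;> omega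
  rw [wmon, hdd, hda, hpk1, hpk2]

lemma branchA2 (hasc : wordOf n ρ (j:ℕ) < wordOf n ρ ((j:ℕ)+1))
    (hpk : wordOf n ρ ((j:ℕ)+2) < wordOf n ρ ((j:ℕ)+1))
    (ht : wordOf n ρ ((j:ℕ)+2) < wordOf n ρ (j:ℕ)) :
    wmon (n+1) (ins ρ j)
      = X 0^(dd n ρ+1) * X 1^(da n ρ) * X 2^(pk1 n ρ+1) * X 3^(pk2 n ρ-1) := by
  have Hdd := dd_ins ρ j; have Hda := da_ins ρ j
  have Hpk1 := pk1_ins ρ j; have Hpk2 := pk2_ins ρ j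
  simp only [indP, Nat.add_sub_cancel, show ∀ m:ℕ, m+1+1 = m+2 from fun m => rfl] at Hdd Hda Hpk1 Hpk2
  have hdd : dd (n+1) (ins ρ j) = dd n ρ + 1 := by split_ifs at Hdd <;> omega
  have hda : da (n+1) (ins ρ j) = da n ρ := by split_ifs at Hda <;> omega
  have hpk1 : pk1 (n+1) (ins ρ j) = pk1 n ρ + 1 := by split_ifs at Hpk1 <;> omega
  have hpk2 : pk2 (n+1) (ins ρ j) = pk2 n ρ - 1 := by split_ifs at Hpk2 <;> omega
  rw [wmon, hdd, hda, hpk1, hpk2]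

lemma branchA3 (hasc : wordOf n ρ (j:ℕ) < wordOf n ρ ((j:ℕ)+1))
    (hda2 : wordOf n ρ ((j:ℕ)+1) < wordOf n ρ ((j:ℕ)+2)) :
    wmon (n+1) (ins ρ j)
      = X 0^(dd n ρ) * X 1^(da n ρ-1) * X 2^(pk1 n ρ+1) * X 3^(pk2 n ρ) := by
  have Hdd := dd_ins ρ j; have Hda := da_ins ρ j
  have Hpk1 := pk1_ins ρ j; have Hpk2 := pk2_ins ρ j
  simp only [indP, Nat.add_sub_cancel, show ∀ m:ℕ, m+1+1 = m+2 from fun m => rfl] at Hdd Hda Hpk1 Hpk2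
  have hdd : dd (n+1) (ins ρ j) = dd n ρ := by split_ifs at Hdd <;> omega
  have hda : da (n+1) (ins ρ j) = da n ρ - 1 := by split_ifs at Hda <;> omega
  have hpk1 : pk1 (n+1) (ins ρ j) = pk1 n ρ + 1 := by split_ifs at Hpk1 <;> omega
  have hpk2 : pk2 (n+1) (ins ρ j) = pk2 n ρ := by split_ifs at Hpk2 <;> omega
  rw [wmon, hdd, hda, hpk1, hpk2]

lemma branchB1a (hdesc : wordOf n ρ ((j:ℕ)+1) < wordOf n ρ (j:ℕ))
    (hup : wordOf n ρ ((j:ℕ)-1) < wordOf n ρ (j:ℕ))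
    (ht : wordOf n ρ ((j:ℕ)-1) ≤ wordOf n ρ ((j:ℕ)+1)) :
    wmon (n+1) (ins ρ j)
      = X 0^(dd n ρ) * X 1^(da n ρ+1) * X 2^(pk1 n ρ-1) * X 3^(pk2 n ρ+1) := by
  have Hdd := dd_ins ρ j; have Hda := da_ins ρ j
  have Hpk1 := pk1_ins ρ j; have Hpk2 := pk2_ins ρ j
  simp only [indP, Nat.add_sub_cancel, show ∀ m:ℕ, m+1+1 = m+2 from fun m => rfl] at Hdd Hda Hpk1 Hpk2
  have hdd : dd (n+1) (ins ρ j) = dd n ρ := by split_ifs at Hdd <;> omega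
  have hda : da (n+1) (ins ρ j) = da n ρ + 1 := by split_ifs at Hda <;> omega
  have hpk1 : pk1 (n+1) (ins ρ j) = pk1 n ρ - 1 := by split_ifs at Hpk1 <;> omega
  have hpk2 : pk2 (n+1) (ins ρ j) = pk2 n ρ + 1 := by split_ifs at Hpk2 <;> omega
  rw [wmon, hdd, hda, hpk1, hpk2]

lemma branchB1b (hdesc : wordOf n ρ ((j:ℕ)+1) < wordOf n ρ (j:ℕ))
    (hup : wordOf n ρ ((j:ℕ)-1) < wordOf n ρ (j:ℕ))
    (ht : wordOf n ρ ((j:ℕ)+1) < wordOf n ρ ((j:ℕ)-1)) :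
    wmon (n+1) (ins ρ j)
      = X 0^(dd n ρ) * X 1^(da n ρ+1) * X 2^(pk1 n ρ) * X 3^(pk2 n ρ) := by
  have Hdd := dd_ins ρ j; have Hda := da_ins ρ j
  have Hpk1 := pk1_ins ρ j; have Hpk2 := pk2_ins ρ j
  simp only [indP, Nat.add_sub_cancel, show ∀ m:ℕ, m+1+1 = m+2 from fun m => rfl] at Hdd Hda Hpk1 Hpk2
  have hdd : dd (n+1) (ins ρ j) = dd n ρ := by split_ifs at Hdd <;> omega
  have hda : da (n+1) (ins ρ j) = da n ρ + 1 := by split_ifs at Hda <;> omega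
  have hpk1 : pk1 (n+1) (ins ρ j) = pk1 n ρ := by split_ifs at Hpk1 <;> omega
  have hpk2 : pk2 (n+1) (ins ρ j) = pk2 n ρ := by split_ifs at Hpk2 <;> omega
  rw [wmon, hdd, hda, hpk1, hpk2]

lemma branchB2 (hdesc : wordOf n ρ ((j:ℕ)+1) < wordOf n ρ (j:ℕ))
    (hdown : wordOf n ρ (j:ℕ) < wordOf n ρ ((j:ℕ)-1)) :
    wmon (n+1) (ins ρ j)
      = X 0^(dd n ρ-1) * X 1^(da n ρ) * X 2^(pk1 n ρ) * X 3^(pk2 n ρ+1) := by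
  have Hdd := dd_ins ρ j; have Hda := da_ins ρ j
  have Hpk1 := pk1_ins ρ j; have Hpk2 := pk2_ins ρ j
  simp only [indP, Nat.add_sub_cancel, show ∀ m:ℕ, m+1+1 = m+2 from fun m => rfl] at Hdd Hda Hpk1 Hpk2
  have hdd : dd (n+1) (ins ρ j) = dd n ρ - 1 := by split_ifs at Hdd <;> omega
  have hda : da (n+1) (ins ρ j) = da n ρ := by split_ifs at Hda <;> omega
  have hpk1 : pk1 (n+1) (ins ρ j) = pk1 n ρ := by split_ifs at Hpk1 <;> omega
  have hpk2 : pk2 (n+1) (ins ρ j) = pk2 n ρ + 1 := by split_ifs at Hpk2 <;> omega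
  rw [wmon, hdd, hda, hpk1, hpk2]

end Branch

section Cards
variable (ρ : Equiv.Perm (Fin n))

lemma cardA1 : ((univ : Finset (Fin (n+1))).filter
    (fun j : Fin (n+1) => wordOf n ρ (j:ℕ) < wordOf n ρ ((j:ℕ)+1) ∧ wordOf n ρ ((j:ℕ)+2) < wordOf n ρ ((j:ℕ)+1)
       ∧ wordOf n ρ (j:ℕ) ≤ wordOf n ρ ((j:ℕ)+2))).card = pk1 n ρ := by
  rw [pk1_card]
  apply Finset.card_bij (fun (j : Fin (n+1)) _ => (j:ℕ)+1)
  · intro a ha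
    rw [Finset.mem_filter] at ha
    have h := ha.2
    have hr := pos_of_wordOf_pos ρ (by omega : 1 ≤ wordOf n ρ ((a:ℕ)+1))
    simp only [Finset.mem_filter, Finset.mem_Icc, Nat.add_sub_cancel,
      show ∀ m:ℕ, m+1+1 = m+2 from fun m => rfl]
    exact ⟨⟨by omega, by omega⟩, ⟨h.1, h.2.1⟩, h.2.2⟩
  · intro a _ b _ hab
    exact Fin.val_injective (by omega)
  · intro b hb
    simp only [Finset.mem_filter, Finset.mem_Icc] at hb
    obtain ⟨⟨hb1, hb2⟩, hP⟩ := hb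
    refine ⟨⟨b-1, by omega⟩, ?_, by simp; omega⟩
    simp only [Finset.mem_filter, Finset.mem_univ, true_and,
      show ((⟨b-1, by omega⟩ : Fin (n+1)) : ℕ) = b-1 from rfl,
      show (b-1)+1 = b from by omega, show (b-1)+2 = b+1 from by omega]
    exact ⟨hP.1.1, hP.1.2, hP.2⟩
lemma cardA2 : ((univ : Finset (Fin (n+1))).filter
    (fun j : Fin (n+1) => wordOf n ρ (j:ℕ) < wordOf n ρ ((j:ℕ)+1) ∧ wordOf n ρ ((j:ℕ)+2) < wordOf n ρ ((j:ℕ)+1)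
       ∧ wordOf n ρ ((j:ℕ)+2) < wordOf n ρ (j:ℕ))).card = pk2 n ρ := by
  rw [pk2_card]
  apply Finset.card_bij (fun (j : Fin (n+1)) _ => (j:ℕ)+1)
  · intro a ha
    rw [Finset.mem_filter] at ha
    have h := ha.2
    have hr := pos_of_wordOf_pos ρ (by omega : 1 ≤ wordOf n ρ ((a:ℕ)+1))
    simp only [Finset.mem_filter, Finset.mem_Icc, Nat.add_sub_cancel,
      show ∀ m:ℕ, m+1+1 = m+2 from fun m => rfl]
    exact ⟨⟨by omega, by omega⟩, ⟨h.1, h.2.1⟩, h.2.2⟩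
  · intro a _ b _ hab
    exact Fin.val_injective (by omega)
  · intro b hb
    simp only [Finset.mem_filter, Finset.mem_Icc] at hb
    obtain ⟨⟨hb1, hb2⟩, hP⟩ := hb
    refine ⟨⟨b-1, by omega⟩, ?_, by simp; omega⟩
    simp only [Finset.mem_filter, Finset.mem_univ, true_and,
      show ((⟨b-1, by omega⟩ : Fin (n+1)) : ℕ) = b-1 from rfl,
      show (b-1)+1 = b from by omega, show (b-1)+2 = b+1 from by omega]
    exact ⟨hP.1.1, hP.1.2, hP.2⟩

lemma cardA3 : ((univ : Finset (Fin (n+1))).filter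
    (fun j : Fin (n+1) => wordOf n ρ (j:ℕ) < wordOf n ρ ((j:ℕ)+1)
       ∧ wordOf n ρ ((j:ℕ)+1) < wordOf n ρ ((j:ℕ)+2))).card = da n ρ := by
  rw [da_card]
  apply Finset.card_bij (fun (j : Fin (n+1)) _ => (j:ℕ)+1)
  · intro a ha
    rw [Finset.mem_filter] at ha
    have h := ha.2
    have hr := pos_of_wordOf_pos ρ (by omega : 1 ≤ wordOf n ρ ((a:ℕ)+1))
    simp only [Finset.mem_filter, Finset.mem_Icc, Nat.add_sub_cancel,
      show ∀ m:ℕ, m+1+1 = m+2 from fun m => rfl]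
    exact ⟨⟨by omega, by omega⟩, h⟩
  · intro a _ b _ hab
    exact Fin.val_injective (by omega)
  · intro b hb
    simp only [Finset.mem_filter, Finset.mem_Icc] at hb
    obtain ⟨⟨hb1, hb2⟩, hP⟩ := hb
    refine ⟨⟨b-1, by omega⟩, ?_, by simp; omega⟩
    simp only [Finset.mem_filter, Finset.mem_univ, true_and,
      show ((⟨b-1, by omega⟩ : Fin (n+1)) : ℕ) = b-1 from rfl,
      show (b-1)+1 = b from by omega, show (b-1)+2 = b+1 from by omega]
    exact hP

lemma cardB1a : ((univ : Finset (Fin (n+1))).filter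
    (fun j : Fin (n+1) => wordOf n ρ ((j:ℕ)+1) < wordOf n ρ (j:ℕ) ∧ wordOf n ρ ((j:ℕ)-1) < wordOf n ρ (j:ℕ)
       ∧ wordOf n ρ ((j:ℕ)-1) ≤ wordOf n ρ ((j:ℕ)+1))).card = pk1 n ρ := by
  rw [pk1_card]
  apply Finset.card_bij (fun (j : Fin (n+1)) _ => (j:ℕ))
  · intro a ha
    rw [Finset.mem_filter] at ha
    have h := ha.2
    have hr := pos_of_wordOf_pos ρ (by omega : 1 ≤ wordOf n ρ (a:ℕ))
    simp only [Finset.mem_filter, Finset.mem_Icc]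
    exact ⟨⟨by omega, by omega⟩, ⟨h.2.1, h.1⟩, h.2.2⟩
  · intro a _ b _ hab
    exact Fin.val_injective hab
  · intro b hb
    simp only [Finset.mem_filter, Finset.mem_Icc] at hb
    obtain ⟨⟨hb1, hb2⟩, hP⟩ := hb
    refine ⟨⟨b, by omega⟩, ?_, rfl⟩
    simp only [Finset.mem_filter, Finset.mem_univ, true_and]
    exact ⟨hP.1.2, hP.1.1, hP.2⟩

lemma cardB1b : ((univ : Finset (Fin (n+1))).filter
    (fun j : Fin (n+1) => wordOf n ρ ((j:ℕ)+1) < wordOf n ρ (j:ℕ) ∧ wordOf n ρ ((j:ℕ)-1) < wordOf n ρ (j:ℕ)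
       ∧ wordOf n ρ ((j:ℕ)+1) < wordOf n ρ ((j:ℕ)-1))).card = pk2 n ρ := by
  rw [pk2_card]
  apply Finset.card_bij (fun (j : Fin (n+1)) _ => (j:ℕ))
  · intro a ha
    rw [Finset.mem_filter] at ha
    have h := ha.2
    have hr := pos_of_wordOf_pos ρ (by omega : 1 ≤ wordOf n ρ (a:ℕ))
    simp only [Finset.mem_filter, Finset.mem_Icc]
    exact ⟨⟨by omega, by omega⟩, ⟨h.2.1, h.1⟩, h.2.2⟩
  · intro a _ b _ hab
    exact Fin.val_injective hab
  · intro b hb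
    simp only [Finset.mem_filter, Finset.mem_Icc] at hb
    obtain ⟨⟨hb1, hb2⟩, hP⟩ := hb
    refine ⟨⟨b, by omega⟩, ?_, rfl⟩
    simp only [Finset.mem_filter, Finset.mem_univ, true_and]
    exact ⟨hP.1.2, hP.1.1, hP.2⟩

lemma cardB2 : ((univ : Finset (Fin (n+1))).filter
    (fun j : Fin (n+1) => wordOf n ρ ((j:ℕ)+1) < wordOf n ρ (j:ℕ)
       ∧ wordOf n ρ (j:ℕ) < wordOf n ρ ((j:ℕ)-1))).card = dd n ρ := by
  rw [dd_card]
  apply Finset.card_bij (fun (j : Fin (n+1)) _ => (j:ℕ))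
  · intro a ha
    rw [Finset.mem_filter] at ha
    have h := ha.2
    have hr := pos_of_wordOf_pos ρ (by omega : 1 ≤ wordOf n ρ (a:ℕ))
    simp only [Finset.mem_filter, Finset.mem_Icc]
    exact ⟨⟨by omega, by omega⟩, h.2, h.1⟩
  · intro a _ b _ hab
    exact Fin.val_injective hab
  · intro b hb
    simp only [Finset.mem_filter, Finset.mem_Icc] at hb
    obtain ⟨⟨hb1, hb2⟩, hP⟩ := hb
    refine ⟨⟨b, by omega⟩, ?_, rfl⟩
    simp only [Finset.mem_filter, Finset.mem_univ, true_and]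
    exact ⟨hP.2, hP.1⟩

end Cards

lemma sum_ins (hn : 1 ≤ n) (ρ : Equiv.Perm (Fin n)) :
    ∑ j : Fin (n+1), wmon (n+1) (ins ρ j) = G (wmon n ρ) := by
  have hne1 : ∀ j : Fin (n+1), wordOf n ρ (j:ℕ) ≠ wordOf n ρ ((j:ℕ)+1) := by
    intro j heq
    rcases Nat.eq_zero_or_pos (j:ℕ) with h0 | h0
    · rw [h0] at heq
      simp only [Nat.zero_add] at heq
      have h1 := wordOf_pos ρ (le_refl 1) hn
      have h2 := wordOf_zero ρ
      omega
    · exact absurd (wordOf_inj ρ heq h0 (Fin.is_le j)) (by omega)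
  have hne2 : ∀ j : Fin (n+1), wordOf n ρ (j:ℕ) < wordOf n ρ ((j:ℕ)+1) →
      wordOf n ρ ((j:ℕ)+1) ≠ wordOf n ρ ((j:ℕ)+2) := by
    intro j hasc heq
    have h1 := pos_of_wordOf_pos ρ (by omega : 1 ≤ wordOf n ρ ((j:ℕ)+1))
    have := wordOf_inj ρ heq h1.1 h1.2
    omega
  have hne3 : ∀ j : Fin (n+1), wordOf n ρ ((j:ℕ)+1) < wordOf n ρ (j:ℕ) →
      wordOf n ρ ((j:ℕ)-1) ≠ wordOf n ρ (j:ℕ) := by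
    intro j hdesc heq
    have h1 := pos_of_wordOf_pos ρ (by omega : 1 ≤ wordOf n ρ (j:ℕ))
    have := wordOf_inj ρ heq.symm h1.1 h1.2
    omega
  rw [← Finset.sum_filter_add_sum_filter_not univ
    (fun j : Fin (n+1) => wordOf n ρ (j:ℕ) < wordOf n ρ ((j:ℕ)+1))
    (fun j => wmon (n+1) (ins ρ j))]
  -- ascending side
  have eA : ∑ j ∈ univ.filter (fun j : Fin (n+1) => wordOf n ρ (j:ℕ) < wordOf n ρ ((j:ℕ)+1)),
        wmon (n+1) (ins ρ j)
      = pk1 n ρ • (X 0^(dd n ρ+1) * X 1^(da n ρ) * X 2^(pk1 n ρ) * X 3^(pk2 n ρ))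
        + pk2 n ρ • (X 0^(dd n ρ+1) * X 1^(da n ρ) * X 2^(pk1 n ρ+1) * X 3^(pk2 n ρ-1))
        + da n ρ • (X 0^(dd n ρ) * X 1^(da n ρ-1) * X 2^(pk1 n ρ+1) * X 3^(pk2 n ρ)) := by
    rw [← Finset.sum_filter_add_sum_filter_not
      (univ.filter (fun j : Fin (n+1) => wordOf n ρ (j:ℕ) < wordOf n ρ ((j:ℕ)+1)))
      (fun j : Fin (n+1) => wordOf n ρ ((j:ℕ)+2) < wordOf n ρ ((j:ℕ)+1))]
    rw [← Finset.sum_filter_add_sum_filter_not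
      ((univ.filter (fun j : Fin (n+1) => wordOf n ρ (j:ℕ) < wordOf n ρ ((j:ℕ)+1))).filter
        (fun j : Fin (n+1) => wordOf n ρ ((j:ℕ)+2) < wordOf n ρ ((j:ℕ)+1)))
      (fun j : Fin (n+1) => wordOf n ρ (j:ℕ) ≤ wordOf n ρ ((j:ℕ)+2))]
    have t1 : ∑ j ∈ (((univ.filter (fun j : Fin (n+1) => wordOf n ρ (j:ℕ) < wordOf n ρ ((j:ℕ)+1))).filter
            (fun j : Fin (n+1) => wordOf n ρ ((j:ℕ)+2) < wordOf n ρ ((j:ℕ)+1))).filter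
            (fun j : Fin (n+1) => wordOf n ρ (j:ℕ) ≤ wordOf n ρ ((j:ℕ)+2))),
          wmon (n+1) (ins ρ j)
        = pk1 n ρ • (X 0^(dd n ρ+1) * X 1^(da n ρ) * X 2^(pk1 n ρ) * X 3^(pk2 n ρ)) := by
      rw [Finset.sum_congr rfl (fun j hj => by
        simp only [Finset.mem_filter, Finset.mem_univ, true_and] at hj
        exact branchA1 ρ j hj.1.1 hj.1.2 hj.2), Finset.sum_const]
      congr 1
      rw [Finset.filter_filter, Finset.filter_filter]
      exact cardA1 ρ
    have t2 : ∑ j ∈ (((univ.filter (fun j : Fin (n+1) => wordOf n ρ (j:ℕ) < wordOf n ρ ((j:ℕ)+1))).filter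
            (fun j : Fin (n+1) => wordOf n ρ ((j:ℕ)+2) < wordOf n ρ ((j:ℕ)+1))).filter
            (fun j : Fin (n+1) => ¬ wordOf n ρ (j:ℕ) ≤ wordOf n ρ ((j:ℕ)+2))),
          wmon (n+1) (ins ρ j)
        = pk2 n ρ • (X 0^(dd n ρ+1) * X 1^(da n ρ) * X 2^(pk1 n ρ+1) * X 3^(pk2 n ρ-1)) := by
      rw [Finset.sum_congr rfl (fun j hj => by
        simp only [Finset.mem_filter, Finset.mem_univ, true_and] at hj
        exact branchA2 ρ j hj.1.1 hj.1.2 (by omega)), Finset.sum_const]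
      congr 1
      rw [Finset.filter_filter, Finset.filter_filter]
      rw [Finset.filter_congr (q := (fun j : Fin (n+1) =>
        wordOf n ρ (j:ℕ) < wordOf n ρ ((j:ℕ)+1) ∧ wordOf n ρ ((j:ℕ)+2) < wordOf n ρ ((j:ℕ)+1)
          ∧ wordOf n ρ ((j:ℕ)+2) < wordOf n ρ (j:ℕ))) (fun j _ => by
        constructor
        · rintro ⟨h1, h2, h3⟩; exact ⟨h1, h2, by omega⟩
        · rintro ⟨h1, h2, h3⟩; exact ⟨h1, h2, by omega⟩)]
      exact cardA2 ρ
    have t3 : ∑ j ∈ ((univ.filter (fun j : Fin (n+1) => wordOf n ρ (j:ℕ) < wordOf n ρ ((j:ℕ)+1))).filter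
            (fun j : Fin (n+1) => ¬ wordOf n ρ ((j:ℕ)+2) < wordOf n ρ ((j:ℕ)+1))),
          wmon (n+1) (ins ρ j)
        = da n ρ • (X 0^(dd n ρ) * X 1^(da n ρ-1) * X 2^(pk1 n ρ+1) * X 3^(pk2 n ρ)) := by
      rw [Finset.sum_congr rfl (fun j hj => by
        simp only [Finset.mem_filter, Finset.mem_univ, true_and] at hj
        have := hne2 j hj.1
        exact branchA3 ρ j hj.1 (by omega)), Finset.sum_const]
      congr 1
      rw [Finset.filter_filter]
      rw [Finset.filter_congr (q := (fun j : Fin (n+1) =>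
        wordOf n ρ (j:ℕ) < wordOf n ρ ((j:ℕ)+1) ∧ wordOf n ρ ((j:ℕ)+1) < wordOf n ρ ((j:ℕ)+2)))
        (fun j _ => by
          constructor
          · rintro ⟨h1, h2⟩; have := hne2 j h1; exact ⟨h1, by omega⟩
          · rintro ⟨h1, h2⟩; exact ⟨h1, by omega⟩)]
      exact cardA3 ρ
    rw [t1, t2, t3]
  -- descending side
  have eB : ∑ j ∈ univ.filter (fun j : Fin (n+1) => ¬ wordOf n ρ (j:ℕ) < wordOf n ρ ((j:ℕ)+1)),
        wmon (n+1) (ins ρ j)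
      = pk1 n ρ • (X 0^(dd n ρ) * X 1^(da n ρ+1) * X 2^(pk1 n ρ-1) * X 3^(pk2 n ρ+1))
        + pk2 n ρ • (X 0^(dd n ρ) * X 1^(da n ρ+1) * X 2^(pk1 n ρ) * X 3^(pk2 n ρ))
        + dd n ρ • (X 0^(dd n ρ-1) * X 1^(da n ρ) * X 2^(pk1 n ρ) * X 3^(pk2 n ρ+1)) := by
    have hconv : univ.filter (fun j : Fin (n+1) => ¬ wordOf n ρ (j:ℕ) < wordOf n ρ ((j:ℕ)+1))
        = univ.filter (fun j : Fin (n+1) => wordOf n ρ ((j:ℕ)+1) < wordOf n ρ (j:ℕ)) := by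
      apply Finset.filter_congr
      intro j _
      have := hne1 j
      constructor
      · intro h; omega
      · intro h; omega
    rw [hconv]
    rw [← Finset.sum_filter_add_sum_filter_not
      (univ.filter (fun j : Fin (n+1) => wordOf n ρ ((j:ℕ)+1) < wordOf n ρ (j:ℕ)))
      (fun j : Fin (n+1) => wordOf n ρ ((j:ℕ)-1) < wordOf n ρ (j:ℕ))]
    rw [← Finset.sum_filter_add_sum_filter_not
      ((univ.filter (fun j : Fin (n+1) => wordOf n ρ ((j:ℕ)+1) < wordOf n ρ (j:ℕ))).filter
        (fun j : Fin (n+1) => wordOf n ρ ((j:ℕ)-1) < wordOf n ρ (j:ℕ)))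
      (fun j : Fin (n+1) => wordOf n ρ ((j:ℕ)-1) ≤ wordOf n ρ ((j:ℕ)+1))]
    have t4 : ∑ j ∈ (((univ.filter (fun j : Fin (n+1) => wordOf n ρ ((j:ℕ)+1) < wordOf n ρ (j:ℕ))).filter
            (fun j : Fin (n+1) => wordOf n ρ ((j:ℕ)-1) < wordOf n ρ (j:ℕ))).filter
            (fun j : Fin (n+1) => wordOf n ρ ((j:ℕ)-1) ≤ wordOf n ρ ((j:ℕ)+1))),
          wmon (n+1) (ins ρ j)
        = pk1 n ρ • (X 0^(dd n ρ) * X 1^(da n ρ+1) * X 2^(pk1 n ρ-1) * X 3^(pk2 n ρ+1)) := by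
      rw [Finset.sum_congr rfl (fun j hj => by
        simp only [Finset.mem_filter, Finset.mem_univ, true_and] at hj
        exact branchB1a ρ j hj.1.1 hj.1.2 hj.2), Finset.sum_const]
      congr 1
      rw [Finset.filter_filter, Finset.filter_filter]
      exact cardB1a ρ
    have t5 : ∑ j ∈ (((univ.filter (fun j : Fin (n+1) => wordOf n ρ ((j:ℕ)+1) < wordOf n ρ (j:ℕ))).filter
            (fun j : Fin (n+1) => wordOf n ρ ((j:ℕ)-1) < wordOf n ρ (j:ℕ))).filter
            (fun j : Fin (n+1) => ¬ wordOf n ρ ((j:ℕ)-1) ≤ wordOf n ρ ((j:ℕ)+1))),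
          wmon (n+1) (ins ρ j)
        = pk2 n ρ • (X 0^(dd n ρ) * X 1^(da n ρ+1) * X 2^(pk1 n ρ) * X 3^(pk2 n ρ)) := by
      rw [Finset.sum_congr rfl (fun j hj => by
        simp only [Finset.mem_filter, Finset.mem_univ, true_and] at hj
        exact branchB1b ρ j hj.1.1 hj.1.2 (by omega)), Finset.sum_const]
      congr 1
      rw [Finset.filter_filter, Finset.filter_filter]
      rw [Finset.filter_congr (q := (fun j : Fin (n+1) =>
        wordOf n ρ ((j:ℕ)+1) < wordOf n ρ (j:ℕ) ∧ wordOf n ρ ((j:ℕ)-1) < wordOf n ρ (j:ℕ)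
          ∧ wordOf n ρ ((j:ℕ)+1) < wordOf n ρ ((j:ℕ)-1))) (fun j _ => by
        constructor
        · rintro ⟨h1, h2, h3⟩; exact ⟨h1, h2, by omega⟩
        · rintro ⟨h1, h2, h3⟩; exact ⟨h1, h2, by omega⟩)]
      exact cardB1b ρ
    have t6 : ∑ j ∈ ((univ.filter (fun j : Fin (n+1) => wordOf n ρ ((j:ℕ)+1) < wordOf n ρ (j:ℕ))).filter
            (fun j : Fin (n+1) => ¬ wordOf n ρ ((j:ℕ)-1) < wordOf n ρ (j:ℕ))),
          wmon (n+1) (ins ρ j)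
        = dd n ρ • (X 0^(dd n ρ-1) * X 1^(da n ρ) * X 2^(pk1 n ρ) * X 3^(pk2 n ρ+1)) := by
      rw [Finset.sum_congr rfl (fun j hj => by
        simp only [Finset.mem_filter, Finset.mem_univ, true_and] at hj
        have := hne3 j hj.1
        exact branchB2 ρ j hj.1 (by omega)), Finset.sum_const]
      congr 1
      rw [Finset.filter_filter]
      rw [Finset.filter_congr (q := (fun j : Fin (n+1) =>
        wordOf n ρ ((j:ℕ)+1) < wordOf n ρ (j:ℕ) ∧ wordOf n ρ (j:ℕ) < wordOf n ρ ((j:ℕ)-1)))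
        (fun j _ => by
          constructor
          · rintro ⟨h1, h2⟩; have := hne3 j h1; exact ⟨h1, by omega⟩
          · rintro ⟨h1, h2⟩; exact ⟨h1, by omega⟩)]
      exact cardB2 ρ
    rw [t4, t5, t6]
  rw [eA, eB, wmon, G_monomial, smul_add, smul_add]
  ring


lemma apoly_succ (hn : 1 ≤ n) : Apoly (n+1) = G (Apoly n) := by
  have hbij : Function.Bijective
      (fun p : Equiv.Perm (Fin n) × Fin (n+1) => ins p.1 p.2) := by
    rw [Fintype.bijective_iff_injective_and_card]
    refine ⟨ins_injective, ?_⟩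
    simp [Fintype.card_perm, Nat.factorial_succ, Nat.mul_comm]
  calc Apoly (n+1) = ∑ π : Equiv.Perm (Fin (n+1)), wmon (n+1) π := rfl
    _ = ∑ p : Equiv.Perm (Fin n) × Fin (n+1), wmon (n+1) (ins p.1 p.2) :=
        (Fintype.sum_bijective _ hbij _ _ (fun p => rfl)).symm
    _ = ∑ ρ : Equiv.Perm (Fin n), ∑ j : Fin (n+1), wmon (n+1) (ins ρ j) :=
        Fintype.sum_prod_type _
    _ = ∑ ρ : Equiv.Perm (Fin n), G (wmon n ρ) :=
        Finset.sum_congr rfl (fun ρ _ => sum_ins hn ρ)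
    _ = G (Apoly n) := (G_sum _ _).symm

lemma apoly_one : Apoly 1 = X 2 := by
  have h : ∀ π : Equiv.Perm (Fin 1), π = 1 := fun π => Subsingleton.elim _ _
  rw [Apoly]
  rw [Fintype.sum_eq_single (1 : Equiv.Perm (Fin 1)) (fun π h' => absurd (h π) h')]
  have h1 : dd 1 (1 : Equiv.Perm (Fin 1)) = 0 := by decide
  have h2 : da 1 (1 : Equiv.Perm (Fin 1)) = 0 := by decide
  have h3 : pk1 1 (1 : Equiv.Perm (Fin 1)) = 1 := by decide
  have h4 : pk2 1 (1 : Equiv.Perm (Fin 1)) = 0 := by decide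
  rw [h1, h2, h3, h4]
  ring

noncomputable def Bp (k : ℕ) : MvPolynomial (Fin 4) ℚ := if k = 0 then 0 else Apoly k
noncomputable def Dp (k : ℕ) : MvPolynomial (Fin 4) ℚ := if k = 0 then X 1 else Apoly k
noncomputable def Sp (m : ℕ) : MvPolynomial (Fin 4) ℚ :=
  ∑ i ∈ Finset.range (m+1), (m.choose i) • (Bp i * Bp (m - i))

lemma Bp_zero : Bp 0 = 0 := rfl
lemma Bp_succ (k : ℕ) : Bp (k+1) = Apoly (k+1) := rfl
lemma Bp_eq_Dp (k : ℕ) (hk : 1 ≤ k) : Bp k = Dp k := by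
  unfold Bp Dp; rw [if_neg (by omega), if_neg (by omega)]
lemma Bp_one : Bp 1 = X 2 := by rw [Bp_succ]; exact apoly_one

lemma G_Bp (k : ℕ) : G (Bp k) = if k = 0 then 0 else Bp (k+1) := by
  cases k with
  | zero => simp [Bp_zero, G_zero]
  | succ m => rw [Bp_succ, if_neg (by omega), Bp_succ, ← apoly_succ (by omega)]

lemma G_Dp (k : ℕ) (hk : 1 ≤ k) : G (Dp (k-1)) = Dp k := by
  match k, hk with
  | 1, _ =>
    show G (Dp 0) = Dp 1
    rw [Dp, if_pos rfl, G_X1, Dp, if_neg (by omega), apoly_one]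
  | (m+2), _ =>
    show G (Dp (m+1)) = Dp (m+2)
    rw [Dp, if_neg (by omega), Dp, if_neg (by omega), ← apoly_succ (by omega)]

lemma G_sub (p q : MvPolynomial (Fin 4) ℚ) : G (p - q) = G p - G q := by
  simp only [G, map_sub]; ring

lemma Gsum (m : ℕ) : G (Sp m) + 2 • (X 2 * Bp m) = Sp (m+1) := by
  rw [Sp, G_sum]
  rw [Finset.sum_congr rfl (fun i (_ : i ∈ Finset.range (m+1)) => by
    rw [G_nsmul, G_mul, smul_add] :
    ∀ i ∈ Finset.range (m+1), G ((m.choose i) • (Bp i * Bp (m-i)))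
      = (m.choose i) • (G (Bp i) * Bp (m-i)) + (m.choose i) • (Bp i * G (Bp (m-i))))]
  rw [Finset.sum_add_distrib]
  set T := ∑ i ∈ Finset.range (m+1), (m.choose i) • (Bp (i+1) * Bp (m - i)) with hTdef
  set T' := ∑ i ∈ Finset.range (m+1), (m.choose i) • (Bp i * Bp (m - i + 1)) with hT'def
  have claim1 : ∑ i ∈ Finset.range (m+1), (m.choose i) • (G (Bp i) * Bp (m-i)) + X 2 * Bp m
      = T := by
    rw [Finset.sum_range_succ', hTdef, Finset.sum_range_succ'
      (fun i => (m.choose i) • (Bp (i+1) * Bp (m - i))) m]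
    rw [Finset.sum_congr rfl (fun i (_ : i ∈ Finset.range m) => by
      rw [G_Bp, if_neg (by omega)] :
      ∀ i ∈ Finset.range m, (m.choose (i+1)) • (G (Bp (i+1)) * Bp (m-(i+1)))
        = (m.choose (i+1)) • (Bp (i+1+1) * Bp (m-(i+1))))]
    rw [show G (Bp 0) = 0 from by rw [Bp_zero]; exact G_zero]
    simp only [Nat.choose_zero_right, one_smul, Nat.sub_zero, Bp_one, mul_zero, zero_mul,
      smul_zero]
    norm_num [Bp_one]
  have claim2 : ∑ i ∈ Finset.range (m+1), (m.choose i) • (Bp i * G (Bp (m-i))) + Bp m * X 2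
      = T' := by
    rw [Finset.sum_range_succ, hT'def, Finset.sum_range_succ
      (fun i => (m.choose i) • (Bp i * Bp (m - i + 1))) m]
    rw [Finset.sum_congr rfl (fun i (hi : i ∈ Finset.range m) => by
      rw [Finset.mem_range] at hi
      rw [G_Bp, if_neg (by omega)] :
      ∀ i ∈ Finset.range m, (m.choose i) • (Bp i * G (Bp (m-i)))
        = (m.choose i) • (Bp i * Bp (m-i+1)))]
    rw [Nat.sub_self, show G (Bp 0) = 0 from by rw [Bp_zero]; exact G_zero]
    simp only [mul_zero, smul_zero, Nat.choose_self, one_smul, add_zero]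
    norm_num [Bp_one]
  have claim3 : T' = T := by
    rw [hT'def, ← Finset.sum_range_reflect (fun i => (m.choose i) • (Bp i * Bp (m - i + 1))) (m+1)]
    apply Finset.sum_congr rfl
    intro i hi
    rw [Finset.mem_range] at hi
    have h1 : m + 1 - 1 - i = m - i := by omega
    rw [h1]
    rw [Nat.choose_symm (by omega : i ≤ m)]
    rw [show m - (m - i) + 1 = i + 1 from by omega]
    rw [mul_comm]
  have hS : Sp (m+1) = T + T' := by
    rw [Sp, Finset.sum_range_succ']
    rw [Finset.sum_congr rfl (fun i (_ : i ∈ Finset.range (m+1)) => by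
      rw [Nat.succ_sub_succ_eq_sub, Nat.choose_succ_succ, add_smul] :
      ∀ i ∈ Finset.range (m+1), ((m+1).choose (i+1)) • (Bp (i+1) * Bp (m+1-(i+1)))
        = (m.choose i) • (Bp (i+1) * Bp (m-i)) + (m.choose (i+1)) • (Bp (i+1) * Bp (m-i)))]
    rw [Finset.sum_add_distrib]
    simp only [Bp_zero, mul_zero, zero_mul, smul_zero, add_zero]
    congr 1
    -- ∑ choose m (i+1) • (Bp (i+1) * Bp (m-i)) = T'
    rw [hT'def, Finset.sum_range_succ
      (fun i => (m.choose (i+1)) • (Bp (i+1) * Bp (m-i))) m]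
    rw [Nat.choose_succ_self, zero_smul, add_zero]
    rw [Finset.sum_range_succ'
      (fun i => (m.choose i) • (Bp i * Bp (m - i + 1))) m]
    simp only [Nat.choose_zero_right, Bp_zero, zero_mul, smul_zero, add_zero, one_smul, zero_smul]
    apply Finset.sum_congr rfl
    intro i hi
    rw [Finset.mem_range] at hi
    rw [show m - (i+1) + 1 = m - i from by omega]
  rw [two_nsmul]
  linear_combination claim1 + claim2 - hS

lemma star (m : ℕ) : Apoly (m+1)
    = Sp m + (X 0 + X 1) * Bp m + m • ((X 3 - X 2) * Dp (m-1))
      + (if m = 0 then X 2 else 0) := by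
  induction m with
  | zero =>
    rw [apoly_one]
    simp [Sp, Bp_zero]
  | succ k ih =>
    rw [apoly_succ (by omega : 1 ≤ k+1), ih]
    rw [G_add, G_add, G_add, G_mul, G_nsmul, G_mul, G_add, G_X0, G_X1, G_sub, G_X2, G_X3]
    have hgs : G (Sp k) = Sp (k+1) - 2 • (X 2 * Bp k) := by
      rw [← Gsum k]; ring
    rw [hgs]
    rcases Nat.eq_zero_or_pos k with hk | hk
    · subst hk
      rw [if_pos rfl, if_neg (by omega)]
      simp only [Bp_zero, G_zero, mul_zero, zero_smul, smul_zero, zero_add, add_zero,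
        Nat.zero_sub, zero_mul, sub_zero, mul_one]
      rw [G_X2]
      rw [Bp_one, one_nsmul, show Dp 0 = X 1 from if_pos rfl]
      ring
    · obtain ⟨k', rfl⟩ : ∃ k', k = k'+1 := ⟨k-1, by omega⟩
      rw [if_neg (by omega), if_neg (by omega), G_zero]
      rw [G_Bp, if_neg (by omega)]
      rw [G_Dp (k'+1) (by omega)]
      rw [show k'+1+1-1 = k'+1 from rfl]
      rw [succ_nsmul ((X 3 - X 2) * Dp (k'+1)) (k'+1)]
      rw [← Bp_eq_Dp (k'+1) (by omega)]
      ring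

lemma coeff_Aser (k : ℕ) :
    PowerSeries.coeff (R := MvPolynomial (Fin 4) ℚ) k Aser = ((k.factorial : ℚ))⁻¹ • Bp k := by
  rw [Aser, PowerSeries.coeff_mk]
  cases k with
  | zero => simp [Bp_zero]
  | succ m => rw [if_neg (by omega), Bp_succ]

lemma fact_ne (k : ℕ) : ((k.factorial : ℚ)) ≠ 0 :=
  Nat.cast_ne_zero.2 (Nat.factorial_ne_zero k)

lemma riccati_coeff (n : ℕ) :
    PowerSeries.coeff (R := MvPolynomial (Fin 4) ℚ) n
        (PowerSeries.derivative (MvPolynomial (Fin 4) ℚ) Aser)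
      = PowerSeries.coeff (R := MvPolynomial (Fin 4) ℚ) n
        (Aser ^ 2
          + (PowerSeries.C (R := MvPolynomial (Fin 4) ℚ) (X 3 - X 2) * PowerSeries.X
              + PowerSeries.C (R := MvPolynomial (Fin 4) ℚ) (X 0 + X 1)) * Aser
          + PowerSeries.C (R := MvPolynomial (Fin 4) ℚ) ((X 3 - X 2) * X 1) * PowerSeries.X
          + PowerSeries.C (R := MvPolynomial (Fin 4) ℚ) (X 2)) := by
  rw [PowerSeries.coeff_derivative]
  rw [show (PowerSeries.C (R := MvPolynomial (Fin 4) ℚ) (X 3 - X 2) * PowerSeries.X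
        + PowerSeries.C (R := MvPolynomial (Fin 4) ℚ) (X 0 + X 1)) * Aser
      = PowerSeries.C (R := MvPolynomial (Fin 4) ℚ) (X 3 - X 2) * (PowerSeries.X * Aser)
        + PowerSeries.C (R := MvPolynomial (Fin 4) ℚ) (X 0 + X 1) * Aser from by ring]
  rw [map_add, map_add, map_add, map_add, sq, PowerSeries.coeff_mul,
    PowerSeries.coeff_C_mul, PowerSeries.coeff_C_mul, PowerSeries.coeff_C_mul,
    PowerSeries.coeff_X, PowerSeries.coeff_C]
  cases n with
  | zero =>
    rw [PowerSeries.coeff_zero_X_mul]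
    simp only [Finset.Nat.antidiagonal_zero, Finset.sum_singleton, coeff_Aser, Bp_zero,
      smul_zero, zero_mul, mul_zero, if_pos rfl, if_neg (by omega : (0:ℕ) ≠ 1)]
    norm_num [Bp_one]
  | succ k =>
    rw [PowerSeries.coeff_succ_X_mul, Finset.Nat.sum_antidiagonal_eq_sum_range_succ_mk]
    simp only [coeff_Aser]
    have hcast : ((k + 1 : ℕ) : MvPolynomial (Fin 4) ℚ) + 1 = C ((k:ℚ) + 2) := by
      rw [show ((k:ℚ) + 2) = (((k+2 : ℕ)):ℚ) from by push_cast; ring]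
      rw [map_natCast (C : ℚ →+* MvPolynomial (Fin 4) ℚ) (k+2)]
      push_cast
      ring
    rw [hcast]
    have hsc : ((k:ℚ)+2) * (((k+1+1).factorial : ℚ))⁻¹ = (((k+1).factorial : ℚ))⁻¹ := by
      have key : (((k+1+1).factorial : ℚ)) = ((k:ℚ)+2) * ((k+1).factorial : ℚ) := by
        rw [show (k+1+1) = (k+1)+1 from rfl, Nat.factorial_succ (k+1)]
        push_cast
        ring
      rw [key, mul_inv, ← mul_assoc, mul_inv_cancel₀ (by positivity : ((k:ℚ)+2) ≠ 0), one_mul]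
    have hL : (((k+1+1).factorial : ℚ))⁻¹ • Bp (k+1+1) * C ((k:ℚ) + 2)
        = ((k+1).factorial : ℚ)⁻¹ • Bp (k+2) := by
      rw [smul_eq_C_mul, smul_eq_C_mul]
      rw [show Bp (k+1+1) = Bp (k+2) from rfl]
      rw [mul_comm _ (C ((k:ℚ)+2)), ← mul_assoc, ← map_mul, hsc]
    rw [hL]
    rw [show Bp (k+2) = Apoly (k+2) from rfl, star (k+1), if_neg (by omega)]
    rw [add_zero, smul_add, smul_add]
    have I1 : ((k+1).factorial : ℚ)⁻¹ • Sp (k+1)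
        = ∑ i ∈ Finset.range (k+1+1),
            ((i.factorial : ℚ))⁻¹ • Bp i * (((k+1-i).factorial : ℚ))⁻¹ • Bp (k+1-i) := by
      rw [Sp, Finset.smul_sum]
      apply Finset.sum_congr rfl
      intro i hi
      rw [Finset.mem_range] at hi
      rw [← Nat.cast_smul_eq_nsmul ℚ ((k+1).choose i) (Bp i * Bp (k+1-i)), smul_smul,
        smul_mul_smul_comm]
      congr 1
      rw [Nat.cast_choose ℚ (by omega : i ≤ k+1)]
      have h1 := fact_ne i
      have h2 := fact_ne (k+1-i)
      have h3 := fact_ne (k+1)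
      field_simp
    have I2 : ((k+1).factorial : ℚ)⁻¹ • ((X 0 + X 1) * Bp (k+1))
        = (X 0 + X 1) * (((k+1).factorial : ℚ))⁻¹ • Bp (k+1) := by
      rw [mul_smul_comm]
    have I3 : ((k+1).factorial : ℚ)⁻¹ • ((k+1) • ((X 3 - X 2) * Dp k))
        = (X 3 - X 2) * ((k.factorial : ℚ))⁻¹ • Bp k
          + (X 3 - X 2) * X 1 * (if k+1 = 1 then 1 else 0) := by
      rw [← Nat.cast_smul_eq_nsmul ℚ (k+1), smul_smul]
      rw [show (((k+1).factorial : ℚ))⁻¹ * ((k+1 : ℕ) : ℚ) = ((k.factorial : ℚ))⁻¹ from by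
        rw [Nat.factorial_succ]
        have h1 := fact_ne k
        field_simp
        push_cast
        ring]
      cases k with
      | zero =>
        rw [if_pos rfl, mul_one]
        simp only [Bp_zero, smul_zero, mul_zero, zero_add]
        rw [show Dp 0 = X 1 from if_pos rfl]
        norm_num
      | succ j =>
        rw [if_neg (by omega), mul_zero, add_zero, ← Bp_eq_Dp (j+1) (by omega), mul_smul_comm]
    rw [show k+1-1 = k from rfl, I1, I2, I3]
    simp only [Nat.succ_eq_add_one]
    ring

theorem Aser_riccati' :
    PowerSeries.derivative (MvPolynomial (Fin 4) ℚ) Aser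
      = Aser ^ 2
        + (PowerSeries.C (R := MvPolynomial (Fin 4) ℚ) (MvPolynomial.X 3 - MvPolynomial.X 2) *
              PowerSeries.X
            + PowerSeries.C (R := MvPolynomial (Fin 4) ℚ) (MvPolynomial.X 0 + MvPolynomial.X 1)) *
          Aser
        + PowerSeries.C (R := MvPolynomial (Fin 4) ℚ)
            ((MvPolynomial.X 3 - MvPolynomial.X 2) * MvPolynomial.X 1) * PowerSeries.X
        + PowerSeries.C (R := MvPolynomial (Fin 4) ℚ) (MvPolynomial.X 2) :=
  PowerSeries.ext riccati_coeff

end Riccati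

/-- **Theorem (Riccati equation for `A(t)`).**
`A' = A² + ((z₂ - z₁)t + x + y)·A + (z₂ - z₁)·y·t + z₁`. -/
theorem Aser_riccati :
    PowerSeries.derivative (MvPolynomial (Fin 4) ℚ) Aser
      = Aser ^ 2
        + (PowerSeries.C (R := MvPolynomial (Fin 4) ℚ) (MvPolynomial.X 3 - MvPolynomial.X 2) *
              PowerSeries.X
            + PowerSeries.C (R := MvPolynomial (Fin 4) ℚ) (MvPolynomial.X 0 + MvPolynomial.X 1)) *
          Aser
        + PowerSeries.C (R := MvPolynomial (Fin 4) ℚ)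
            ((MvPolynomial.X 3 - MvPolynomial.X 2) * MvPolynomial.X 1) * PowerSeries.X
        + PowerSeries.C (R := MvPolynomial (Fin 4) ℚ) (MvPolynomial.X 2) :=
  Riccati.Aser_riccati'
end
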